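/- arXiv:1108.0183 — 4 statements merged into one kernel-verified Lean document; each statement's English description precedes it below -/
import Mathlib

section
/- (Coffman's discrete Hartman–Wintner theorem.) Let Λ be a d×d complex diagonal invertible matrix with diagonal entries λ_1, …, λ_d, and let {A_n}_{n≥1} be d×d complex matrices such that Σ_{n=1}^∞ ‖A_n‖² < ∞ and Λ + A_n is invertible for every n. Fix an index j such that |λ_k| ≠ |λ_j| for all k ≠ j. Choose n_0 ≥ 1 so large that λ_j + (A_k)_{j,j} ≠ 0 for all k ≥ n_0 (possible since (A_n)_{j,j} → 0), and set γ_j(n) = Π_{k=n_0}^{n−1} (λ_j + (A_k)_{j,j}) for n > n_0. Then there exists an initial vector y_1 ∈ ℂ^d such that the solution of the recursion y_{n+1} = (Λ + A_n) y_n satisfies y_{n,j}/γ_j(n) → 1 as n → ∞ and y_{n,k}/γ_j(n) → 0 as n → ∞ for every k ≠ j. -/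
open Filter Topology

set_option maxHeartbeats 2000000

private lemma hw_distpow_le {θ : ℝ} (h0 : 0 < θ) (h1 : θ < 1) (n m : ℕ) :
    θ ^ Nat.dist n m ≤ (θ ^ n)⁻¹ * θ ^ m := by
  rw [le_inv_mul_iff₀ (by positivity)]
  rcases le_or_gt n m with h | h
  · rw [Nat.dist_eq_sub_of_le h, ← pow_add]
    exact le_of_eq (by rw [Nat.add_sub_cancel' h])
  · rw [Nat.dist_eq_sub_of_le_right h.le, ← pow_add]
    exact pow_le_pow_of_le_one h0.le h1.le (by omega)

private lemma hw_summable_distpow {θ : ℝ} (h0 : 0 < θ) (h1 : θ < 1) (n : ℕ) :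
    Summable fun m : ℕ => θ ^ Nat.dist n m :=
  Summable.of_nonneg_of_le (fun m => by positivity) (hw_distpow_le h0 h1 n)
    ((summable_geometric_of_lt_one h0.le h1).mul_left _)

private lemma hw_tsum_distpow_le {θ : ℝ} (h0 : 0 < θ) (h1 : θ < 1) (n : ℕ) :
    (∑' m : ℕ, θ ^ Nat.dist n m) ≤ 2 / (1 - θ) := by
  have hsum := hw_summable_distpow h0 h1 n
  have hgeo : Summable fun m : ℕ => θ ^ m := summable_geometric_of_lt_one h0.le h1
  have hsplit := Summable.sum_add_tsum_nat_add (f := fun m => θ ^ Nat.dist n m) n hsum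
  rw [← hsplit]
  have h2 : (∑' i : ℕ, θ ^ Nat.dist n (i + n)) = ∑' i : ℕ, θ ^ i := by
    congr 1; funext i; rw [Nat.dist_eq_sub_of_le (Nat.le_add_left n i), Nat.add_sub_cancel]
  have htg : (∑' i : ℕ, θ ^ i) = (1 - θ)⁻¹ := tsum_geometric_of_lt_one h0.le h1
  have hfin : (∑ i ∈ Finset.range n, θ ^ Nat.dist n i) ≤ (1 - θ)⁻¹ := by
    have hre := Finset.sum_range_reflect (fun i => θ ^ Nat.dist n i) n
    rw [← hre]
    have : ∀ i ∈ Finset.range n, θ ^ Nat.dist n (n - 1 - i) ≤ θ ^ i := by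
      intro i hi
      rw [Finset.mem_range] at hi
      rw [Nat.dist_eq_sub_of_le_right (by omega)]
      exact pow_le_pow_of_le_one h0.le h1.le (by omega)
    calc (∑ i ∈ Finset.range n, θ ^ Nat.dist n (n - 1 - i))
        ≤ ∑ i ∈ Finset.range n, θ ^ i := Finset.sum_le_sum this
      _ ≤ ∑' i : ℕ, θ ^ i := Summable.sum_le_tsum _ (fun i _ => by positivity) hgeo
      _ = (1 - θ)⁻¹ := htg
  rw [h2, htg]
  have : (0:ℝ) < 1 - θ := by linarith
  rw [div_eq_mul_inv]
  linarith

private lemma hw_summable_distpow_mul {θ : ℝ} (h0 : 0 < θ) (h1 : θ < 1) {β : ℕ → ℝ}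
    (hβ0 : ∀ m, 0 ≤ β m) (hβ2 : Summable fun m => β m ^ 2) (n : ℕ) :
    Summable fun m : ℕ => θ ^ Nat.dist n m * β m := by
  apply Summable.of_nonneg_of_le (fun m => mul_nonneg (by positivity) (hβ0 m))
    (g := fun m => θ ^ Nat.dist n m * β m)
    (f := fun m => θ ^ Nat.dist n m + β m ^ 2)
  · intro m
    have h : θ ^ Nat.dist n m ≤ 1 := pow_le_one₀ h0.le h1.le
    have h' : (0:ℝ) ≤ θ ^ Nat.dist n m := by positivity
    rcases le_or_gt (β m) 1 with hb | hb
    · nlinarith [hβ0 m]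
    · nlinarith [hβ0 m]
  · exact (hw_summable_distpow h0 h1 n).add hβ2

private lemma hw_summable_prod {θ : ℝ} (h0 : 0 < θ) (h1 : θ < 1) {β : ℕ → ℝ}
    (hβ0 : ∀ m, 0 ≤ β m) (hβ2 : Summable fun m => β m ^ 2) :
    Summable fun p : ℕ × ℕ => θ ^ Nat.dist p.1 p.2 * (β p.1 * β p.2) := by
  have hnn1 : ∀ p : ℕ × ℕ, 0 ≤ θ ^ Nat.dist p.1 p.2 * β p.1 ^ 2 := fun p => by positivity
  have h2 : ∀ m : ℕ, Summable fun l => θ ^ Nat.dist m l * β m ^ 2 :=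
    fun m => (hw_summable_distpow h0 h1 m).mul_right _
  have h3 : Summable fun m : ℕ => ∑' l, θ ^ Nat.dist m l * β m ^ 2 := by
    apply Summable.of_nonneg_of_le (fun m => tsum_nonneg fun l => by positivity)
      (f := fun m => (2 / (1 - θ)) * β m ^ 2)
    · intro m
      rw [tsum_mul_right]
      exact mul_le_mul_of_nonneg_right (hw_tsum_distpow_le h0 h1 m) (by positivity)
    · exact hβ2.mul_left _
  have hsq : Summable fun p : ℕ × ℕ => θ ^ Nat.dist p.1 p.2 * β p.1 ^ 2 :=
    (summable_prod_of_nonneg hnn1).mpr ⟨h2, h3⟩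
  have hsq2 : Summable fun p : ℕ × ℕ => θ ^ Nat.dist p.1 p.2 * β p.2 ^ 2 := by
    have h := hsq.prod_symm
    apply h.congr
    intro p
    simp only [Prod.fst_swap, Prod.snd_swap, Nat.dist_comm p.2 p.1]
  apply Summable.of_nonneg_of_le
    (fun p => mul_nonneg (by positivity) (mul_nonneg (hβ0 _) (hβ0 _)))
    (f := fun p : ℕ × ℕ => θ ^ Nat.dist p.1 p.2 * β p.1 ^ 2 + θ ^ Nat.dist p.1 p.2 * β p.2 ^ 2)
  · intro p
    have h' : (0:ℝ) ≤ θ ^ Nat.dist p.1 p.2 := by positivity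
    nlinarith [hβ0 p.1, hβ0 p.2, sq_nonneg (β p.1 - β p.2)]
  · exact hsq.add hsq2

private lemma hw_summable_beta_w {θ : ℝ} (h0 : 0 < θ) (h1 : θ < 1) {β : ℕ → ℝ}
    (hβ0 : ∀ m, 0 ≤ β m) (hβ2 : Summable fun m => β m ^ 2) :
    Summable fun m : ℕ => β m * ∑' l, θ ^ Nat.dist m l * β l := by
  have hp := hw_summable_prod h0 h1 hβ0 hβ2
  have h := ((summable_prod_of_nonneg
    (f := fun p : ℕ × ℕ => θ ^ Nat.dist p.1 p.2 * (β p.1 * β p.2))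
    (fun p => mul_nonneg (by positivity) (mul_nonneg (hβ0 _) (hβ0 _)))).mp hp).2
  apply h.congr
  intro m
  rw [← tsum_mul_left]
  congr 1; funext l; ring

private lemma hw_shift_le {θ : ℝ} (h0 : 0 < θ) (h1 : θ < 1) {β : ℕ → ℝ}
    (hβ0 : ∀ m, 0 ≤ β m) (hβ2 : Summable fun m => β m ^ 2) (n : ℕ) :
    (∑' i : ℕ, θ ^ i * β (i + n)) ≤ ∑' m : ℕ, θ ^ Nat.dist n m * β m := by
  apply Summable.tsum_le_tsum_of_inj (fun i => i + n) (add_left_injective n)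
  · intro c _
    exact mul_nonneg (by positivity) (hβ0 c)
  · intro i
    apply le_of_eq
    rw [Nat.dist_eq_sub_of_le (Nat.le_add_left n i), Nat.add_sub_cancel]
  · apply Summable.of_nonneg_of_le (fun i => mul_nonneg (by positivity) (hβ0 _))
      (f := fun i => θ ^ Nat.dist n (i + n) * β (i + n))
    · intro i
      apply le_of_eq
      rw [Nat.dist_eq_sub_of_le (Nat.le_add_left n i), Nat.add_sub_cancel]
    · exact (summable_nat_add_iff n).mpr (hw_summable_distpow_mul h0 h1 hβ0 hβ2 n)
      |>.congr (fun i => by rw [Nat.dist_eq_sub_of_le (Nat.le_add_left n i), Nat.add_sub_cancel])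
  · exact hw_summable_distpow_mul h0 h1 hβ0 hβ2 n

private lemma hw_w_tendsto_zero {θ : ℝ} (h0 : 0 < θ) (h1 : θ < 1) {β : ℕ → ℝ}
    (hβ0 : ∀ m, 0 ≤ β m) (hβ2 : Summable fun m => β m ^ 2)
    (hβlim : Tendsto β atTop (𝓝 0)) :
    Tendsto (fun n => ∑' m : ℕ, θ ^ Nat.dist n m * β m) atTop (𝓝 0) := by
  have hK : (0:ℝ) < 2 / (1 - θ) := by
    apply div_pos (by norm_num); linarith
  rw [Metric.tendsto_atTop]
  intro ε hε
  set K := 2 / (1 - θ) with hKdef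
  have hεK : 0 < ε / (2 * K) := by positivity
  obtain ⟨M, hM⟩ := (Metric.tendsto_atTop.mp hβlim) (ε / (2 * K)) hεK
  have hMbound : ∀ m, M ≤ m → β m ≤ ε / (2 * K) := by
    intro m hm
    have := hM m hm
    rw [Real.dist_eq, sub_zero] at this
    exact le_of_lt (lt_of_abs_lt this)
  set Cβ : ℝ := ∑ m ∈ Finset.range M, β m with hCβ
  have hCβ0 : 0 ≤ Cβ := Finset.sum_nonneg fun m _ => hβ0 m
  -- θ^(n-M) * Cβ → 0
  have htail : Tendsto (fun n : ℕ => θ ^ (n - M) * Cβ) atTop (𝓝 0) := by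
    have h := (tendsto_pow_atTop_nhds_zero_of_lt_one h0.le h1).comp
      (tendsto_sub_atTop_nat M)
    simpa using h.mul_const Cβ
  obtain ⟨N1, hN1⟩ := (Metric.tendsto_atTop.mp htail) (ε / 2) (by positivity)
  refine ⟨max N1 M, fun n hn => ?_⟩
  have hnN1 : N1 ≤ n := le_trans (le_max_left _ _) hn
  have hnM : M ≤ n := le_trans (le_max_right _ _) hn
  have hsum := hw_summable_distpow_mul h0 h1 hβ0 hβ2 n
  have hsplit := Summable.sum_add_tsum_nat_add (f := fun m => θ ^ Nat.dist n m * β m) M hsum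
  rw [Real.dist_eq, sub_zero, abs_of_nonneg (tsum_nonneg fun m => mul_nonneg (by positivity) (hβ0 m))]
  rw [← hsplit]
  have hpart1 : (∑ m ∈ Finset.range M, θ ^ Nat.dist n m * β m) ≤ θ ^ (n - M) * Cβ := by
    rw [hCβ, Finset.mul_sum]
    apply Finset.sum_le_sum
    intro m hm
    rw [Finset.mem_range] at hm
    apply mul_le_mul_of_nonneg_right _ (hβ0 m)
    rw [Nat.dist_eq_sub_of_le_right (by omega)]
    exact pow_le_pow_of_le_one h0.le h1.le (by omega)
  have hpart2 : (∑' i : ℕ, θ ^ Nat.dist n (i + M) * β (i + M)) ≤ ε / 2 := by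
    have hsum2 : Summable fun i : ℕ => θ ^ Nat.dist n (i + M) * β (i + M) :=
      (summable_nat_add_iff M).mpr hsum
    have hsum3 : Summable fun i : ℕ => θ ^ Nat.dist n (i + M) * (ε / (2 * K)) :=
      Summable.mul_right _ ((summable_nat_add_iff M).mpr (hw_summable_distpow h0 h1 n))
    calc (∑' i : ℕ, θ ^ Nat.dist n (i + M) * β (i + M))
        ≤ ∑' i : ℕ, θ ^ Nat.dist n (i + M) * (ε / (2 * K)) := by
          apply Summable.tsum_le_tsum _ hsum2 hsum3
          intro i
          exact mul_le_mul_of_nonneg_left (hMbound _ (Nat.le_add_left M i)) (by positivity)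
      _ = (∑' i : ℕ, θ ^ Nat.dist n (i + M)) * (ε / (2 * K)) := tsum_mul_right
      _ ≤ K * (ε / (2 * K)) := by
          apply mul_le_mul_of_nonneg_right _ (le_of_lt hεK)
          calc (∑' i : ℕ, θ ^ Nat.dist n (i + M))
              ≤ ∑' m : ℕ, θ ^ Nat.dist n m := by
                apply Summable.tsum_le_tsum_of_inj (fun i => i + M) (add_left_injective M)
                · intro c _; positivity
                · intro i; exact le_refl _
                · exact (summable_nat_add_iff M).mpr (hw_summable_distpow h0 h1 n)
                · exact hw_summable_distpow h0 h1 n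
            _ ≤ K := hw_tsum_distpow_le h0 h1 n
      _ = ε / 2 := by field_simp
  have h1' := hN1 n hnN1
  rw [Real.dist_eq, sub_zero] at h1'
  have : θ ^ (n - M) * Cβ < ε / 2 := lt_of_abs_lt h1'
  linarith

/-- **Coffman's discrete Hartman–Wintner theorem.** Let `Λ = diag(λ_1, …, λ_d)` be an
invertible diagonal matrix and `{A_n}` matrices with `Σ ‖A_n‖² < ∞` (stated here with the
entrywise square sum, equivalent to any fixed matrix norm) such that `Λ + A_n` is
invertible for all `n`. Fix `j` with `|λ_k| ≠ |λ_j|` for `k ≠ j`, and let `n₀ ≥ 1` be such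
that `λ_j + (A_k)_{j,j} ≠ 0` for `k ≥ n₀`; put `γ_j(n) = Π_{k=n₀}^{n-1} (λ_j + (A_k)_{j,j})`.
Then some solution of `y_{n+1} = (Λ + A_n) y_n` satisfies `y_{n,j}/γ_j(n) → 1` and
`y_{n,k}/γ_j(n) → 0` for `k ≠ j`. -/
theorem coffman_discrete_hartman_wintner {d : ℕ}
    (l : Fin d → ℂ) (hl : IsUnit (Matrix.diagonal l))
    (A : ℕ → Matrix (Fin d) (Fin d) ℂ)
    (hA2 : Summable fun n : ℕ => ∑ i : Fin d, ∑ j : Fin d, ‖A n i j‖ ^ 2)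
    (hinv : ∀ n, 1 ≤ n → IsUnit (Matrix.diagonal l + A n))
    (j : Fin d) (hsep : ∀ k : Fin d, k ≠ j → ‖l k‖ ≠ ‖l j‖)
    (n₀ : ℕ) (hn₀ : 1 ≤ n₀) (hγ : ∀ k, n₀ ≤ k → l j + A k j j ≠ 0) :
    ∃ y : ℕ → Fin d → ℂ,
      (∀ n, 1 ≤ n → y (n + 1) = (Matrix.diagonal l + A n).mulVec (y n)) ∧
      Tendsto (fun n => y n j / ∏ k ∈ Finset.Ico n₀ n, (l j + A k j j)) atTop (𝓝 1) ∧
      (∀ k : Fin d, k ≠ j →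
        Tendsto (fun n => y n k / ∏ k' ∈ Finset.Ico n₀ n, (l j + A k' j j)) atTop (𝓝 0)) := by
  classical
  -- nonzero diagonal entries
  have hlk : ∀ k, l k ≠ 0 := by
    intro k
    have hdet := (Matrix.isUnit_iff_isUnit_det _).mp hl
    rw [Matrix.det_diagonal, isUnit_iff_ne_zero] at hdet
    exact Finset.prod_ne_zero_iff.mp hdet k (Finset.mem_univ k)
  have hlj : (0:ℝ) < ‖l j‖ := norm_pos_iff.mpr (hlk j)
  set c : ℕ → ℂ := fun n => l j + A n j j with hc_def
  -- β
  set β : ℕ → ℝ := fun m => Real.sqrt (∑ i : Fin d, ∑ k : Fin d, ‖A m i k‖ ^ 2) + (1/2)^m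
    with hβ_def
  have hβpos : ∀ m, 0 < β m := by
    intro m
    show 0 < Real.sqrt (∑ i : Fin d, ∑ k : Fin d, ‖A m i k‖ ^ 2) + (1/2)^m
    have h1 : (0:ℝ) ≤ Real.sqrt (∑ i : Fin d, ∑ k : Fin d, ‖A m i k‖ ^ 2) :=
      Real.sqrt_nonneg _
    have h2 : (0:ℝ) < (1/2:ℝ)^m := by positivity
    linarith
  have hβ0 : ∀ m, 0 ≤ β m := fun m => (hβpos m).le
  have hentry : ∀ m i k, ‖A m i k‖ ≤ β m := by
    intro m i k
    have h1 : ‖A m i k‖ ^ 2 ≤ ∑ i' : Fin d, ∑ k' : Fin d, ‖A m i' k'‖ ^ 2 := by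
      calc ‖A m i k‖ ^ 2 ≤ ∑ k' : Fin d, ‖A m i k'‖ ^ 2 :=
            Finset.single_le_sum (f := fun k' => ‖A m i k'‖ ^ 2)
              (fun _ _ => sq_nonneg _) (Finset.mem_univ k)
        _ ≤ ∑ i' : Fin d, ∑ k' : Fin d, ‖A m i' k'‖ ^ 2 :=
            Finset.single_le_sum (f := fun i' => ∑ k' : Fin d, ‖A m i' k'‖ ^ 2)
              (fun i' _ => Finset.sum_nonneg fun _ _ => sq_nonneg _) (Finset.mem_univ i)
    have h2 : ‖A m i k‖ ≤ Real.sqrt (∑ i' : Fin d, ∑ k' : Fin d, ‖A m i' k'‖ ^ 2) :=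
      (Real.le_sqrt (norm_nonneg _) (Finset.sum_nonneg fun _ _ =>
        Finset.sum_nonneg fun _ _ => sq_nonneg _)).mpr h1
    have h3 : (0:ℝ) ≤ (1/2:ℝ)^m := by positivity
    show ‖A m i k‖ ≤ Real.sqrt (∑ i : Fin d, ∑ k : Fin d, ‖A m i k‖ ^ 2) + (1/2)^m
    linarith
  have hβ2 : Summable fun m => β m ^ 2 := by
    apply Summable.of_nonneg_of_le (fun m => sq_nonneg _)
      (f := fun m => 2 * (∑ i : Fin d, ∑ k : Fin d, ‖A m i k‖ ^ 2) + 2 * (1/4:ℝ)^m)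
    · intro m
      have hS0 : (0:ℝ) ≤ ∑ i : Fin d, ∑ k : Fin d, ‖A m i k‖ ^ 2 :=
        Finset.sum_nonneg fun _ _ => Finset.sum_nonneg fun _ _ => sq_nonneg _
      have hsq := Real.sq_sqrt hS0
      have hq : ((1/2:ℝ)^m)^2 = (1/4:ℝ)^m := by
        rw [← pow_mul, pow_mul']
        norm_num
      show (Real.sqrt _ + (1/2)^m) ^ 2 ≤ _
      nlinarith [hsq, hq, sq_nonneg (Real.sqrt (∑ i : Fin d, ∑ k : Fin d, ‖A m i k‖ ^ 2)
        - (1/2:ℝ)^m)]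
    · exact (hA2.mul_left 2).add ((summable_geometric_of_lt_one (by norm_num)
        (by norm_num : (1/4:ℝ) < 1)).mul_left 2)
  have hβlim : Tendsto β atTop (𝓝 0) := by
    have hS : Tendsto (fun m => ∑ i : Fin d, ∑ k : Fin d, ‖A m i k‖ ^ 2) atTop (𝓝 0) :=
      hA2.tendsto_atTop_zero
    have h1 : Tendsto (fun m => Real.sqrt (∑ i : Fin d, ∑ k : Fin d, ‖A m i k‖ ^ 2))
        atTop (𝓝 0) := by
      have h := (Real.continuous_sqrt.tendsto 0).comp hS
      rw [Real.sqrt_zero] at h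
      exact h
    have h2 : Tendsto (fun m : ℕ => (1/2:ℝ)^m) atTop (𝓝 0) :=
      tendsto_pow_atTop_nhds_zero_of_lt_one (by norm_num) (by norm_num)
    have h3 := h1.add h2
    rw [add_zero] at h3
    exact h3
  set Bβ : ℝ := Real.sqrt (∑' m, β m ^ 2) with hBβ_def
  have hβB : ∀ m, β m ≤ Bβ := by
    intro m
    rw [hBβ_def, ← Real.sqrt_sq (hβ0 m)]
    exact Real.sqrt_le_sqrt (Summable.le_tsum hβ2 m fun _ _ => sq_nonneg _)
  -- θ
  have hne : (Finset.univ : Finset (Fin d)).Nonempty := ⟨j, Finset.mem_univ j⟩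
  set Fs : ℝ := Finset.univ.sup' hne
    (fun k => if k = j then 0 else min (‖l k‖/‖l j‖) (‖l k‖/‖l j‖)⁻¹) with hFs_def
  have hFs0 : 0 ≤ Fs := by
    have h := Finset.le_sup' (f := fun k => if k = j then (0:ℝ) else
      min (‖l k‖/‖l j‖) (‖l k‖/‖l j‖)⁻¹) (Finset.mem_univ j)
    rw [if_pos rfl] at h
    exact h
  have hFs1 : Fs < 1 := by
    rw [hFs_def, Finset.sup'_lt_iff]
    intro k _
    by_cases hk : k = j
    · simp [hk]
    · simp only [hk, if_false]
      have hr0 : 0 < ‖l k‖/‖l j‖ := div_pos (norm_pos_iff.mpr (hlk k)) hlj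
      have hr1 : ‖l k‖/‖l j‖ ≠ 1 := by
        intro h
        exact hsep k hk ((div_eq_one_iff_eq (by positivity)).mp h)
      rcases lt_or_gt_of_ne hr1 with h | h
      · exact lt_of_le_of_lt (min_le_left _ _) h
      · exact lt_of_le_of_lt (min_le_right _ _) (inv_lt_one_of_one_lt₀ h)
  set θ : ℝ := (1 + Fs)/2 with hθ_def
  have hθ0 : 0 < θ := by rw [hθ_def]; linarith
  have hθ1 : θ < 1 := by rw [hθ_def]; linarith
  have hFsθ : Fs < θ := by rw [hθ_def]; linarith
  -- w and t
  set w : ℕ → ℝ := fun n => ∑' m, θ ^ Nat.dist n m * β m with hw_def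
  have hw_pos : ∀ n, 0 < w n := by
    intro n
    have hle : θ ^ Nat.dist n n * β n ≤ w n :=
      Summable.le_tsum (hw_summable_distpow_mul hθ0 hθ1 hβ0 hβ2 n) n
        (fun m _ => mul_nonneg (by positivity) (hβ0 m))
    rw [Nat.dist_self, pow_zero, one_mul] at hle
    exact lt_of_lt_of_le (hβpos n) hle
  have hw_lim : Tendsto w atTop (𝓝 0) := hw_w_tendsto_zero hθ0 hθ1 hβ0 hβ2 hβlim
  have hbw_sum : Summable fun m => β m * w m := hw_summable_beta_w hθ0 hθ1 hβ0 hβ2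
  set t : ℕ → ℝ := fun n => ∑' i, β (i+n) * w (i+n) with ht_def
  have ht_lim : Tendsto t atTop (𝓝 0) := tendsto_sum_nat_add fun m => β m * w m
  have hw0 : ∀ n, 0 ≤ w n := fun n => (hw_pos n).le
  have ht0 : ∀ n, 0 ≤ t n :=
    fun n => tsum_nonneg fun i => mul_nonneg (hβ0 _) (hw0 _)
  have ht_mono : ∀ n m, n ≤ m → t m ≤ t n := by
    intro n m hnm
    apply Summable.tsum_le_tsum_of_inj (fun i => i + (m - n)) (add_left_injective _)
    · intro i _
      exact mul_nonneg (hβ0 _) (hw0 _)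
    · intro i
      have h : i + (m - n) + n = i + m := by omega
      exact le_of_eq (by rw [h])
    · exact (summable_nat_add_iff m).mpr hbw_sum
    · exact (summable_nat_add_iff n).mpr hbw_sum
  -- constants
  set C₀ : ℝ := 2 / ‖l j‖ with hC₀_def
  have hC₀ : 0 < C₀ := by rw [hC₀_def]; positivity
  set Cw : ℝ := 2 * C₀ / θ with hCw_def
  have hCw : 0 < Cw := by rw [hCw_def]; positivity
  set ε₁ : ℝ := (1/2) / ((d:ℝ) * Cw + 1) with hε₁_def
  have hε₁pos : 0 < ε₁ := by rw [hε₁_def]; positivity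
  have hε₁small : (d:ℝ) * Cw * ε₁ ≤ 1/2 := by
    have hX : (0:ℝ) < (d:ℝ) * Cw + 1 := by positivity
    have hdiv : (d:ℝ) * Cw / ((d:ℝ) * Cw + 1) ≤ 1 :=
      div_le_one_of_le₀ (by linarith) hX.le
    calc (d:ℝ) * Cw * ε₁ = ((d:ℝ) * Cw / ((d:ℝ) * Cw + 1)) * (1/2) := by
          rw [hε₁_def]; ring
      _ ≤ 1 * (1/2) := mul_le_mul_of_nonneg_right hdiv (by norm_num)
      _ = 1/2 := by norm_num
  set ε₂ : ℝ := (1/2) / (C₀ * (d:ℝ) * Cw + 1) with hε₂_def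
  have hε₂pos : 0 < ε₂ := by rw [hε₂_def]; positivity
  have hε₂small : C₀ * (d:ℝ) * Cw * ε₂ ≤ 1/2 := by
    have hX : (0:ℝ) < C₀ * (d:ℝ) * Cw + 1 := by positivity
    have hdiv : C₀ * (d:ℝ) * Cw / (C₀ * (d:ℝ) * Cw + 1) ≤ 1 :=
      div_le_one_of_le₀ (by linarith) hX.le
    calc C₀ * (d:ℝ) * Cw * ε₂ = (C₀ * (d:ℝ) * Cw / (C₀ * (d:ℝ) * Cw + 1)) * (1/2) := by
          rw [hε₂_def]; ring
      _ ≤ 1 * (1/2) := mul_le_mul_of_nonneg_right hdiv (by norm_num)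
      _ = 1/2 := by norm_num
  -- c → l j
  have hAjj : Tendsto (fun n => A n j j) atTop (𝓝 0) := by
    rw [tendsto_zero_iff_norm_tendsto_zero]
    exact squeeze_zero (fun n => norm_nonneg _) (fun n => hentry n j j) hβlim
  have hnclim : Tendsto (fun n => ‖c n‖) atTop (𝓝 ‖l j‖) := by
    have hclim : Tendsto c atTop (𝓝 (l j)) := by
      have := (tendsto_const_nhds (x := l j) (f := atTop)).add hAjj
      simpa using this
    exact hclim.norm
  -- eventual conditions
  have hev1 : ∀ᶠ n in atTop, ‖l j‖/2 ≤ ‖c n‖ :=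
    (hnclim.eventually (lt_mem_nhds (show ‖l j‖/2 < ‖l j‖ by linarith))).mono
      fun n hn => hn.le
  have hev2 : ∀ᶠ (i:ℕ) in atTop, ∀ k : Fin d,
      (k ≠ j → ‖l k‖ < ‖l j‖ → ‖l k / c i‖ ≤ θ) ∧
      (k ≠ j → ‖l j‖ < ‖l k‖ → ‖c i / l k‖ ≤ θ) := by
    rw [eventually_all]
    intro k
    by_cases hk : k = j
    · exact Filter.Eventually.of_forall fun i =>
        ⟨fun h => absurd hk h, fun h => absurd hk h⟩
    · have hrFs : min (‖l k‖/‖l j‖) (‖l k‖/‖l j‖)⁻¹ ≤ Fs := by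
        have h := Finset.le_sup' (f := fun k' => if k' = j then (0:ℝ) else
          min (‖l k'‖/‖l j‖) (‖l k'‖/‖l j‖)⁻¹) (Finset.mem_univ k)
        rw [if_neg hk] at h
        exact h
      rcases lt_trichotomy ‖l k‖ ‖l j‖ with hlt | heq | hgt
      · -- small case
        have hr1 : ‖l k‖/‖l j‖ < 1 := (div_lt_one hlj).mpr hlt
        have hrinv : ‖l k‖/‖l j‖ ≤ (‖l k‖/‖l j‖)⁻¹ := by
          have hr0 : 0 < ‖l k‖/‖l j‖ := div_pos (norm_pos_iff.mpr (hlk k)) hlj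
          have := (one_lt_inv₀ hr0).mpr hr1
          linarith
        have hrθ : ‖l k‖/‖l j‖ < θ := by
          have := min_eq_left hrinv ▸ hrFs
          linarith
        have htd : Tendsto (fun i => ‖l k / c i‖) atTop (𝓝 (‖l k‖/‖l j‖)) := by
          simp only [norm_div]
          exact (tendsto_const_nhds).div hnclim (ne_of_gt hlj)
        exact (htd.eventually (gt_mem_nhds hrθ)).mono fun i hi =>
          ⟨fun _ _ => hi.le, fun _ h' => absurd h' (by linarith)⟩
      · exact absurd heq (hsep k hk)
      · -- large case
        have hr1 : 1 < ‖l k‖/‖l j‖ := (one_lt_div hlj).mpr hgt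
        have hrinv : (‖l k‖/‖l j‖)⁻¹ ≤ ‖l k‖/‖l j‖ := by
          have h0 : (0:ℝ) < ‖l k‖/‖l j‖ := by positivity
          have := inv_lt_one_of_one_lt₀ hr1
          linarith
        have hrθ : (‖l k‖/‖l j‖)⁻¹ < θ := by
          have := min_eq_right hrinv ▸ hrFs
          linarith
        have hlk0 : (0:ℝ) < ‖l k‖ := norm_pos_iff.mpr (hlk k)
        have htd : Tendsto (fun i => ‖c i / l k‖) atTop (𝓝 ((‖l k‖/‖l j‖)⁻¹)) := by
          simp only [norm_div]
          rw [inv_div]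
          exact hnclim.div tendsto_const_nhds (ne_of_gt hlk0)
        exact (htd.eventually (gt_mem_nhds hrθ)).mono fun i hi =>
          ⟨fun _ h' => absurd h' (by linarith), fun _ _ => hi.le⟩
  have hev5 : ∀ᶠ m in atTop, w m ≤ ε₁ :=
    (hw_lim.eventually (gt_mem_nhds hε₁pos)).mono fun m hm => hm.le
  have hev4 : ∀ᶠ n in atTop, t n ≤ ε₂ :=
    (ht_lim.eventually (gt_mem_nhds hε₂pos)).mono fun n hn => hn.le
  obtain ⟨N, hN⟩ := Filter.eventually_atTop.mp
    ((((hev1.and (hev2.and (hev5.and hev4))).and (eventually_ge_atTop (max n₀ 1)))))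
  have hNn₀ : n₀ ≤ N := le_trans (le_max_left _ _) (hN N le_rfl).2
  have hN1 : 1 ≤ N := le_trans (le_max_right _ _) (hN N le_rfl).2
  have hNc : ∀ n, N ≤ n → ‖l j‖/2 ≤ ‖c n‖ := fun n hn => (hN n hn).1.1
  have hNμs : ∀ n, N ≤ n → ∀ k : Fin d, k ≠ j → ‖l k‖ < ‖l j‖ → ‖l k / c n‖ ≤ θ :=
    fun n hn k hk h => ((hN n hn).1.2.1 k).1 hk h
  have hNμl : ∀ n, N ≤ n → ∀ k : Fin d, k ≠ j → ‖l j‖ < ‖l k‖ → ‖c n / l k‖ ≤ θ :=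
    fun n hn k hk h => ((hN n hn).1.2.1 k).2 hk h
  have hNw : ∀ n, N ≤ n → w n ≤ ε₁ := fun n hn => (hN n hn).1.2.2.1
  have hNt : t N ≤ ε₂ := (hN N le_rfl).1.2.2.2
  have hcne : ∀ n, N ≤ n → c n ≠ 0 := fun n hn => hγ n (le_trans hNn₀ hn)
  have hcinv : ∀ n, N ≤ n → ‖(c n)⁻¹‖ ≤ C₀ := by
    intro n hn
    rw [norm_inv]
    have h2 : (0:ℝ) < ‖l j‖/2 := by linarith
    calc ‖c n‖⁻¹ ≤ (‖l j‖/2)⁻¹ := inv_anti₀ h2 (hNc n hn)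
      _ = C₀ := by rw [hC₀_def, inv_div]
  -- classification
  have hclass : ∀ k : Fin d, k ≠ j → ¬(‖l k‖ < ‖l j‖) → ‖l j‖ < ‖l k‖ := by
    intro k hk h
    rcases lt_trichotomy ‖l k‖ ‖l j‖ with h1 | h1 | h1
    · exact absurd h1 h
    · exact absurd h1 (hsep k hk)
    · exact h1
  set μ : Fin d → ℕ → ℂ := fun k i => l k / c i with hμ_def
  have hμne : ∀ (k : Fin d) i, k ≠ j → N ≤ i → μ k i ≠ 0 := by
    intro k i hk hi
    exact div_ne_zero (hlk k) (hcne i hi)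
  have hμs : ∀ (k : Fin d) i, k ≠ j → ‖l k‖ < ‖l j‖ → N ≤ i → ‖μ k i‖ ≤ θ :=
    fun k i hk hs hi => hNμs i hi k hk hs
  have hμl : ∀ (k : Fin d) i, k ≠ j → ¬(‖l k‖ < ‖l j‖) → N ≤ i → ‖(μ k i)⁻¹‖ ≤ θ := by
    intro k i hk hs hi
    have h := hNμl i hi k hk (hclass k hk hs)
    rw [hμ_def]
    show ‖(l k / c i)⁻¹‖ ≤ θ
    rw [inv_div]
    exact h
  set v : ℕ → Fin d → ℝ := fun n i => if i = j then 1 else Cw * w n with hv_def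
  have hv_pos : ∀ n i, 0 < v n i := by
    intro n i
    show 0 < if i = j then 1 else Cw * w n
    split
    · norm_num
    · exact mul_pos hCw (hw_pos n)
  have hv_j : ∀ n, v n j = 1 := fun n => if_pos rfl
  have hv_ne : ∀ n i, i ≠ j → v n i = Cw * w n := fun n i hi => if_neg hi
  set Bm : ℕ → Fin d → Fin d → ℂ := fun m k i => if k = j ∧ i = j then 0 else A m k i
    with hBm_def
  have hBm_le : ∀ m (k i : Fin d), ‖Bm m k i‖ ≤ β m := by
    intro m k i
    show ‖if k = j ∧ i = j then (0:ℂ) else A m k i‖ ≤ β m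
    split
    · simpa using hβ0 m
    · exact hentry m k i
  set b : BoundedContinuousFunction (ℕ × Fin d) ℂ → ℕ → Fin d → ℂ :=
    fun g m k => (c m)⁻¹ * ∑ i, Bm m k i * ((v m i : ℝ):ℂ) * g (m, i) with hb_def
  have hvnorm : ∀ m i, ‖((v m i : ℝ):ℂ)‖ = v m i := by
    intro m i
    rw [Complex.norm_real, Real.norm_eq_abs, abs_of_pos (hv_pos m i)]
  -- sum of v bounds
  have hvsum : ∀ m, (∑ i : Fin d, v m i) ≤ 1 + (d:ℝ) * (Cw * w m) := by
    intro m
    rw [← Finset.sum_erase_add Finset.univ (v m) (Finset.mem_univ j), hv_j]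
    have herase : (∑ i ∈ Finset.univ.erase j, v m i)
        = ((Finset.univ.erase j).card : ℝ) * (Cw * w m) := by
      rw [Finset.sum_congr rfl (fun i hi => hv_ne m i (Finset.ne_of_mem_erase hi)),
        Finset.sum_const, nsmul_eq_mul]
    rw [herase]
    have hcard : ((Finset.univ.erase j).card : ℝ) ≤ (d:ℝ) := by
      have h1 : (Finset.univ.erase j).card ≤ Finset.univ.card :=
        Finset.card_le_card (Finset.erase_subset _ _)
      have h2 : (Finset.univ : Finset (Fin d)).card = d := Finset.card_univ.trans (Fintype.card_fin d)
      exact_mod_cast h2 ▸ h1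
    nlinarith [mul_pos hCw (hw_pos m)]
  -- general bound on b
  have hb_bound : ∀ g m, N ≤ m → ∀ k,
      ‖b g m k‖ ≤ C₀ * (β m * ((1 + (d:ℝ) * (Cw * w m)) * ‖g‖)) := by
    intro g m hm k
    show ‖(c m)⁻¹ * ∑ i, Bm m k i * ((v m i : ℝ):ℂ) * g (m, i)‖ ≤ _
    rw [norm_mul]
    have h1 : ‖∑ i, Bm m k i * ((v m i : ℝ):ℂ) * g (m, i)‖
        ≤ β m * ((1 + (d:ℝ) * (Cw * w m)) * ‖g‖) := by
      calc ‖∑ i, Bm m k i * ((v m i : ℝ):ℂ) * g (m, i)‖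
          ≤ ∑ i, ‖Bm m k i * ((v m i : ℝ):ℂ) * g (m, i)‖ := norm_sum_le _ _
        _ ≤ ∑ i, β m * (v m i * ‖g‖) := by
            apply Finset.sum_le_sum
            intro i _
            rw [norm_mul, norm_mul, hvnorm]
            have hg := g.norm_coe_le_norm (m, i)
            have h2 := hBm_le m k i
            have h3 := (hv_pos m i).le
            have h5 := norm_nonneg (g (m,i))
            calc ‖Bm m k i‖ * v m i * ‖g (m,i)‖
                ≤ β m * v m i * ‖g‖ :=
                  mul_le_mul (mul_le_mul_of_nonneg_right h2 h3) hg h5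
                    (mul_nonneg (hβ0 m) h3)
              _ = β m * (v m i * ‖g‖) := by ring
        _ = β m * ((∑ i, v m i) * ‖g‖) := by
            rw [Finset.sum_mul, Finset.mul_sum]
        _ ≤ β m * ((1 + (d:ℝ) * (Cw * w m)) * ‖g‖) := by
            apply mul_le_mul_of_nonneg_left _ (hβ0 m)
            exact mul_le_mul_of_nonneg_right (hvsum m) (norm_nonneg g)
    exact mul_le_mul (hcinv m hm) h1 (norm_nonneg _) hC₀.le
  -- bound on b at row j
  have hb_boundj : ∀ g m, N ≤ m →
      ‖b g m j‖ ≤ C₀ * (β m * (((d:ℝ) * (Cw * w m)) * ‖g‖)) := by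
    intro g m hm
    show ‖(c m)⁻¹ * ∑ i, Bm m j i * ((v m i : ℝ):ℂ) * g (m, i)‖ ≤ _
    rw [norm_mul]
    have h1 : ‖∑ i, Bm m j i * ((v m i : ℝ):ℂ) * g (m, i)‖
        ≤ β m * (((d:ℝ) * (Cw * w m)) * ‖g‖) := by
      calc ‖∑ i, Bm m j i * ((v m i : ℝ):ℂ) * g (m, i)‖
          ≤ ∑ i, ‖Bm m j i * ((v m i : ℝ):ℂ) * g (m, i)‖ := norm_sum_le _ _
        _ ≤ ∑ i, β m * ((if i = j then 0 else Cw * w m) * ‖g‖) := by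
            apply Finset.sum_le_sum
            intro i _
            rw [norm_mul, norm_mul, hvnorm]
            by_cases hi : i = j
            · have hzero : Bm m j i = 0 := by
                show (if j = j ∧ i = j then (0:ℂ) else A m j i) = 0
                rw [if_pos ⟨rfl, hi⟩]
              rw [hzero, if_pos hi, norm_zero, zero_mul, zero_mul, zero_mul, mul_zero]
            · rw [if_neg hi, hv_ne m i hi]
              have hg := g.norm_coe_le_norm (m, i)
              have h2 := hBm_le m j i
              have h3 := (mul_pos hCw (hw_pos m)).le
              have h5 := norm_nonneg (g (m,i))
              calc ‖Bm m j i‖ * (Cw * w m) * ‖g (m,i)‖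
                  ≤ β m * (Cw * w m) * ‖g‖ :=
                    mul_le_mul (mul_le_mul_of_nonneg_right h2 h3) hg h5
                      (mul_nonneg (hβ0 m) h3)
                _ = β m * ((Cw * w m) * ‖g‖) := by ring
        _ = β m * ((∑ i, (if i = j then (0:ℝ) else Cw * w m)) * ‖g‖) := by
            rw [Finset.sum_mul, Finset.mul_sum]
        _ ≤ β m * (((d:ℝ) * (Cw * w m)) * ‖g‖) := by
            apply mul_le_mul_of_nonneg_left _ (hβ0 m)
            apply mul_le_mul_of_nonneg_right _ (norm_nonneg g)
            rw [← Finset.sum_erase_add Finset.univ _ (Finset.mem_univ j), if_pos rfl, add_zero]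
            have herase : (∑ i ∈ Finset.univ.erase j, (if i = j then (0:ℝ) else Cw * w m))
                = ((Finset.univ.erase j).card : ℝ) * (Cw * w m) := by
              rw [Finset.sum_congr rfl (fun i hi => if_neg (Finset.ne_of_mem_erase hi)),
                Finset.sum_const, nsmul_eq_mul]
            rw [herase]
            have hcard : ((Finset.univ.erase j).card : ℝ) ≤ (d:ℝ) := by
              have h1 : (Finset.univ.erase j).card ≤ Finset.univ.card :=
                Finset.card_le_card (Finset.erase_subset _ _)
              have h2 : (Finset.univ : Finset (Fin d)).card = d :=
                Finset.card_univ.trans (Fintype.card_fin d)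
              exact_mod_cast h2 ▸ h1
            nlinarith [mul_pos hCw (hw_pos m)]
    exact mul_le_mul (hcinv m hm) h1 (norm_nonneg _) hC₀.le
  -- kernel bounds
  have hkP : ∀ (k : Fin d), k ≠ j → ‖l k‖ < ‖l j‖ → ∀ m n, N ≤ m → m < n →
      ‖∏ r ∈ Finset.Ico (m+1) n, μ k r‖ ≤ θ ^ (n - m - 1) := by
    intro k hk hs m n hm hmn
    rw [norm_prod]
    calc (∏ r ∈ Finset.Ico (m+1) n, ‖μ k r‖) ≤ ∏ _r ∈ Finset.Ico (m+1) n, θ := by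
          apply Finset.prod_le_prod
          · intro r _
            exact norm_nonneg _
          · intro r hr
            rw [Finset.mem_Ico] at hr
            exact hμs k r hk hs (by omega)
      _ = θ ^ (n - m - 1) := by
          rw [Finset.prod_const, Nat.card_Ico]
          congr 1
  have hkQ : ∀ (k : Fin d), k ≠ j → ¬(‖l k‖ < ‖l j‖) → ∀ n i, N ≤ n →
      ‖∏ r ∈ Finset.Ico n (i+n+1), (μ k r)⁻¹‖ ≤ θ ^ (i+1) := by
    intro k hk hs n i hn
    rw [norm_prod]
    calc (∏ r ∈ Finset.Ico n (i+n+1), ‖(μ k r)⁻¹‖) ≤ ∏ _r ∈ Finset.Ico n (i+n+1), θ := by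
          apply Finset.prod_le_prod
          · intro r _
            exact norm_nonneg _
          · intro r hr
            rw [Finset.mem_Ico] at hr
            exact hμl k r hk hs (by omega)
      _ = θ ^ (i+1) := by
          rw [Finset.prod_const, Nat.card_Ico]
          congr 1
          omega
  -- global bound on w
  have hBβ0 : 0 ≤ Bβ := Real.sqrt_nonneg _
  have hwB : ∀ m, w m ≤ 2/(1-θ) * Bβ := by
    intro m
    calc w m ≤ ∑' l, θ^(Nat.dist m l) * Bβ := by
          apply Summable.tsum_le_tsum _ (hw_summable_distpow_mul hθ0 hθ1 hβ0 hβ2 m)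
            ((hw_summable_distpow hθ0 hθ1 m).mul_right Bβ)
          intro l
          exact mul_le_mul_of_nonneg_left (hβB l) (pow_nonneg hθ0.le _)
      _ = (∑' l, θ^(Nat.dist m l)) * Bβ := tsum_mul_right
      _ ≤ 2/(1-θ) * Bβ :=
          mul_le_mul_of_nonneg_right (hw_tsum_distpow_le hθ0 hθ1 m) hBβ0
  -- the three pieces of the operator
  set Sj : BoundedContinuousFunction (ℕ × Fin d) ℂ → ℕ → ℂ :=
    fun g n => ∑' i, b g (i+n) j with hSj_def
  set Ssm : BoundedContinuousFunction (ℕ × Fin d) ℂ → ℕ → Fin d → ℂ := fun g n k =>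
    ∑ m ∈ Finset.Ico N n, (∏ r ∈ Finset.Ico (m+1) n, μ k r) * b g m k with hSsm_def
  set Slg : BoundedContinuousFunction (ℕ × Fin d) ℂ → ℕ → Fin d → ℂ := fun g n k =>
    ∑' i, (∏ r ∈ Finset.Ico n (i+n+1), (μ k r)⁻¹) * b g (i+n) k with hSlg_def
  -- summability for Sj
  have hSj_majsum : ∀ (g : BoundedContinuousFunction (ℕ × Fin d) ℂ) n,
      Summable (fun i => (C₀ * ((d:ℝ) * Cw * ‖g‖)) * (β (i+n) * w (i+n))) :=
    fun g n => ((summable_nat_add_iff n).mpr hbw_sum).mul_left _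
  have hSj_normle : ∀ (g : BoundedContinuousFunction (ℕ × Fin d) ℂ) n, N ≤ n → ∀ i,
      ‖b g (i+n) j‖ ≤ (C₀ * ((d:ℝ) * Cw * ‖g‖)) * (β (i+n) * w (i+n)) := by
    intro g n hn i
    calc ‖b g (i+n) j‖ ≤ C₀ * (β (i+n) * (((d:ℝ) * (Cw * w (i+n))) * ‖g‖)) :=
          hb_boundj g (i+n) (le_trans hn (Nat.le_add_left n i))
      _ = (C₀ * ((d:ℝ) * Cw * ‖g‖)) * (β (i+n) * w (i+n)) := by ring
  have hSj_sum : ∀ (g : BoundedContinuousFunction (ℕ × Fin d) ℂ) n, N ≤ n →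
      Summable (fun i => b g (i+n) j) := by
    intro g n hn
    exact Summable.of_norm_bounded (hSj_majsum g n) (hSj_normle g n hn)
  have hSj_est : ∀ (g : BoundedContinuousFunction (ℕ × Fin d) ℂ) n, N ≤ n →
      ‖Sj g n‖ ≤ (C₀ * ((d:ℝ) * Cw * ‖g‖)) * t n := by
    intro g n hn
    have hns : Summable (fun i => ‖b g (i+n) j‖) :=
      Summable.of_nonneg_of_le (fun i => norm_nonneg _) (hSj_normle g n hn) (hSj_majsum g n)
    calc ‖Sj g n‖ ≤ ∑' i, ‖b g (i+n) j‖ := norm_tsum_le_tsum_norm hns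
      _ ≤ ∑' i, (C₀ * ((d:ℝ) * Cw * ‖g‖)) * (β (i+n) * w (i+n)) :=
          Summable.tsum_le_tsum (hSj_normle g n hn) hns (hSj_majsum g n)
      _ = (C₀ * ((d:ℝ) * Cw * ‖g‖)) * t n := tsum_mul_left
  -- pointwise bound used for both small and large sums
  have hbV : ∀ (g : BoundedContinuousFunction (ℕ × Fin d) ℂ) m, N ≤ m → ∀ k,
      ‖b g m k‖ ≤ (C₀ * ((3:ℝ)/2) * ‖g‖) * β m := by
    intro g m hm k
    have h1 := hb_bound g m hm k
    have h2 : (1 + (d:ℝ) * (Cw * w m)) ≤ 3/2 := by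
      have h3 : (d:ℝ) * (Cw * w m) ≤ (d:ℝ) * Cw * ε₁ := by
        have := hNw m hm
        have hd0 : (0:ℝ) ≤ (d:ℝ) * Cw := by positivity
        calc (d:ℝ) * (Cw * w m) = ((d:ℝ) * Cw) * w m := by ring
          _ ≤ ((d:ℝ) * Cw) * ε₁ := mul_le_mul_of_nonneg_left this hd0
      linarith [hε₁small]
    calc ‖b g m k‖ ≤ C₀ * (β m * ((1 + (d:ℝ) * (Cw * w m)) * ‖g‖)) := h1
      _ ≤ C₀ * (β m * ((3/2) * ‖g‖)) := by
          apply mul_le_mul_of_nonneg_left _ hC₀.le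
          apply mul_le_mul_of_nonneg_left _ (hβ0 m)
          exact mul_le_mul_of_nonneg_right h2 (norm_nonneg _)
      _ = (C₀ * ((3:ℝ)/2) * ‖g‖) * β m := by ring
  -- small k estimate
  have hfac : (θ⁻¹ * (C₀ * ((3:ℝ)/2))) = (3/4) * Cw := by
    rw [hCw_def]
    field_simp
    ring
  have hSsm_est : ∀ (g : BoundedContinuousFunction (ℕ × Fin d) ℂ) n (k : Fin d), N ≤ n →
      k ≠ j → ‖l k‖ < ‖l j‖ → ‖Ssm g n k‖ ≤ ((3:ℝ)/4) * Cw * ‖g‖ * w n := by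
    intro g n k hn hk hs
    calc ‖Ssm g n k‖ ≤ ∑ m ∈ Finset.Ico N n, ‖(∏ r ∈ Finset.Ico (m+1) n, μ k r) * b g m k‖ :=
          norm_sum_le _ _
      _ ≤ ∑ m ∈ Finset.Ico N n, (θ⁻¹ * (C₀ * ((3:ℝ)/2) * ‖g‖)) * (θ^(Nat.dist n m) * β m) := by
          apply Finset.sum_le_sum
          intro m hm
          rw [Finset.mem_Ico] at hm
          rw [norm_mul]
          have hker := hkP k hk hs m n hm.1 hm.2
          have hb := hbV g m hm.1 k
          have hθd : θ ^ (n - m - 1) = θ⁻¹ * θ^(Nat.dist n m) := by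
            rw [Nat.dist_eq_sub_of_le_right hm.2.le]
            rw [eq_inv_mul_iff_mul_eq₀ (ne_of_gt hθ0), ← pow_succ']
            congr 1
            omega
          calc ‖∏ r ∈ Finset.Ico (m+1) n, μ k r‖ * ‖b g m k‖
              ≤ θ ^ (n - m - 1) * ((C₀ * ((3:ℝ)/2) * ‖g‖) * β m) :=
                mul_le_mul hker hb (norm_nonneg _) (by positivity)
            _ = (θ⁻¹ * (C₀ * ((3:ℝ)/2) * ‖g‖)) * (θ^(Nat.dist n m) * β m) := by
                rw [hθd]; ring
      _ = (θ⁻¹ * (C₀ * ((3:ℝ)/2) * ‖g‖)) * ∑ m ∈ Finset.Ico N n, (θ^(Nat.dist n m) * β m) := by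
          rw [Finset.mul_sum]
      _ ≤ (θ⁻¹ * (C₀ * ((3:ℝ)/2) * ‖g‖)) * w n := by
          apply mul_le_mul_of_nonneg_left _ (by positivity)
          exact Summable.sum_le_tsum _ (fun m _ => mul_nonneg (by positivity) (hβ0 m))
            (hw_summable_distpow_mul hθ0 hθ1 hβ0 hβ2 n)
      _ = (3:ℝ)/4 * Cw * ‖g‖ * w n := by
          rw [← hfac]
          ring
  -- large k : summability and estimate
  have hSlg_normle : ∀ (g : BoundedContinuousFunction (ℕ × Fin d) ℂ) n (k : Fin d), N ≤ n →
      k ≠ j → ¬(‖l k‖ < ‖l j‖) → ∀ i,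
      ‖(∏ r ∈ Finset.Ico n (i+n+1), (μ k r)⁻¹) * b g (i+n) k‖
        ≤ (θ * (C₀ * ((3:ℝ)/2) * ‖g‖)) * (θ^i * β (i+n)) := by
    intro g n k hn hk hs i
    rw [norm_mul]
    have hker := hkQ k hk hs n i hn
    have hb := hbV g (i+n) (le_trans hn (Nat.le_add_left n i)) k
    calc ‖∏ r ∈ Finset.Ico n (i+n+1), (μ k r)⁻¹‖ * ‖b g (i+n) k‖
        ≤ θ ^ (i+1) * ((C₀ * ((3:ℝ)/2) * ‖g‖) * β (i+n)) :=
          mul_le_mul hker hb (norm_nonneg _) (by positivity)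
      _ = (θ * (C₀ * ((3:ℝ)/2) * ‖g‖)) * (θ^i * β (i+n)) := by
          rw [pow_succ']
          ring
  have hshift_sum : ∀ n, Summable (fun i => θ^i * β (i+n)) := by
    intro n
    apply Summable.of_nonneg_of_le (fun i => mul_nonneg (by positivity) (hβ0 _))
      (f := fun i => θ^i * Bβ)
    · intro i
      exact mul_le_mul_of_nonneg_left (hβB _) (by positivity)
    · exact (summable_geometric_of_lt_one hθ0.le hθ1).mul_right Bβ
  have hSlg_sum : ∀ (g : BoundedContinuousFunction (ℕ × Fin d) ℂ) n (k : Fin d), N ≤ n →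
      k ≠ j → ¬(‖l k‖ < ‖l j‖) →
      Summable (fun i => (∏ r ∈ Finset.Ico n (i+n+1), (μ k r)⁻¹) * b g (i+n) k) := by
    intro g n k hn hk hs
    exact Summable.of_norm_bounded ((hshift_sum n).mul_left _) (hSlg_normle g n k hn hk hs)
  have hSlg_est : ∀ (g : BoundedContinuousFunction (ℕ × Fin d) ℂ) n (k : Fin d), N ≤ n →
      k ≠ j → ¬(‖l k‖ < ‖l j‖) → ‖Slg g n k‖ ≤ ((3:ℝ)/4) * Cw * ‖g‖ * w n := by
    intro g n k hn hk hs
    have hns : Summable (fun i => ‖(∏ r ∈ Finset.Ico n (i+n+1), (μ k r)⁻¹) * b g (i+n) k‖) :=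
      Summable.of_nonneg_of_le (fun i => norm_nonneg _) (hSlg_normle g n k hn hk hs)
        ((hshift_sum n).mul_left _)
    calc ‖Slg g n k‖ ≤ ∑' i, ‖(∏ r ∈ Finset.Ico n (i+n+1), (μ k r)⁻¹) * b g (i+n) k‖ :=
          norm_tsum_le_tsum_norm hns
      _ ≤ ∑' i, (θ * (C₀ * ((3:ℝ)/2) * ‖g‖)) * (θ^i * β (i+n)) :=
          Summable.tsum_le_tsum (hSlg_normle g n k hn hk hs) hns ((hshift_sum n).mul_left _)
      _ = (θ * (C₀ * ((3:ℝ)/2) * ‖g‖)) * ∑' i, (θ^i * β (i+n)) := tsum_mul_left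
      _ ≤ (θ * (C₀ * ((3:ℝ)/2) * ‖g‖)) * w n := by
          apply mul_le_mul_of_nonneg_left _ (by positivity)
          exact le_trans (hw_shift_le hθ0 hθ1 hβ0 hβ2 n) (le_refl _)
      _ ≤ (θ⁻¹ * (C₀ * ((3:ℝ)/2) * ‖g‖)) * w n := by
          apply mul_le_mul_of_nonneg_right _ (hw0 n)
          apply mul_le_mul_of_nonneg_right _ (by positivity)
          have h1 : (1:ℝ) ≤ θ⁻¹ := (one_le_inv₀ hθ0).mpr hθ1.le
          linarith [hθ1]
      _ = (3:ℝ)/4 * Cw * ‖g‖ * w n := by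
          rw [← hfac]
          ring
  -- linearity in g
  have hb_sub : ∀ (g g' : BoundedContinuousFunction (ℕ × Fin d) ℂ) m k,
      b (g - g') m k = b g m k - b g' m k := by
    intro g g' m k
    show (c m)⁻¹ * ∑ i, Bm m k i * ((v m i : ℝ):ℂ) * (g - g') (m, i) = _ - _
    have h : ∀ i : Fin d, Bm m k i * ((v m i : ℝ):ℂ) * (g - g') (m, i)
        = Bm m k i * ((v m i : ℝ):ℂ) * g (m, i) - Bm m k i * ((v m i : ℝ):ℂ) * g' (m, i) := by
      intro i
      rw [BoundedContinuousFunction.coe_sub, Pi.sub_apply]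
      ring
    rw [Finset.sum_congr rfl (fun i _ => h i), Finset.sum_sub_distrib]
    show _ = (c m)⁻¹ * _ - (c m)⁻¹ * _
    ring
  have hSj_sub : ∀ (g g' : BoundedContinuousFunction (ℕ × Fin d) ℂ) n, N ≤ n →
      Sj (g - g') n = Sj g n - Sj g' n := by
    intro g g' n hn
    show (∑' i, b (g - g') (i+n) j) = _ - _
    rw [← Summable.tsum_sub (hSj_sum g n hn) (hSj_sum g' n hn)]
    congr 1
    funext i
    exact hb_sub g g' (i+n) j
  have hSsm_sub : ∀ (g g' : BoundedContinuousFunction (ℕ × Fin d) ℂ) n (k : Fin d),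
      Ssm (g - g') n k = Ssm g n k - Ssm g' n k := by
    intro g g' n k
    show (∑ m ∈ Finset.Ico N n, (∏ r ∈ Finset.Ico (m+1) n, μ k r) * b (g - g') m k) = _ - _
    rw [← Finset.sum_sub_distrib]
    apply Finset.sum_congr rfl
    intro m _
    rw [hb_sub]
    ring
  have hSlg_sub : ∀ (g g' : BoundedContinuousFunction (ℕ × Fin d) ℂ) n (k : Fin d), N ≤ n →
      k ≠ j → ¬(‖l k‖ < ‖l j‖) → Slg (g - g') n k = Slg g n k - Slg g' n k := by
    intro g g' n k hn hk hs
    show (∑' i, (∏ r ∈ Finset.Ico n (i+n+1), (μ k r)⁻¹) * b (g - g') (i+n) k) = _ - _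
    rw [← Summable.tsum_sub (hSlg_sum g n k hn hk hs) (hSlg_sum g' n k hn hk hs)]
    congr 1
    funext i
    rw [hb_sub]
    ring
  -- the operator data
  set FF : BoundedContinuousFunction (ℕ × Fin d) ℂ → ℕ → Fin d → ℂ := fun g n k =>
    if k = j then 1 - Sj g n else if ‖l k‖ < ‖l j‖ then Ssm g n k else -(Slg g n k)
    with hFF_def
  have hFFj : ∀ (g : BoundedContinuousFunction (ℕ × Fin d) ℂ) n, N ≤ n →
      ‖FF g n j - 1‖ ≤ (C₀ * ((d:ℝ) * Cw * ‖g‖)) * t n := by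
    intro g n hn
    have h : FF g n j = 1 - Sj g n := if_pos rfl
    rw [h, sub_sub_cancel_left, norm_neg]
    exact hSj_est g n hn
  have hFFk : ∀ (g : BoundedContinuousFunction (ℕ × Fin d) ℂ) n (k : Fin d), N ≤ n → k ≠ j →
      ‖FF g n k‖ ≤ (3:ℝ)/4 * Cw * ‖g‖ * w n := by
    intro g n k hn hk
    have h : FF g n k = if ‖l k‖ < ‖l j‖ then Ssm g n k else -(Slg g n k) := if_neg hk
    rw [h]
    by_cases hs : ‖l k‖ < ‖l j‖
    · rw [if_pos hs]
      exact hSsm_est g n k hn hk hs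
    · rw [if_neg hs, norm_neg]
      exact hSlg_est g n k hn hk hs
  have hFF_subj : ∀ (g g' : BoundedContinuousFunction (ℕ × Fin d) ℂ) n, N ≤ n →
      ‖FF g n j - FF g' n j‖ ≤ (C₀ * ((d:ℝ) * Cw * ‖g - g'‖)) * t n := by
    intro g g' n hn
    have h1 : FF g n j = 1 - Sj g n := if_pos rfl
    have h2 : FF g' n j = 1 - Sj g' n := if_pos rfl
    have h3 : FF g n j - FF g' n j = -(Sj (g - g') n) := by
      rw [h1, h2, hSj_sub g g' n hn]
      ring
    rw [h3, norm_neg]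
    exact hSj_est (g - g') n hn
  have hFF_subk : ∀ (g g' : BoundedContinuousFunction (ℕ × Fin d) ℂ) n (k : Fin d), N ≤ n →
      k ≠ j → ‖FF g n k - FF g' n k‖ ≤ (3:ℝ)/4 * Cw * ‖g - g'‖ * w n := by
    intro g g' n k hn hk
    have h1 : FF g n k = if ‖l k‖ < ‖l j‖ then Ssm g n k else -(Slg g n k) := if_neg hk
    have h2 : FF g' n k = if ‖l k‖ < ‖l j‖ then Ssm g' n k else -(Slg g' n k) := if_neg hk
    by_cases hs : ‖l k‖ < ‖l j‖
    · have h3 : FF g n k - FF g' n k = Ssm (g - g') n k := by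
        rw [h1, h2, if_pos hs, if_pos hs, hSsm_sub g g' n k]
      rw [h3]
      exact hSsm_est (g - g') n k hn hk hs
    · have h3 : FF g n k - FF g' n k = -(Slg (g - g') n k) := by
        rw [h1, h2, if_neg hs, if_neg hs, hSlg_sub g g' n k hn hk hs]
        ring
      rw [h3, norm_neg]
      exact hSlg_est (g - g') n k hn hk hs
  -- the operator
  have hvC : ∀ n i, ((v n i : ℝ):ℂ) ≠ 0 := by
    intro n i
    simp only [ne_eq, Complex.ofReal_eq_zero]
    exact ne_of_gt (hv_pos n i)
  have hTbound : ∀ (g : BoundedContinuousFunction (ℕ × Fin d) ℂ) (x : ℕ × Fin d),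
      ‖FF g (max x.1 N) x.2 / ((v (max x.1 N) x.2 : ℝ):ℂ)‖
        ≤ (1 + (C₀ * ((d:ℝ) * Cw * ‖g‖)) * t N) + (3:ℝ)/4 * ‖g‖ := by
    intro g x
    have hn' : N ≤ max x.1 N := le_max_right _ _
    have htN : t (max x.1 N) ≤ t N := ht_mono N _ hn'
    have hq : (0:ℝ) ≤ C₀ * ((d:ℝ) * Cw * ‖g‖) := by positivity
    by_cases hk : x.2 = j
    · rw [hk, hv_j, Complex.ofReal_one, div_one]
      have h1 := hFFj g (max x.1 N) hn'
      have h2 : ‖FF g (max x.1 N) j‖ ≤ 1 + (C₀ * ((d:ℝ) * Cw * ‖g‖)) * t N := by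
        calc ‖FF g (max x.1 N) j‖ = ‖(FF g (max x.1 N) j - 1) + 1‖ := by ring_nf
          _ ≤ ‖FF g (max x.1 N) j - 1‖ + ‖(1:ℂ)‖ := norm_add_le _ _
          _ ≤ (C₀ * ((d:ℝ) * Cw * ‖g‖)) * t N + 1 := by
              rw [norm_one]
              have := mul_le_mul_of_nonneg_left htN hq
              linarith
          _ = 1 + (C₀ * ((d:ℝ) * Cw * ‖g‖)) * t N := by ring
      have h3 : (0:ℝ) ≤ (3:ℝ)/4 * ‖g‖ := by positivity
      linarith
    · rw [norm_div]
      have hveq : ‖((v (max x.1 N) x.2 : ℝ):ℂ)‖ = Cw * w (max x.1 N) := by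
        rw [hvnorm, hv_ne _ _ hk]
      rw [hveq]
      have h1 := hFFk g (max x.1 N) x.2 hn' hk
      have hpos : (0:ℝ) < Cw * w (max x.1 N) := mul_pos hCw (hw_pos _)
      have h2 : ‖FF g (max x.1 N) x.2‖ / (Cw * w (max x.1 N)) ≤ (3:ℝ)/4 * ‖g‖ := by
        rw [div_le_iff₀ hpos]
        calc ‖FF g (max x.1 N) x.2‖ ≤ (3:ℝ)/4 * Cw * ‖g‖ * w (max x.1 N) := h1
          _ = (3:ℝ)/4 * ‖g‖ * (Cw * w (max x.1 N)) := by ring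
      have h3 : (0:ℝ) ≤ (C₀ * ((d:ℝ) * Cw * ‖g‖)) * t N := mul_nonneg hq (ht0 N)
      linarith
  set T : BoundedContinuousFunction (ℕ × Fin d) ℂ → BoundedContinuousFunction (ℕ × Fin d) ℂ :=
    fun g => BoundedContinuousFunction.ofNormedAddCommGroup
      (fun x => FF g (max x.1 N) x.2 / ((v (max x.1 N) x.2 : ℝ):ℂ))
      (continuous_of_discreteTopology) _ (hTbound g) with hT_def
  have hT_apply : ∀ (g : BoundedContinuousFunction (ℕ × Fin d) ℂ) (n : ℕ) (k : Fin d),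
      T g (n, k) = FF g (max n N) k / ((v (max n N) k : ℝ):ℂ) := by
    intro g n k
    rw [hT_def]
    rfl
  -- contraction
  have hT_lip : ∀ g g' : BoundedContinuousFunction (ℕ × Fin d) ℂ,
      dist (T g) (T g') ≤ (3:ℝ)/4 * dist g g' := by
    intro g g'
    rw [BoundedContinuousFunction.dist_le (by positivity)]
    intro x
    obtain ⟨x1, x2⟩ := x
    rw [dist_eq_norm, hT_apply, hT_apply]
    have hn' : N ≤ max x1 N := le_max_right _ _
    have hgg : dist g g' = ‖g - g'‖ := dist_eq_norm g g'
    by_cases hk : x2 = j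
    · rw [hk, hv_j, Complex.ofReal_one, div_one, div_one]
      have h1 := hFF_subj g g' (max x1 N) hn'
      have htN : t (max x1 N) ≤ t N := ht_mono N _ hn'
      have h2 : C₀ * ((d:ℝ) * Cw) * t N ≤ 1/2 := by
        have h3 : C₀ * ((d:ℝ) * Cw) * t N ≤ C₀ * ((d:ℝ) * Cw) * ε₂ := by
          apply mul_le_mul_of_nonneg_left hNt (by positivity)
        have h4 : C₀ * ((d:ℝ) * Cw) * ε₂ = C₀ * (d:ℝ) * Cw * ε₂ := by ring
        linarith [hε₂small]
      rw [hgg]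
      calc ‖FF g (max x1 N) j - FF g' (max x1 N) j‖
          ≤ (C₀ * ((d:ℝ) * Cw * ‖g - g'‖)) * t (max x1 N) := h1
        _ ≤ (C₀ * ((d:ℝ) * Cw * ‖g - g'‖)) * t N :=
            mul_le_mul_of_nonneg_left htN (by positivity)
        _ = (C₀ * ((d:ℝ) * Cw) * t N) * ‖g - g'‖ := by ring
        _ ≤ (1/2) * ‖g - g'‖ := mul_le_mul_of_nonneg_right h2 (norm_nonneg _)
        _ ≤ (3:ℝ)/4 * ‖g - g'‖ := by
            have := norm_nonneg (g - g')
            linarith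
    · rw [div_sub_div_same, norm_div]
      have hveq : ‖((v (max x1 N) x2 : ℝ):ℂ)‖ = Cw * w (max x1 N) := by
        rw [hvnorm, hv_ne _ _ hk]
      rw [hveq]
      have h1 := hFF_subk g g' (max x1 N) x2 hn' hk
      have hpos : (0:ℝ) < Cw * w (max x1 N) := mul_pos hCw (hw_pos _)
      rw [div_le_iff₀ hpos, hgg]
      calc ‖FF g (max x1 N) x2 - FF g' (max x1 N) x2‖
          ≤ (3:ℝ)/4 * Cw * ‖g - g'‖ * w (max x1 N) := h1
        _ = (3:ℝ)/4 * ‖g - g'‖ * (Cw * w (max x1 N)) := by ring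
  have hcontr : ContractingWith (3/4 : NNReal) T := by
    constructor
    · rw [← NNReal.coe_lt_coe]
      norm_num
    · apply LipschitzWith.of_dist_le_mul
      intro g g'
      have hco : ((3/4 : NNReal) : ℝ) = (3:ℝ)/4 := by norm_num
      rw [hco]
      exact hT_lip g g'
  set gs : BoundedContinuousFunction (ℕ × Fin d) ℂ := ContractingWith.fixedPoint T hcontr
    with hgs_def
  have hfix : T gs = gs := hcontr.fixedPoint_isFixedPt
  -- the solution of the transformed system
  set z : ℕ → Fin d → ℂ := fun n i => ((v n i : ℝ):ℂ) * gs (n, i) with hz_def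
  have hzF : ∀ n k, N ≤ n → z n k = FF gs n k := by
    intro n k hn
    have h1 : gs (n, k) = T gs (n, k) := by rw [hfix]
    have h2 : max n N = n := max_eq_left hn
    show ((v n k : ℝ):ℂ) * gs (n, k) = FF gs n k
    rw [h1, hT_apply, h2, mul_div_cancel₀ _ (hvC n k)]
  -- recursion for z
  have hrec : ∀ n, N ≤ n → ∀ k, z (n+1) k = (if k = j then 1 else μ k n) * z n k + b gs n k := by
    intro n hn k
    have hn1 : N ≤ n + 1 := le_trans hn (Nat.le_succ n)
    by_cases hk : k = j
    · subst hk
      rw [hzF (n+1) k hn1, hzF n k hn, if_pos rfl, one_mul]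
      have h1 : FF gs (n+1) k = 1 - Sj gs (n+1) := if_pos rfl
      have h2 : FF gs n k = 1 - Sj gs n := if_pos rfl
      have hsplit : Sj gs n = b gs n k + Sj gs (n+1) := by
        show (∑' i, b gs (i+n) k) = _
        rw [Summable.tsum_eq_zero_add (hSj_sum gs n hn)]
        congr 1
        · rw [zero_add]
        · show (∑' i, b gs (i+1+n) k) = ∑' i, b gs (i+(n+1)) k
          congr 1
          funext i
          simp only [show i+1+n = i+(n+1) from by omega]
      rw [h1, h2]
      linear_combination hsplit
    · by_cases hs : ‖l k‖ < ‖l j‖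
      · -- small case
        rw [hzF (n+1) k hn1, hzF n k hn, if_neg hk]
        have h1 : FF gs (n+1) k
            = if ‖l k‖ < ‖l j‖ then Ssm gs (n+1) k else -(Slg gs (n+1) k) := if_neg hk
        have h2 : FF gs n k
            = if ‖l k‖ < ‖l j‖ then Ssm gs n k else -(Slg gs n k) := if_neg hk
        rw [h1, h2, if_pos hs, if_pos hs]
        show Ssm gs (n+1) k = μ k n * Ssm gs n k + b gs n k
        have hstep : (∑ m ∈ Finset.Ico N (n+1), (∏ r ∈ Finset.Ico (m+1) (n+1), μ k r) * b gs m k)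
            = μ k n * Ssm gs n k + b gs n k := by
          rw [Finset.sum_Ico_succ_top hn]
          have hlast : (∏ r ∈ Finset.Ico (n+1) (n+1), μ k r) = 1 := by
            rw [Finset.Ico_self, Finset.prod_empty]
          rw [hlast, one_mul]
          congr 1
          show _ = μ k n * ∑ m ∈ Finset.Ico N n, (∏ r ∈ Finset.Ico (m+1) n, μ k r) * b gs m k
          rw [Finset.mul_sum]
          apply Finset.sum_congr rfl
          intro m hm
          rw [Finset.mem_Ico] at hm
          rw [Finset.prod_Ico_succ_top (by omega : m + 1 ≤ n)]
          ring
        exact hstep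
      · -- large case
        rw [hzF (n+1) k hn1, hzF n k hn, if_neg hk]
        have h1 : FF gs (n+1) k
            = if ‖l k‖ < ‖l j‖ then Ssm gs (n+1) k else -(Slg gs (n+1) k) := if_neg hk
        have h2 : FF gs n k
            = if ‖l k‖ < ‖l j‖ then Ssm gs n k else -(Slg gs n k) := if_neg hk
        rw [h1, h2, if_neg hs, if_neg hs]
        have hμn : μ k n ≠ 0 := hμne k n hk hn
        have hsum_n := hSlg_sum gs n k hn hk hs
        have h3 : ∀ i : ℕ, μ k n * ((∏ r ∈ Finset.Ico n (i+n+1), (μ k r)⁻¹) * b gs (i+n) k)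
            = (∏ r ∈ Finset.Ico (n+1) (i+n+1), (μ k r)⁻¹) * b gs (i+n) k := by
          intro i
          rw [Finset.prod_eq_prod_Ico_succ_bot (by omega : n < i+n+1)]
          calc μ k n * (((μ k n)⁻¹ * ∏ r ∈ Finset.Ico (n+1) (i+n+1), (μ k r)⁻¹)
                * b gs (i+n) k)
              = (μ k n * (μ k n)⁻¹)
                * ((∏ r ∈ Finset.Ico (n+1) (i+n+1), (μ k r)⁻¹) * b gs (i+n) k) := by ring
            _ = (∏ r ∈ Finset.Ico (n+1) (i+n+1), (μ k r)⁻¹) * b gs (i+n) k := by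
                rw [mul_inv_cancel₀ hμn, one_mul]
        have hsumH : Summable
            (fun i => (∏ r ∈ Finset.Ico (n+1) (i+n+1), (μ k r)⁻¹) * b gs (i+n) k) := by
          have h4 := hsum_n.mul_left (μ k n)
          apply h4.congr
          intro i
          exact h3 i
        have hkey : μ k n * Slg gs n k = b gs n k + Slg gs (n+1) k := by
          have h2' : μ k n * Slg gs n k
              = ∑' i, (∏ r ∈ Finset.Ico (n+1) (i+n+1), (μ k r)⁻¹) * b gs (i+n) k := by
            show μ k n * (∑' i, (∏ r ∈ Finset.Ico n (i+n+1), (μ k r)⁻¹) * b gs (i+n) k) = _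
            rw [← tsum_mul_left]
            congr 1
            funext i
            exact h3 i
          rw [h2', Summable.tsum_eq_zero_add hsumH]
          congr 1
          · show (∏ r ∈ Finset.Ico (n+1) (0+n+1), (μ k r)⁻¹) * b gs (0+n) k = b gs n k
            have he : 0+n+1 = n+1 := by omega
            rw [he, Finset.Ico_self, Finset.prod_empty, one_mul, zero_add]
          · show (∑' i, (∏ r ∈ Finset.Ico (n+1) (i+1+n+1), (μ k r)⁻¹) * b gs (i+1+n) k)
                = Slg gs (n+1) k
            show _ = ∑' i, (∏ r ∈ Finset.Ico (n+1) (i+(n+1)+1), (μ k r)⁻¹) * b gs (i+(n+1)) k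
            congr 1
            funext i
            simp only [show i+1+n = i+(n+1) from by omega,
              show i+1+n+1 = i+(n+1)+1 from by omega]
        linear_combination hkey
  -- the original solution
  have hNn₀' : ∀ n, N ≤ n → n₀ ≤ n := fun n hn => le_trans hNn₀ hn
  set γ : ℕ → ℂ := fun n => ∏ r ∈ Finset.Ico n₀ n, c r with hγ_def
  have hγne : ∀ n, n₀ ≤ n → γ n ≠ 0 := by
    intro n hn
    show (∏ r ∈ Finset.Ico n₀ n, c r) ≠ 0
    rw [Finset.prod_ne_zero_iff]
    intro r hr
    rw [Finset.mem_Ico] at hr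
    exact hγ r hr.1
  have hγsucc : ∀ n, n₀ ≤ n → γ (n+1) = γ n * c n := by
    intro n hn
    show (∏ r ∈ Finset.Ico n₀ (n+1), c r) = _
    rw [Finset.prod_Ico_succ_top hn]
  have hcb : ∀ n, N ≤ n → ∀ k, c n * b gs n k = ∑ i, Bm n k i * z n i := by
    intro n hn k
    show c n * ((c n)⁻¹ * ∑ i, Bm n k i * ((v n i : ℝ):ℂ) * gs (n, i)) = _
    rw [← mul_assoc, mul_inv_cancel₀ (hcne n hn), one_mul]
    apply Finset.sum_congr rfl
    intro i _
    show Bm n k i * ((v n i : ℝ):ℂ) * gs (n, i) = Bm n k i * (((v n i : ℝ):ℂ) * gs (n, i))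
    ring
  set yb : ℕ → Fin d → ℂ := fun n k => γ n * z n k with hyb_def
  have hyrec : ∀ n, N ≤ n → yb (n+1) = (Matrix.diagonal l + A n).mulVec (yb n) := by
    intro n hn
    funext k
    have hmv : ((Matrix.diagonal l + A n).mulVec (yb n)) k
        = l k * (γ n * z n k) + ∑ i, A n k i * (γ n * z n i) := by
      rw [Matrix.add_mulVec, Pi.add_apply, Matrix.mulVec_diagonal]
      rfl
    have hid : c n * ((if k = j then 1 else μ k n) * z n k + b gs n k)
        = l k * z n k + ∑ i, A n k i * z n i := by
      rw [mul_add, hcb n hn k]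
      by_cases hk : k = j
      · subst hk
        rw [if_pos rfl, one_mul]
        have hA : (∑ i, A n k i * z n i)
            = (∑ i ∈ Finset.univ.erase k, A n k i * z n i) + A n k k * z n k :=
          (Finset.sum_erase_add Finset.univ _ (Finset.mem_univ k)).symm
        have hB : (∑ i, Bm n k i * z n i) = ∑ i ∈ Finset.univ.erase k, A n k i * z n i := by
          rw [← Finset.sum_erase_add Finset.univ _ (Finset.mem_univ k)]
          have hzero : Bm n k k = 0 := by
            show (if k = k ∧ k = k then (0:ℂ) else A n k k) = 0
            rw [if_pos ⟨rfl, rfl⟩]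
          rw [hzero, zero_mul, add_zero]
          apply Finset.sum_congr rfl
          intro i hi
          have hij : i ≠ k := Finset.ne_of_mem_erase hi
          have hBA : Bm n k i = A n k i := by
            show (if k = k ∧ i = k then (0:ℂ) else A n k i) = A n k i
            rw [if_neg (by tauto)]
          rw [hBA]
        rw [hB, hA]
        have hc : c n = l k + A n k k := rfl
        rw [hc]
        ring
      · rw [if_neg hk]
        have hc0 := hcne n hn
        have hμ : c n * (μ k n * z n k) = l k * z n k := by
          have hcm : c n * μ k n = l k := by
            show c n * (l k / c n) = l k
            rw [mul_comm, div_mul_cancel₀ _ hc0]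
          calc c n * (μ k n * z n k) = (c n * μ k n) * z n k := by ring
            _ = l k * z n k := by rw [hcm]
        rw [hμ]
        congr 1
        apply Finset.sum_congr rfl
        intro i _
        have hBA : Bm n k i = A n k i := by
          show (if k = j ∧ i = j then (0:ℂ) else A n k i) = A n k i
          rw [if_neg (by tauto)]
        rw [hBA]
    show γ (n+1) * z (n+1) k = _
    rw [hγsucc n (hNn₀' n hn), hrec n hn k, hmv]
    calc (γ n * c n) * ((if k = j then 1 else μ k n) * z n k + b gs n k)
        = γ n * (c n * ((if k = j then 1 else μ k n) * z n k + b gs n k)) := by ring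
      _ = γ n * (l k * z n k + ∑ i, A n k i * z n i) := by rw [hid]
      _ = l k * (γ n * z n k) + ∑ i, A n k i * (γ n * z n i) := by
          rw [mul_add, Finset.mul_sum]
          congr 1
          · ring
          · apply Finset.sum_congr rfl
            intro i _
            ring
  -- backward extension
  set g0 : ℕ → Fin d → ℂ := fun i => Nat.rec (motive := fun _ => Fin d → ℂ) (yb N)
    (fun i ih => ((Matrix.diagonal l + A (N - (i+1)))⁻¹).mulVec ih) i with hg0_def
  have hg0_zero : g0 0 = yb N := rfl
  have hg0_succ : ∀ i, g0 (i+1) = ((Matrix.diagonal l + A (N - (i+1)))⁻¹).mulVec (g0 i) :=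
    fun i => rfl
  set y : ℕ → Fin d → ℂ := fun n => if n < N then g0 (N - n) else yb n with hy_def
  have hyN : ∀ n, N ≤ n → y n = yb n := by
    intro n hn
    show (if n < N then _ else _) = _
    rw [if_neg (not_lt.mpr hn)]
  have hyback : ∀ n, n < N → y n = ((Matrix.diagonal l + A n)⁻¹).mulVec (y (n+1)) := by
    intro n hn
    have h1 : y n = g0 (N - n) := by
      show (if n < N then _ else _) = _
      rw [if_pos hn]
    have h2 : N - n = (N - n - 1) + 1 := by omega
    rw [h1, h2, hg0_succ]
    have h5 : N - (N - n - 1 + 1) = n := by omega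
    rw [h5]
    congr 1
    by_cases h3 : n + 1 < N
    · have h6 : y (n+1) = g0 (N - (n+1)) := by
        show (if n+1 < N then _ else _) = _
        rw [if_pos h3]
      rw [h6]
      congr 1
    · have hEq : n + 1 = N := by omega
      have h4 : N - n - 1 = 0 := by omega
      rw [h4, hg0_zero, hyN (n+1) (by omega), hEq]
  have hYrec : ∀ n, 1 ≤ n → y (n + 1) = (Matrix.diagonal l + A n).mulVec (y n) := by
    intro n hn1
    by_cases hn : N ≤ n
    · rw [hyN n hn, hyN (n+1) (by omega), hyrec n hn]
    · push_neg at hn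
      have hdet := (Matrix.isUnit_iff_isUnit_det _).mp (hinv n hn1)
      rw [hyback n hn, Matrix.mulVec_mulVec, Matrix.mul_nonsing_inv _ hdet, Matrix.one_mulVec]
  -- limits
  have hSjlim : Tendsto (fun n => Sj gs n) atTop (𝓝 0) := by
    apply squeeze_zero_norm' (a := fun n => (C₀ * ((d:ℝ) * Cw * ‖gs‖)) * t n)
    · rw [eventually_atTop]
      exact ⟨N, fun n hn => hSj_est gs n hn⟩
    · have h := ht_lim.const_mul (C₀ * ((d:ℝ) * Cw * ‖gs‖))
      simpa using h
  have hmain1 : Tendsto (fun n => 1 - Sj gs n) atTop (𝓝 (1:ℂ)) := by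
    have h := (tendsto_const_nhds (x := (1:ℂ)) (f := atTop (α := ℕ))).sub hSjlim
    simpa using h
  refine ⟨y, hYrec, ?_, ?_⟩
  · have hE : (fun n => y n j / ∏ r ∈ Finset.Ico n₀ n, (l j + A r j j)) =ᶠ[atTop]
        (fun n => 1 - Sj gs n) := by
      filter_upwards [eventually_ge_atTop N] with n hn
      show y n j / γ n = 1 - Sj gs n
      rw [hyN n hn]
      show (γ n * z n j) / γ n = _
      rw [mul_comm, mul_div_assoc, div_self (hγne n (hNn₀' n hn)), mul_one]
      rw [hzF n j hn]
      exact if_pos rfl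
    exact hmain1.congr' hE.symm
  · intro k hk
    have hzlim : Tendsto (fun n => z n k) atTop (𝓝 0) := by
      apply squeeze_zero_norm' (a := fun n => (Cw * ‖gs‖) * w n)
      · apply Filter.Eventually.of_forall
        intro n
        show ‖((v n k : ℝ):ℂ) * gs (n,k)‖ ≤ _
        rw [norm_mul, hvnorm, hv_ne n k hk]
        calc (Cw * w n) * ‖gs (n,k)‖ ≤ (Cw * w n) * ‖gs‖ :=
              mul_le_mul_of_nonneg_left (gs.norm_coe_le_norm _)
                (mul_nonneg hCw.le (hw0 n))
          _ = (Cw * ‖gs‖) * w n := by ring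
      · have h := hw_lim.const_mul (Cw * ‖gs‖)
        simpa using h
    have hE : (fun n => y n k / ∏ r ∈ Finset.Ico n₀ n, (l j + A r j j)) =ᶠ[atTop]
        (fun n => z n k) := by
      filter_upwards [eventually_ge_atTop N] with n hn
      show y n k / γ n = z n k
      rw [hyN n hn]
      show (γ n * z n k) / γ n = _
      rw [mul_comm, mul_div_assoc, div_self (hγne n (hNn₀' n hn)), mul_one]
    exact hzlim.congr' hE.symm
end

section
/- Let Λ be a d×d complex diagonal matrix with diagonal entries λ_1, …, λ_d satisfying |λ_1| > |λ_2| > … > |λ_d| > 0, and let {A_n}_{n≥1} be d×d complex matrices such that Σ_{n=1}^∞ ‖A_n‖² < ∞, Λ + A_n is invertible for every n, and for each j the partial sums Σ_{n=1}^N (A_n)_{j,j} have a finite limit as N → ∞. Then for any initial vector y_1 ≠ 0, the solution of y_{n+1} = (Λ + A_n) y_n admits an index j and a constant c_j ≠ 0 such that y_{n,j}/λ_j^n → c_j as n → ∞, while y_{n,k}/λ_j^n → 0 as n → ∞ for every k ≠ j. -/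
open Filter Topology

section CoffmanAux

open NNReal


private lemma weighted_sq {X y η : ℝ} (hη : 0 < η) :
    (X + y) ^ 2 ≤ (1 + η) * X ^ 2 + (1 + η⁻¹) * y ^ 2 := by
  have h0 : 0 ≤ η⁻¹ * (η * X - y) ^ 2 := by positivity
  have h1 : η⁻¹ * (η * X - y) ^ 2 = η * X ^ 2 - 2 * X * y + η⁻¹ * y ^ 2 := by
    field_simp
    ring
  nlinarith [h0, h1]

private lemma aux_fwd_tendsto {s a : ℕ → ℝ} {q B : ℝ} {N : ℕ}
    (hq0 : 0 ≤ q) (hq1 : q < 1) (hB : 0 ≤ B)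
    (hs0 : ∀ n, N ≤ n → 0 ≤ s n) (hsB : ∀ n, N ≤ n → s n ≤ B)
    (ha : Tendsto a atTop (𝓝 0))
    (hrec : ∀ n, N ≤ n → s (n + 1) ≤ q * s n + a n) :
    Tendsto s atTop (𝓝 0) := by
  rw [Metric.tendsto_atTop]
  intro ε hε
  have h4 : 0 < ε * (1 - q) / 4 := by
    have : 0 < 1 - q := by linarith
    positivity
  obtain ⟨M₀, hM₀⟩ := Metric.tendsto_atTop.mp ha (ε * (1 - q) / 4) h4
  set M := max M₀ N with hMdef
  have hMN : N ≤ M := le_max_right _ _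
  have haM : ∀ n, M ≤ n → a n ≤ ε * (1 - q) / 4 := by
    intro n hn
    have := hM₀ n (le_trans (le_max_left _ _) hn)
    rw [Real.dist_eq, sub_zero] at this
    exact le_of_lt (lt_of_le_of_lt (le_abs_self _) this)
  have key : ∀ k, s (M + k) ≤ q ^ k * B + ε / 4 := by
    intro k
    induction k with
    | zero =>
      have := hsB M hMN
      simpa using by linarith
    | succ k ih =>
      have hMk : N ≤ M + k := le_trans hMN (Nat.le_add_right _ _)
      have h1 := hrec (M + k) hMk
      have h2 := haM (M + k) (Nat.le_add_right _ _)
      have h3 : s (M + (k + 1)) = s ((M + k) + 1) := by ring_nf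
      rw [h3]
      have hq4 : q * (q ^ k * B) = q ^ (k + 1) * B := by ring
      calc s ((M + k) + 1) ≤ q * s (M + k) + a (M + k) := h1
        _ ≤ q * (q ^ k * B + ε / 4) + ε * (1 - q) / 4 := by
            have := mul_le_mul_of_nonneg_left ih hq0
            linarith
        _ ≤ q ^ (k + 1) * B + ε / 4 := by nlinarith
  obtain ⟨k₀, hk₀⟩ :=
    ((show Tendsto (fun k => q ^ k * B) atTop (𝓝 0) by
        simpa using (tendsto_pow_atTop_nhds_zero_of_lt_one hq0 hq1).mul_const B).eventually_lt_const
      (show (0:ℝ) < ε / 4 by positivity)).exists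
  refine ⟨M + k₀, fun n hn => ?_⟩
  have hMn : M ≤ n := le_trans (Nat.le_add_right _ _) hn
  have h1 : s n ≤ q ^ (n - M) * B + ε / 4 := by
    have := key (n - M)
    rwa [Nat.add_sub_cancel' hMn] at this
  have h2 : q ^ (n - M) * B ≤ q ^ k₀ * B := by
    apply mul_le_mul_of_nonneg_right _ hB
    exact pow_le_pow_of_le_one hq0 hq1.le (by omega)
  rw [Real.dist_eq, sub_zero, abs_of_nonneg (hs0 n (le_trans hMN hMn))]
  linarith

private lemma aux_bwd_tendsto {s a : ℕ → ℝ} {q B : ℝ} {N : ℕ}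
    (hq0 : 0 ≤ q) (hq1 : q < 1) (hB : 0 ≤ B)
    (hs0 : ∀ n, N ≤ n → 0 ≤ s n) (hsB : ∀ n, N ≤ n → s n ≤ B)
    (ha : Tendsto a atTop (𝓝 0))
    (hrec : ∀ n, N ≤ n → s n ≤ q * s (n + 1) + a n) :
    Tendsto s atTop (𝓝 0) := by
  rw [Metric.tendsto_atTop]
  intro ε hε
  have h4 : 0 < ε * (1 - q) / 4 := by
    have : 0 < 1 - q := by linarith
    positivity
  obtain ⟨M₀, hM₀⟩ := Metric.tendsto_atTop.mp ha (ε * (1 - q) / 4) h4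
  set M := max M₀ N with hMdef
  have hMN : N ≤ M := le_max_right _ _
  have haM : ∀ n, M ≤ n → a n ≤ ε * (1 - q) / 4 := by
    intro n hn
    have := hM₀ n (le_trans (le_max_left _ _) hn)
    rw [Real.dist_eq, sub_zero] at this
    exact le_of_lt (lt_of_le_of_lt (le_abs_self _) this)
  have key : ∀ k, ∀ n, M ≤ n → s n ≤ q ^ k * B + ε / 4 := by
    intro k
    induction k with
    | zero =>
      intro n hn
      have := hsB n (le_trans hMN hn)
      simpa using by linarith
    | succ k ih =>
      intro n hn
      have h1 := hrec n (le_trans hMN hn)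
      have h2 := haM n hn
      have h3 := ih (n + 1) (le_trans hn (Nat.le_succ _))
      have h5 := mul_le_mul_of_nonneg_left h3 hq0
      have hq4 : q * (q ^ k * B) = q ^ (k + 1) * B := by ring
      nlinarith
  obtain ⟨k₀, hk₀⟩ :=
    ((show Tendsto (fun k => q ^ k * B) atTop (𝓝 0) by
        simpa using (tendsto_pow_atTop_nhds_zero_of_lt_one hq0 hq1).mul_const B).eventually_lt_const
      (show (0:ℝ) < ε / 4 by positivity)).exists
  refine ⟨M, fun n hn => ?_⟩
  rw [Real.dist_eq, sub_zero, abs_of_nonneg (hs0 n (le_trans hMN hn))]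
  have := key k₀ n hn
  linarith

private lemma aux_fwd_sq {s a : ℕ → ℝ} {q : ℝ} {N : ℕ}
    (hq0 : 0 ≤ q) (hq1 : q < 1)
    (hs0 : ∀ n, N ≤ n → 0 ≤ s n) (ha0 : ∀ n, 0 ≤ a n)
    (ha : Summable (fun n => a n ^ 2))
    (hrec : ∀ n, N ≤ n → s (n + 1) ≤ q * s n + a n) :
    Summable (fun n => s n ^ 2) := by
  have hq2 : q ^ 2 < 1 := by nlinarith
  set η := (1 - q ^ 2) / 2 with hηdef
  have hη : 0 < η := by simp only [hηdef]; linarith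
  set Q := (1 + η) * q ^ 2 with hQdef
  have hQ0 : 0 ≤ Q := by positivity
  have hQ1 : Q < 1 := by simp only [hQdef, hηdef]; nlinarith
  set K := 1 + η⁻¹ with hKdef
  have hK0 : 0 ≤ K := by positivity
  have step : ∀ n, N ≤ n → s (n + 1) ^ 2 ≤ Q * s n ^ 2 + K * a n ^ 2 := by
    intro n hn
    have h1 : s (n + 1) ^ 2 ≤ (q * s n + a n) ^ 2 := by
      have h2 : 0 ≤ s (n + 1) := hs0 _ (le_trans hn (Nat.le_succ _))
      have := hrec n hn
      nlinarith
    calc s (n + 1) ^ 2 ≤ (q * s n + a n) ^ 2 := h1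
      _ ≤ (1 + η) * (q * s n) ^ 2 + (1 + η⁻¹) * a n ^ 2 := weighted_sq hη
      _ = Q * s n ^ 2 + K * a n ^ 2 := by simp only [hQdef, hKdef]; ring
  have hta : Summable (fun k => a (k + N) ^ 2) := (_root_.summable_nat_add_iff N).mpr ha
  set Sa := ∑' k, a (k + N) ^ 2 with hSadef
  have hSa0 : 0 ≤ Sa := tsum_nonneg fun k => sq_nonneg _
  have hbdd : ∀ m, ∑ k ∈ Finset.range m, s (k + N) ^ 2 ≤ (s N ^ 2 + K * Sa) / (1 - Q) := by
    intro m
    set T : ℕ → ℝ := fun m => ∑ k ∈ Finset.range m, s (k + N) ^ 2 with hTdef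
    have hmono : T m ≤ T (m + 1) := by
      simp only [hTdef, Finset.sum_range_succ]
      linarith [sq_nonneg (s (m + N))]
    have h1 : T (m + 1) = (∑ k ∈ Finset.range m, s (k + 1 + N) ^ 2) + s N ^ 2 := by
      simp only [hTdef]
      rw [Finset.sum_range_succ']
      simp
    have h2 : ∑ k ∈ Finset.range m, s (k + 1 + N) ^ 2
        ≤ Q * T m + K * Sa := by
      have h3 : ∀ k ∈ Finset.range m, s (k + 1 + N) ^ 2 ≤ Q * s (k + N) ^ 2 + K * a (k + N) ^ 2 := by
        intro k _
        have := step (k + N) (Nat.le_add_left _ _)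
        have he : k + 1 + N = (k + N) + 1 := by omega
        rwa [he]
      calc ∑ k ∈ Finset.range m, s (k + 1 + N) ^ 2
          ≤ ∑ k ∈ Finset.range m, (Q * s (k + N) ^ 2 + K * a (k + N) ^ 2) :=
            Finset.sum_le_sum h3
        _ = Q * T m + K * ∑ k ∈ Finset.range m, a (k + N) ^ 2 := by
            rw [Finset.sum_add_distrib, ← Finset.mul_sum, ← Finset.mul_sum]
        _ ≤ Q * T m + K * Sa := by
            have h9 := mul_le_mul_of_nonneg_left
              (Summable.sum_le_tsum (Finset.range m) (fun k _ => sq_nonneg _) hta) hK0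
            linarith
    have h11 : T m ≤ Q * T m + (s N ^ 2 + K * Sa) := by linarith
    rw [le_div_iff₀ (by linarith : (0:ℝ) < 1 - Q)]
    have h12 : T m * (1 - Q) = T m - Q * T m := by ring
    linarith
  exact (_root_.summable_nat_add_iff N).mp
    (summable_of_sum_range_le (fun k => sq_nonneg _) hbdd)

private lemma aux_bwd_sq {s a : ℕ → ℝ} {q B : ℝ} {N : ℕ}
    (hq0 : 0 ≤ q) (hq1 : q < 1) (hB : 0 ≤ B)
    (hs0 : ∀ n, N ≤ n → 0 ≤ s n) (hsB : ∀ n, N ≤ n → s n ≤ B) (ha0 : ∀ n, 0 ≤ a n)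
    (ha : Summable (fun n => a n ^ 2))
    (hrec : ∀ n, N ≤ n → s n ≤ q * s (n + 1) + a n) :
    Summable (fun n => s n ^ 2) := by
  have hq2 : q ^ 2 < 1 := by nlinarith
  set η := (1 - q ^ 2) / 2 with hηdef
  have hη : 0 < η := by simp only [hηdef]; linarith
  set Q := (1 + η) * q ^ 2 with hQdef
  have hQ0 : 0 ≤ Q := by positivity
  have hQ1 : Q < 1 := by simp only [hQdef, hηdef]; nlinarith
  set K := 1 + η⁻¹ with hKdef
  have hK0 : 0 ≤ K := by positivity
  have step : ∀ n, N ≤ n → s n ^ 2 ≤ Q * s (n + 1) ^ 2 + K * a n ^ 2 := by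
    intro n hn
    have h1 : s n ^ 2 ≤ (q * s (n + 1) + a n) ^ 2 := by
      have h2 : 0 ≤ s n := hs0 _ hn
      have := hrec n hn
      nlinarith
    calc s n ^ 2 ≤ (q * s (n + 1) + a n) ^ 2 := h1
      _ ≤ (1 + η) * (q * s (n + 1)) ^ 2 + (1 + η⁻¹) * a n ^ 2 := weighted_sq hη
      _ = Q * s (n + 1) ^ 2 + K * a n ^ 2 := by simp only [hQdef, hKdef]; ring
  have hta : Summable (fun k => a (k + N) ^ 2) := (_root_.summable_nat_add_iff N).mpr ha
  set Sa := ∑' k, a (k + N) ^ 2 with hSadef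
  have hSa0 : 0 ≤ Sa := tsum_nonneg fun k => sq_nonneg _
  have hbdd : ∀ m, ∑ k ∈ Finset.range m, s (k + N) ^ 2 ≤ (Q * B ^ 2 + K * Sa) / (1 - Q) := by
    intro m
    set T : ℕ → ℝ := fun m => ∑ k ∈ Finset.range m, s (k + N) ^ 2 with hTdef
    have h2 : T m ≤ Q * (∑ k ∈ Finset.range m, s (k + 1 + N) ^ 2) + K * Sa := by
      have h3 : ∀ k ∈ Finset.range m, s (k + N) ^ 2 ≤ Q * s (k + 1 + N) ^ 2 + K * a (k + N) ^ 2 := by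
        intro k _
        have := step (k + N) (Nat.le_add_left _ _)
        have he : k + 1 + N = (k + N) + 1 := by omega
        rwa [he]
      calc T m ≤ ∑ k ∈ Finset.range m, (Q * s (k + 1 + N) ^ 2 + K * a (k + N) ^ 2) :=
            Finset.sum_le_sum h3
        _ = Q * (∑ k ∈ Finset.range m, s (k + 1 + N) ^ 2)
              + K * ∑ k ∈ Finset.range m, a (k + N) ^ 2 := by
            rw [Finset.sum_add_distrib, ← Finset.mul_sum, ← Finset.mul_sum]
        _ ≤ Q * (∑ k ∈ Finset.range m, s (k + 1 + N) ^ 2) + K * Sa := by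
            have h9 := mul_le_mul_of_nonneg_left
              (Summable.sum_le_tsum (Finset.range m) (fun k _ => sq_nonneg _) hta) hK0
            linarith
    have h4 : ∑ k ∈ Finset.range m, s (k + 1 + N) ^ 2 ≤ T m + B ^ 2 := by
      have h5 : (∑ k ∈ Finset.range m, s (k + 1 + N) ^ 2) + s N ^ 2 = T (m + 1) := by
        simp only [hTdef]
        rw [Finset.sum_range_succ']
        simp
      have h6 : T (m + 1) = T m + s (m + N) ^ 2 := by
        simp only [hTdef, Finset.sum_range_succ]
      have h7 : s (m + N) ^ 2 ≤ B ^ 2 := by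
        have h8 := hs0 (m + N) (Nat.le_add_left _ _)
        have h9 := hsB (m + N) (Nat.le_add_left _ _)
        nlinarith
      linarith [sq_nonneg (s N)]
    have h10 := mul_le_mul_of_nonneg_left h4 hQ0
    have h11 : T m ≤ Q * T m + (Q * B ^ 2 + K * Sa) := by linarith
    rw [le_div_iff₀ (by linarith : (0:ℝ) < 1 - Q)]
    have h12 : T m * (1 - Q) = T m - Q * T m := by ring
    linarith
  exact (_root_.summable_nat_add_iff N).mp
    (summable_of_sum_range_le (fun k => sq_nonneg _) hbdd)

private lemma sum_range_succ_eq_Icc (f : ℕ → ℂ) (N : ℕ) :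
    ∑ n ∈ Finset.range (N + 1), f n = f 0 + ∑ n ∈ Finset.Icc 1 N, f n := by
  induction N with
  | zero => simp
  | succ N ih =>
    rw [Finset.sum_range_succ, ih]
    have h : Finset.Icc 1 (N + 1) = insert (N + 1) (Finset.Icc 1 N) := by
      ext x
      simp only [Finset.mem_Icc, Finset.mem_insert]
      omega
    rw [h, Finset.sum_insert (by simp)]
    ring


private lemma dich_fwd {μ ν ε : ℝ≥0} {P S a : ℕ → ℝ≥0} {N : ℕ}
    (hμν : ν + ε + ε ≤ μ) (hε : 0 < ε) (hεμ : ε < μ)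
    (hP : ∀ n, N ≤ n → μ * P n ≤ P (n + 1) + a n * (P n ⊔ S n))
    (hS : ∀ n, N ≤ n → S (n + 1) ≤ ν * S n + a n * (P n ⊔ S n))
    (ha : ∀ n, N ≤ n → a n < ε)
    (hpos : ∀ n, N ≤ n → 0 < P n ⊔ S n)
    {n₁ : ℕ} (hn₁ : N ≤ n₁) (hstart : S n₁ ≤ P n₁) :
    ∀ n, n₁ ≤ n → (S n ≤ P n ∧ 0 < P n ∧
      S (n + 1) / P (n + 1) ≤ (ν * (S n / P n) + a n) / (μ - ε)) := by
  have hμε : 0 < μ - ε := tsub_pos_of_lt hεμ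
  have hνε : ν + ε ≤ μ - ε := by
    rw [le_tsub_iff_right hεμ.le]
    exact hμν
  -- one step of the invariant
  have hstep : ∀ n, N ≤ n → S n ≤ P n →
      (0 < P n ∧ (μ - ε) * P n ≤ P (n + 1) ∧ S (n + 1) ≤ (ν * (S n / P n) + a n) * P n) := by
    intro n hn hSP
    have hsup : P n ⊔ S n = P n := sup_eq_left.mpr hSP
    have hPpos : 0 < P n := by
      have := hpos n hn
      rwa [hsup] at this
    have hP' : (μ - ε) * P n ≤ P (n + 1) := by
      rw [tsub_mul, tsub_le_iff_right]
      calc μ * P n ≤ P (n + 1) + a n * (P n ⊔ S n) := hP n hn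
        _ ≤ P (n + 1) + ε * P n := by
            rw [hsup]
            exact add_le_add_right (mul_le_mul_of_nonneg_right (ha n hn).le zero_le) _
    have hS' : S (n + 1) ≤ (ν * (S n / P n) + a n) * P n := by
      have h1 : S n / P n * P n = S n := div_mul_cancel₀ _ hPpos.ne'
      calc S (n + 1) ≤ ν * S n + a n * (P n ⊔ S n) := hS n hn
        _ = ν * (S n / P n) * P n + a n * P n := by rw [hsup, mul_assoc, h1]
        _ = (ν * (S n / P n) + a n) * P n := by ring
    exact ⟨hPpos, hP', hS'⟩
  have hinv : ∀ n, n₁ ≤ n → S n ≤ P n := by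
    intro n hn
    induction n, hn using Nat.le_induction with
    | base => exact hstart
    | succ n hn ih =>
      obtain ⟨hPpos, hP', hS'⟩ := hstep n (hn₁.trans hn) ih
      have hr : S n / P n ≤ 1 := div_le_one_of_le₀ ih zero_le
      calc S (n + 1) ≤ (ν * (S n / P n) + a n) * P n := hS'
        _ ≤ (ν + ε) * P n := by
            apply mul_le_mul_of_nonneg_right _ zero_le
            exact add_le_add (by simpa using mul_le_mul_of_nonneg_left hr (zero_le (a := ν)))
              (ha n (hn₁.trans hn)).le
        _ ≤ (μ - ε) * P n := mul_le_mul_of_nonneg_right hνε zero_le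
        _ ≤ P (n + 1) := hP'
  intro n hn
  obtain ⟨hPpos, hP', hS'⟩ := hstep n (hn₁.trans hn) (hinv n hn)
  refine ⟨hinv n hn, hPpos, ?_⟩
  have hP1pos : 0 < P (n + 1) := lt_of_lt_of_le (mul_pos hμε hPpos) hP'
  rw [div_le_div_iff₀ hP1pos hμε]
  calc S (n + 1) * (μ - ε) ≤ ((ν * (S n / P n) + a n) * P n) * (μ - ε) :=
        mul_le_mul_of_nonneg_right hS' zero_le
    _ = (ν * (S n / P n) + a n) * ((μ - ε) * P n) := by ring
    _ ≤ (ν * (S n / P n) + a n) * P (n + 1) := mul_le_mul_of_nonneg_left hP' zero_le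

private lemma dich_bwd {μ ν : ℝ≥0} {P S a : ℕ → ℝ≥0} {N : ℕ}
    (hμ : 0 < μ)
    (hP : ∀ n, N ≤ n → μ * P n ≤ P (n + 1) + a n * (P n ⊔ S n))
    (hS : ∀ n, N ≤ n → S (n + 1) ≤ ν * S n + a n * (P n ⊔ S n))
    (hlt : ∀ n, N ≤ n → P n < S n) :
    ∀ n, N ≤ n → P n / S n ≤ 1 ∧
      P n / S n ≤ ν / μ * (P (n + 1) / S (n + 1)) + 2 / μ * a n := by
  intro n hn
  have hSpos : 0 < S n := lt_of_le_of_lt zero_le (hlt n hn)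
  have hS1pos : 0 < S (n + 1) := lt_of_le_of_lt zero_le (hlt (n + 1) (hn.trans (Nat.le_succ _)))
  have hsup : P n ⊔ S n = S n := sup_eq_right.mpr (hlt n hn).le
  have ht1 : P n / S n ≤ 1 := div_le_one_of_le₀ (hlt n hn).le zero_le
  have ht1' : P (n + 1) / S (n + 1) ≤ 1 :=
    div_le_one_of_le₀ (hlt (n + 1) (hn.trans (Nat.le_succ _))).le zero_le
  refine ⟨ht1, ?_⟩
  -- μ * P n ≤ (ν * t(n+1) + 2 * a n) * S n
  have hkey : μ * P n ≤ (ν * (P (n + 1) / S (n + 1)) + 2 * a n) * S n := by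
    have hPn1 : P (n + 1) = P (n + 1) / S (n + 1) * S (n + 1) :=
      (div_mul_cancel₀ _ hS1pos.ne').symm
    calc μ * P n ≤ P (n + 1) + a n * (P n ⊔ S n) := hP n hn
      _ = P (n + 1) / S (n + 1) * S (n + 1) + a n * S n := by rw [← hPn1, hsup]
      _ ≤ P (n + 1) / S (n + 1) * (ν * S n + a n * S n) + a n * S n := by
          apply add_le_add_left
          apply mul_le_mul_of_nonneg_left _ zero_le
          have := hS n hn
          rwa [hsup] at this
      _ ≤ (ν * (P (n + 1) / S (n + 1)) + 2 * a n) * S n := by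
          have h2 : P (n + 1) / S (n + 1) * (a n * S n) ≤ a n * S n := by
            simpa using mul_le_mul_of_nonneg_right ht1' (zero_le (a := a n * S n))
          calc P (n + 1) / S (n + 1) * (ν * S n + a n * S n) + a n * S n
              = ν * (P (n + 1) / S (n + 1)) * S n + (P (n + 1) / S (n + 1) * (a n * S n)
                  + a n * S n) := by ring
            _ ≤ ν * (P (n + 1) / S (n + 1)) * S n + (a n * S n + a n * S n) := by
                exact add_le_add_right (add_le_add_left h2 _) _
            _ = (ν * (P (n + 1) / S (n + 1)) + 2 * a n) * S n := by ring
  -- divide by μ and S n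
  rw [div_le_iff₀ hSpos]
  have h3 : (ν / μ * (P (n + 1) / S (n + 1)) + 2 / μ * a n) * S n
      = (ν * (P (n + 1) / S (n + 1)) + 2 * a n) * S n / μ := by
    field_simp
  rw [h3, le_div_iff₀ hμ]
  calc P n * μ = μ * P n := mul_comm _ _
    _ ≤ _ := hkey


private lemma coffman_nnreal {d : ℕ} (lam : Fin d → ℝ≥0)
    (hlam : ∀ i j : Fin d, i < j → lam j < lam i)
    (hlampos : ∀ i, 0 < lam i)
    (u : ℕ → Fin d → ℝ≥0) (a : ℕ → ℝ≥0)
    (hd : 0 < d)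
    (hu1 : ∀ n, 1 ≤ n → ∀ k, u (n + 1) k ≤ lam k * u n k + a n * Finset.univ.sup (u n))
    (hu2 : ∀ n, 1 ≤ n → ∀ k, lam k * u n k ≤ u (n + 1) k + a n * Finset.univ.sup (u n))
    (hU : ∀ n, 1 ≤ n → 0 < Finset.univ.sup (u n))
    (ha0 : Tendsto (fun n => (a n : ℝ)) atTop (𝓝 0))
    (ha2 : Summable (fun n => (a n : ℝ) ^ 2)) :
    ∃ j : Fin d, ∃ N : ℕ, 1 ≤ N ∧ ∃ R : ℕ → ℝ≥0,
      (∀ n, N ≤ n → 0 < u n j) ∧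
      (∀ n, N ≤ n → ∀ k, k ≠ j → u n k ≤ R n * u n j) ∧
      Tendsto (fun n => (R n : ℝ)) atTop (𝓝 0) ∧
      Summable (fun n => (R n : ℝ) ^ 2) := by
  classical
  haveI : Nonempty (Fin d) := Fin.pos_iff_nonempty.mp hd
  set U : ℕ → ℝ≥0 := fun n => Finset.univ.sup (u n) with hUdef
  set P : Fin d → ℕ → ℝ≥0 :=
    fun i n => Finset.univ.sup (fun k => if k ≤ i then u n k else 0) with hPdef
  set S : Fin d → ℕ → ℝ≥0 :=
    fun i n => Finset.univ.sup (fun k => if i < k then u n k else 0) with hSdef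
  set nu : Fin d → ℝ≥0 :=
    fun i => if h : (i : ℕ) + 1 < d then lam ⟨(i : ℕ) + 1, h⟩ else 0 with hnudef
  have huP : ∀ (i : Fin d) n (k : Fin d), k ≤ i → u n k ≤ P i n := by
    intro i n k hk
    calc u n k = if k ≤ i then u n k else 0 := by rw [if_pos hk]
      _ ≤ P i n := Finset.le_sup (f := fun k => if k ≤ i then u n k else 0) (Finset.mem_univ k)
  have huS : ∀ (i : Fin d) n (k : Fin d), i < k → u n k ≤ S i n := by
    intro i n k hk
    calc u n k = if i < k then u n k else 0 := by rw [if_pos hk]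
      _ ≤ S i n := Finset.le_sup (f := fun k => if i < k then u n k else 0) (Finset.mem_univ k)
  have huU : ∀ n (k : Fin d), u n k ≤ U n := fun n k => Finset.le_sup (Finset.mem_univ k)
  have hPU : ∀ i n, P i n ≤ U n := by
    intro i n
    apply Finset.sup_le
    intro k _
    split_ifs
    · exact huU n k
    · exact zero_le
  have hSU : ∀ i n, S i n ≤ U n := by
    intro i n
    apply Finset.sup_le
    intro k _
    split_ifs
    · exact huU n k
    · exact zero_le
  have hUPS : ∀ i n, U n = P i n ⊔ S i n := by
    intro i n
    apply le_antisymm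
    · apply Finset.sup_le
      intro k _
      rcases le_or_gt k i with h | h
      · exact le_sup_of_le_left (huP i n k h)
      · exact le_sup_of_le_right (huS i n k h)
    · exact sup_le (hPU i n) (hSU i n)
  have hnu_lt : ∀ i, nu i < lam i := by
    intro i
    rw [hnudef]
    dsimp only
    split_ifs with h
    · exact hlam i ⟨(i : ℕ) + 1, h⟩ (by simp [Fin.lt_def])
    · exact hlampos i
  have hlam_anti : ∀ i k : Fin d, i ≤ k → lam k ≤ lam i := by
    intro i k h
    rcases eq_or_lt_of_le h with h' | h'
    · rw [h']
    · exact (hlam i k h').le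
  have hPrec : ∀ (i : Fin d) n, 1 ≤ n → lam i * P i n ≤ P i (n + 1) + a n * (P i n ⊔ S i n) := by
    intro i n hn
    rw [← hUPS i n]
    obtain ⟨k₀, -, hk₀⟩ := Finset.exists_mem_eq_sup Finset.univ Finset.univ_nonempty
      (fun k => if k ≤ i then u n k else 0)
    have hPn : P i n = if k₀ ≤ i then u n k₀ else 0 := hk₀
    by_cases hki : k₀ ≤ i
    · rw [hPn, if_pos hki]
      calc lam i * u n k₀ ≤ lam k₀ * u n k₀ :=
            mul_le_mul_of_nonneg_right (hlam_anti k₀ i hki) zero_le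
        _ ≤ u (n + 1) k₀ + a n * U n := hu2 n hn k₀
        _ ≤ P i (n + 1) + a n * U n := add_le_add_left (huP i (n + 1) k₀ hki) _
    · rw [hPn, if_neg hki, mul_zero]
      exact zero_le
  have hSrec : ∀ (i : Fin d) n, 1 ≤ n → S i (n + 1) ≤ nu i * S i n + a n * (P i n ⊔ S i n) := by
    intro i n hn
    rw [← hUPS i n]
    apply Finset.sup_le
    intro k _
    split_ifs with hik
    · have h1 : (i : ℕ) + 1 < d := lt_of_le_of_lt (by exact_mod_cast hik) k.isLt
      have h2 : nu i = lam ⟨(i : ℕ) + 1, h1⟩ := by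
        rw [hnudef]
        dsimp only
        rw [dif_pos h1]
      have h3 : lam k ≤ nu i := by
        rw [h2]
        apply hlam_anti
        simp only [Fin.le_def]
        have := hik
        rw [Fin.lt_def] at this
        omega
      calc u (n + 1) k ≤ lam k * u n k + a n * U n := hu1 n hn k
        _ ≤ nu i * S i n + a n * U n :=
            add_le_add_left (mul_le_mul h3 (huS i n k hik) zero_le zero_le) _
    · exact zero_le
  -- the gap
  set gap : ℝ≥0 := Finset.univ.inf' Finset.univ_nonempty (fun i => lam i - nu i) with hgapdef
  have hgappos : 0 < gap := by
    rw [hgapdef, Finset.lt_inf'_iff]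
    exact fun i _ => tsub_pos_of_lt (hnu_lt i)
  set ε : ℝ≥0 := gap / 2 with hεdef
  have hεpos : 0 < ε := by
    rw [hεdef]
    exact div_pos hgappos (by norm_num)
  have hεgaplt : ε < gap := NNReal.half_lt_self hgappos.ne'
  have hgaple : ∀ i, gap + nu i ≤ lam i := by
    intro i
    have h1 : gap ≤ lam i - nu i := Finset.inf'_le _ (Finset.mem_univ i)
    rwa [le_tsub_iff_right (hnu_lt i).le] at h1
  have hεgap : ∀ i, nu i + ε + ε ≤ lam i := by
    intro i
    have : nu i + ε + ε = gap + nu i := by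
      rw [hεdef, add_assoc, add_halves, add_comm]
    rw [this]
    exact hgaple i
  have hεlam : ∀ i, ε < lam i := by
    intro i
    calc ε < gap := hεgaplt
      _ ≤ gap + nu i := le_add_of_nonneg_right zero_le
      _ ≤ lam i := hgaple i
  -- N₀
  obtain ⟨N₀', hN₀'⟩ := eventually_atTop.mp
    (ha0.eventually_lt_const (by exact_mod_cast hεpos : (0 : ℝ) < (ε : ℝ)))
  set N₀ := max N₀' 1 with hN₀def
  have hN₀1 : 1 ≤ N₀ := le_max_right _ _
  have haN₀ : ∀ n, N₀ ≤ n → a n < ε := by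
    intro n hn
    have := hN₀' n (le_trans (le_max_left _ _) hn)
    exact_mod_cast this
  -- good indices
  set G : Finset (Fin d) := Finset.univ.filter (fun i => ∃ n, N₀ ≤ n ∧ S i n ≤ P i n) with hGdef
  have hlastG : (⟨d - 1, by omega⟩ : Fin d) ∈ G := by
    rw [hGdef, Finset.mem_filter]
    refine ⟨Finset.mem_univ _, N₀, le_rfl, ?_⟩
    have hz : S ⟨d - 1, by omega⟩ N₀ = 0 := by
      rw [hSdef]
      dsimp only
      apply le_antisymm _ zero_le
      apply Finset.sup_le
      intro k _
      have hc : ¬ ((⟨d - 1, by omega⟩ : Fin d) < k) := by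
        rw [Fin.lt_def]
        have := k.isLt
        simp only [not_lt]
        omega
      rw [if_neg hc]
    rw [hz]
    exact zero_le
  have hGne : G.Nonempty := ⟨_, hlastG⟩
  set j := G.min' hGne with hjdef
  have hjG : j ∈ G := Finset.min'_mem _ _
  obtain ⟨n₁, hn₁N₀, hn₁SP⟩ : ∃ n, N₀ ≤ n ∧ S j n ≤ P j n := by
    have := hjG
    rw [hGdef, Finset.mem_filter] at this
    exact this.2
  have hnotgood : ∀ i : Fin d, i < j → ∀ n, N₀ ≤ n → P i n < S i n := by
    intro i hij n hn
    by_contra h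
    have hiG : i ∈ G := by
      rw [hGdef, Finset.mem_filter]
      exact ⟨Finset.mem_univ _, n, hn, not_lt.mp h⟩
    exact absurd (Finset.min'_le _ _ hiG) (not_le.mpr hij)
  have hPS_pos : ∀ (i : Fin d) n, N₀ ≤ n → 0 < P i n ⊔ S i n := by
    intro i n hn
    rw [← hUPS i n]
    exact hU n (hN₀1.trans hn)
  -- forward dichotomy at j
  have hfwd := dich_fwd (hεgap j) hεpos (hεlam j)
    (fun n hn => hPrec j n (hN₀1.trans hn)) (fun n hn => hSrec j n (hN₀1.trans hn))
    haN₀ (hPS_pos j) hn₁N₀ hn₁SP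
  set s : ℕ → ℝ≥0 := fun n => S j n / P j n with hsdef
  have hs_le1 : ∀ n, n₁ ≤ n → s n ≤ 1 := fun n hn =>
    div_le_one_of_le₀ (hfwd n hn).1 zero_le
  have hμεpos : (0 : ℝ≥0) < lam j - ε := tsub_pos_of_lt (hεlam j)
  have hνlt : nu j < lam j - ε := by
    have h1 : nu j + ε ≤ lam j - ε := by
      rw [le_tsub_iff_right (hεlam j).le]
      exact hεgap j
    calc nu j < nu j + ε := lt_add_of_pos_right _ hεpos
      _ ≤ lam j - ε := h1
  set qs : ℝ := (nu j : ℝ) / ((lam j - ε : ℝ≥0) : ℝ) with hqsdef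
  have hμεR : (0 : ℝ) < ((lam j - ε : ℝ≥0) : ℝ) := by exact_mod_cast hμεpos
  have hqs0 : 0 ≤ qs := by positivity
  have hqs1 : qs < 1 := by
    rw [hqsdef, div_lt_one hμεR]
    exact_mod_cast hνlt
  have hsrec : ∀ n, n₁ ≤ n →
      (s (n + 1) : ℝ) ≤ qs * (s n : ℝ) + ((lam j - ε : ℝ≥0) : ℝ)⁻¹ * (a n : ℝ) := by
    intro n hn
    have h2 : s (n + 1) ≤ nu j / (lam j - ε) * s n + (lam j - ε)⁻¹ * a n := by
      refine ((hfwd n hn).2.2).trans (le_of_eq ?_)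
      simp only [hsdef, div_eq_mul_inv, add_mul]
      ring
    exact_mod_cast h2
  have hs_t0 : Tendsto (fun n => (s n : ℝ)) atTop (𝓝 0) := by
    apply aux_fwd_tendsto hqs0 hqs1 zero_le_one (fun n _ => (s n).coe_nonneg)
      (fun n hn => by exact_mod_cast hs_le1 n hn) _ hsrec
    simpa using ha0.const_mul (((lam j - ε : ℝ≥0) : ℝ)⁻¹)
  have hs_sq : Summable (fun n => (s n : ℝ) ^ 2) := by
    apply aux_fwd_sq hqs0 hqs1 (fun n _ => (s n).coe_nonneg)
      (fun n => by positivity) _ hsrec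
    apply Summable.congr (ha2.mul_left ((((lam j - ε : ℝ≥0) : ℝ)⁻¹) ^ 2))
    intro n
    ring
  -- backward dichotomy below j
  obtain ⟨t, ht_bd, ht_le1, ht_t0, ht_sq⟩ :
      ∃ t : ℕ → ℝ≥0, (∀ n, N₀ ≤ n → ∀ k : Fin d, k < j → u n k ≤ t n * (u n j ⊔ S j n)) ∧
        (∀ n, N₀ ≤ n → t n ≤ 1) ∧ Tendsto (fun n => (t n : ℝ)) atTop (𝓝 0) ∧
        Summable (fun n => (t n : ℝ) ^ 2) := by
    by_cases hj0 : (j : ℕ) = 0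
    · refine ⟨fun _ => 0, ?_, ?_, ?_, ?_⟩
      · intro n hn k hk
        rw [Fin.lt_def, hj0] at hk
        omega
      · intro n hn
        exact zero_le
      · simpa using (tendsto_const_nhds : Tendsto (fun _ : ℕ => (0 : ℝ)) atTop (𝓝 0))
      · simpa using (summable_zero : Summable (fun _ : ℕ => (0 : ℝ)))
    · set j' : Fin d := ⟨(j : ℕ) - 1, by omega⟩ with hj'def
      have hj'j : j' < j := by
        rw [Fin.lt_def]
        simp only [hj'def]
        omega
      have hj'1 : (j' : ℕ) + 1 < d := by
        simp only [hj'def]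
        have := j.isLt
        omega
      have hnuj' : nu j' = lam j := by
        rw [hnudef]
        dsimp only
        rw [dif_pos hj'1]
        congr 1
        rw [Fin.ext_iff]
        simp only [hj'def]
        omega
      have hltj' : ∀ n, N₀ ≤ n → P j' n < S j' n := hnotgood j' hj'j
      have hbwd := dich_bwd (hlampos j') (fun n hn => hPrec j' n (hN₀1.trans hn))
        (fun n hn => hSrec j' n (hN₀1.trans hn)) hltj'
      have hSj'pos : ∀ n, N₀ ≤ n → 0 < S j' n :=
        fun n hn => lt_of_le_of_lt zero_le (hltj' n hn)
      set qt : ℝ := (nu j' : ℝ) / (lam j' : ℝ) with hqtdef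
      have hlamj'R : (0 : ℝ) < (lam j' : ℝ) := by exact_mod_cast hlampos j'
      have hqt0 : 0 ≤ qt := by positivity
      have hqt1 : qt < 1 := by
        rw [hqtdef, div_lt_one hlamj'R]
        have : nu j' < lam j' := hnu_lt j'
        exact_mod_cast this
      have htrec : ∀ n, N₀ ≤ n →
          ((P j' n / S j' n : ℝ≥0) : ℝ) ≤ qt * ((P j' (n + 1) / S j' (n + 1) : ℝ≥0) : ℝ)
            + (2 / (lam j' : ℝ)) * (a n : ℝ) := by
        intro n hn
        exact_mod_cast (hbwd n hn).2
      refine ⟨fun n => P j' n / S j' n, ?_, fun n hn => (hbwd n hn).1, ?_, ?_⟩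
      · intro n hn k hk
        have hkj' : k ≤ j' := by
          rw [Fin.le_def]
          rw [Fin.lt_def] at hk
          simp only [hj'def]
          omega
        have h2 : P j' n = P j' n / S j' n * S j' n :=
          (div_mul_cancel₀ _ (hSj'pos n hn).ne').symm
        have h3 : S j' n ≤ u n j ⊔ S j n := by
          rw [hSdef]
          dsimp only
          apply Finset.sup_le
          intro k' _
          split_ifs with h4
          · have hjk' : j ≤ k' := by
              rw [Fin.le_def]
              rw [Fin.lt_def] at h4
              simp only [hj'def] at h4
              omega
            rcases eq_or_lt_of_le hjk' with h5 | h5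
            · subst h5
              exact le_sup_left
            · exact le_sup_of_le_right (huS j n k' h5)
          · exact zero_le
        calc u n k ≤ P j' n := huP j' n k hkj'
          _ = P j' n / S j' n * S j' n := h2
          _ ≤ P j' n / S j' n * (u n j ⊔ S j n) := mul_le_mul_of_nonneg_left h3 zero_le
      · apply aux_bwd_tendsto hqt0 hqt1 zero_le_one
          (fun n _ => NNReal.coe_nonneg _)
          (fun n hn => by exact_mod_cast (hbwd n hn).1) _ htrec
        simpa using ha0.const_mul (2 / (lam j' : ℝ))
      · apply aux_bwd_sq hqt0 hqt1 zero_le_one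
          (fun n _ => NNReal.coe_nonneg _)
          (fun n hn => by exact_mod_cast (hbwd n hn).1)
          (fun n => by positivity) _ htrec
        apply Summable.congr (ha2.mul_left ((2 / (lam j' : ℝ)) ^ 2))
        intro n
        ring
  -- choose N₂
  have hev : ∀ᶠ n in atTop, (s n : ℝ) < 1 / 2 ∧ (t n : ℝ) < 1 / 2 :=
    (hs_t0.eventually_lt_const (by norm_num)).and (ht_t0.eventually_lt_const (by norm_num))
  obtain ⟨N₂', hN₂'⟩ := eventually_atTop.mp hev
  set N₂ := max N₂' (max n₁ N₀) with hN₂def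
  have hN₂n₁ : n₁ ≤ N₂ := le_trans (le_max_left _ _) (le_max_right _ _)
  have hN₂N₀ : N₀ ≤ N₂ := le_trans (le_max_right _ _) (le_max_right _ _)
  have hN₂1 : 1 ≤ N₂ := hN₀1.trans hN₂N₀
  have hs_half : ∀ n, N₂ ≤ n → (s n : ℝ) ≤ 1 / 2 :=
    fun n hn => (hN₂' n (le_trans (le_max_left _ _) hn)).1.le
  have ht_half : ∀ n, N₂ ≤ n → (t n : ℝ) ≤ 1 / 2 :=
    fun n hn => (hN₂' n (le_trans (le_max_left _ _) hn)).2.le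
  -- the key estimate
  have hkey : ∀ n, N₂ ≤ n → (0 < u n j ∧ ∀ k, k ≠ j → u n k ≤ (s n ⊔ t n) * u n j) := by
    intro n hn
    have hn₁n : n₁ ≤ n := hN₂n₁.trans hn
    have hnN₀ : N₀ ≤ n := hN₂N₀.trans hn
    have hPpos : 0 < P j n := (hfwd n hn₁n).2.1
    have hSeq : S j n = s n * P j n := by
      rw [hsdef]
      exact (div_mul_cancel₀ _ hPpos.ne').symm
    have hPle : P j n ≤ u n j ⊔ t n * (u n j ⊔ S j n) := by
      rw [hPdef]
      dsimp only
      apply Finset.sup_le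
      intro k _
      split_ifs with h4
      · rcases eq_or_lt_of_le h4 with h5 | h5
        · rw [h5]
          exact le_sup_left
        · exact le_sup_of_le_right (ht_bd n hnN₀ k h5)
      · exact zero_le
    -- case analysis
    by_cases hvS : S j n ≤ u n j
    · -- main case
      have hsup1 : u n j ⊔ S j n = u n j := sup_eq_left.mpr hvS
      have htv : t n * (u n j ⊔ S j n) ≤ u n j := by
        rw [hsup1]
        calc t n * u n j ≤ 1 * u n j := mul_le_mul_of_nonneg_right
              (by exact_mod_cast (ht_half n hn).trans (by norm_num)) zero_le
          _ = u n j := one_mul _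
      have hPv : P j n ≤ u n j := by
        calc P j n ≤ u n j ⊔ t n * (u n j ⊔ S j n) := hPle
          _ ≤ u n j := sup_le le_rfl htv
      have hvpos : 0 < u n j := lt_of_lt_of_le hPpos hPv
      refine ⟨hvpos, ?_⟩
      intro k hk
      rcases hk.lt_or_gt with h | h
      · -- k < j
        calc u n k ≤ t n * (u n j ⊔ S j n) := ht_bd n hnN₀ k h
          _ = t n * u n j := by rw [hsup1]
          _ ≤ (s n ⊔ t n) * u n j := mul_le_mul_of_nonneg_right le_sup_right zero_le
      · -- j < k
        calc u n k ≤ S j n := huS j n k h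
          _ = s n * P j n := hSeq
          _ ≤ s n * u n j := mul_le_mul_of_nonneg_left hPv zero_le
          _ ≤ (s n ⊔ t n) * u n j := mul_le_mul_of_nonneg_right le_sup_left zero_le
    · -- contradiction case
      exfalso
      have hvS' : u n j < S j n := not_le.mp hvS
      have hsup2 : u n j ⊔ S j n = S j n := sup_eq_right.mpr hvS'.le
      have h6 : t n * (u n j ⊔ S j n) ≤ S j n := by
        rw [hsup2]
        calc t n * S j n ≤ 1 * S j n := mul_le_mul_of_nonneg_right
              (by exact_mod_cast (ht_half n hn).trans (by norm_num)) zero_le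
          _ = S j n := one_mul _
      have h7 : P j n ≤ S j n := hPle.trans (sup_le hvS'.le h6)
      have h8 : S j n ≤ s n * S j n := by
        calc S j n = s n * P j n := hSeq
          _ ≤ s n * S j n := mul_le_mul_of_nonneg_left h7 zero_le
      have h9 : (S j n : ℝ) ≤ 1 / 2 * (S j n : ℝ) := by
        have := NNReal.coe_le_coe.mpr h8
        rw [NNReal.coe_mul] at this
        calc (S j n : ℝ) ≤ (s n : ℝ) * (S j n : ℝ) := this
          _ ≤ 1 / 2 * (S j n : ℝ) :=
              mul_le_mul_of_nonneg_right (hs_half n hn) (NNReal.coe_nonneg _)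
      have h10 : (0 : ℝ) < (S j n : ℝ) := by
        have := lt_of_le_of_lt (zero_le (a := u n j)) hvS'
        exact_mod_cast this
      linarith
  refine ⟨j, N₂, hN₂1, fun n => s n ⊔ t n, fun n hn => (hkey n hn).1,
    fun n hn k hk => (hkey n hn).2 k hk, ?_, ?_⟩
  · have heq : (fun n => ((s n ⊔ t n : ℝ≥0) : ℝ)) = fun n => max (s n : ℝ) (t n : ℝ) := by
      funext n
      exact NNReal.coe_max _ _
    rw [heq]
    simpa using hs_t0.max ht_t0
  · apply Summable.of_nonneg_of_le (fun n => sq_nonneg _) _ (hs_sq.add ht_sq)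
    intro n
    have h1 : ((s n ⊔ t n : ℝ≥0) : ℝ) = max (s n : ℝ) (t n : ℝ) := NNReal.coe_max _ _
    rw [h1]
    rcases le_total (s n : ℝ) (t n : ℝ) with h | h
    · rw [max_eq_right h]
      nlinarith [sq_nonneg (s n : ℝ)]
    · rw [max_eq_left h]
      nlinarith [sq_nonneg (t n : ℝ)]

end CoffmanAux

open NNReal in
/-- **Corollary of Coffman's theorem.** Let `Λ = diag(λ_1, …, λ_d)` with
`|λ_1| > … > |λ_d| > 0` and let `{A_n}` be matrices with `Σ ‖A_n‖² < ∞` (stated via the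
entrywise square sum, equivalent to any fixed matrix norm), `Λ + A_n` invertible, and the
partial sums `Σ_{n=1}^N (A_n)_{j,j}` convergent for each `j`. Then every nonzero solution
of `y_{n+1} = (Λ + A_n) y_n` admits an index `j` and `c_j ≠ 0` with `y_{n,j}/λ_j^n → c_j`
and `y_{n,k}/λ_j^n → 0` for `k ≠ j`. -/
theorem coffman_corollary {d : ℕ}
    (l : Fin d → ℂ)
    (hmono : ∀ i j : Fin d, i < j → ‖l j‖ < ‖l i‖)
    (hpos : ∀ i : Fin d, 0 < ‖l i‖)
    (A : ℕ → Matrix (Fin d) (Fin d) ℂ)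
    (hA2 : Summable fun n : ℕ => ∑ i : Fin d, ∑ j : Fin d, ‖A n i j‖ ^ 2)
    (hinv : ∀ n, 1 ≤ n → IsUnit (Matrix.diagonal l + A n))
    (hdiag : ∀ j : Fin d, ∃ L : ℂ,
      Tendsto (fun N => ∑ n ∈ Finset.Icc 1 N, A n j j) atTop (𝓝 L))
    (y : ℕ → Fin d → ℂ) (hy1 : y 1 ≠ 0)
    (hrec : ∀ n, 1 ≤ n → y (n + 1) = (Matrix.diagonal l + A n).mulVec (y n)) :
    ∃ j : Fin d, ∃ c : ℂ, c ≠ 0 ∧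
      Tendsto (fun n => y n j / l j ^ n) atTop (𝓝 c) ∧
      (∀ k : Fin d, k ≠ j → Tendsto (fun n => y n k / l j ^ n) atTop (𝓝 0)) := by
  classical
  have hd : 0 < d := by
    by_contra h
    push_neg at h
    have hd0 : d = 0 := by omega
    subst hd0
    exact hy1 (funext fun k => k.elim0)
  set lam : Fin d → ℝ≥0 := fun k => ‖l k‖₊ with hlamdef
  set u : ℕ → Fin d → ℝ≥0 := fun n k => ‖y n k‖₊ with hudef
  set a : ℕ → ℝ≥0 := fun n => ∑ i : Fin d, ∑ k : Fin d, ‖A n i k‖₊ with hadef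
  have hlam' : ∀ i j : Fin d, i < j → lam j < lam i := by
    intro i j h
    have := hmono i j h
    rw [← coe_nnnorm, ← coe_nnnorm] at this
    exact_mod_cast this
  have hlampos : ∀ i, 0 < lam i := by
    intro i
    have := hpos i
    rw [← coe_nnnorm] at this
    exact_mod_cast this
  -- solutions stay nonzero
  have hy_ne : ∀ n, 1 ≤ n → y n ≠ 0 := by
    intro n hn
    induction n, hn using Nat.le_induction with
    | base => exact hy1
    | succ n hn ih =>
      rw [hrec n hn]
      intro h0
      apply ih
      obtain ⟨Mu, hMu⟩ := hinv n hn
      rw [← hMu] at h0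
      have h1 : ((Mu⁻¹ : _) : Matrix (Fin d) (Fin d) ℂ).mulVec
          (((Mu : _) : Matrix (Fin d) (Fin d) ℂ).mulVec (y n)) = y n := by
        rw [Matrix.mulVec_mulVec, Units.inv_mul, Matrix.one_mulVec]
      rw [h0, Matrix.mulVec_zero] at h1
      exact h1.symm
  have hU : ∀ n, 1 ≤ n → 0 < Finset.univ.sup (u n) := by
    intro n hn
    obtain ⟨k, hk⟩ := Function.ne_iff.mp (hy_ne n hn)
    have hk' : y n k ≠ 0 := by simpa using hk
    calc (0 : ℝ≥0) < ‖y n k‖₊ := by rwa [nnnorm_pos]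
      _ ≤ _ := Finset.le_sup (f := u n) (Finset.mem_univ k)
  -- coordinate expansion of the recursion
  have hyk : ∀ n, 1 ≤ n → ∀ k, y (n + 1) k = l k * y n k + ∑ m : Fin d, A n k m * y n m := by
    intro n hn k
    rw [hrec n hn, Matrix.add_mulVec, Pi.add_apply, Matrix.mulVec_diagonal]
    congr 1
  have hrow : ∀ n (k : Fin d), (∑ m : Fin d, ‖A n k m‖₊) ≤ a n :=
    fun n k => Finset.single_le_sum (f := fun i => ∑ m : Fin d, ‖A n i m‖₊)
      (fun i _ => zero_le) (Finset.mem_univ k)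
  have hE : ∀ n (k : Fin d), ‖∑ m : Fin d, A n k m * y n m‖₊ ≤ a n * Finset.univ.sup (u n) := by
    intro n k
    calc ‖∑ m : Fin d, A n k m * y n m‖₊ ≤ ∑ m : Fin d, ‖A n k m * y n m‖₊ :=
          nnnorm_sum_le _ _
      _ = ∑ m : Fin d, ‖A n k m‖₊ * ‖y n m‖₊ := by simp [nnnorm_mul]
      _ ≤ ∑ m : Fin d, ‖A n k m‖₊ * Finset.univ.sup (u n) := by
          apply Finset.sum_le_sum
          intro m _
          exact mul_le_mul_of_nonneg_left (Finset.le_sup (f := u n) (Finset.mem_univ m))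
            zero_le
      _ = (∑ m : Fin d, ‖A n k m‖₊) * Finset.univ.sup (u n) := by rw [Finset.sum_mul]
      _ ≤ a n * Finset.univ.sup (u n) :=
          mul_le_mul_of_nonneg_right (hrow n k) zero_le
  have hu1 : ∀ n, 1 ≤ n → ∀ k, u (n + 1) k ≤ lam k * u n k + a n * Finset.univ.sup (u n) := by
    intro n hn k
    have h1 : u (n + 1) k = ‖l k * y n k + ∑ m : Fin d, A n k m * y n m‖₊ := by
      rw [hudef]
      dsimp only
      rw [hyk n hn k]
    rw [h1]
    calc ‖l k * y n k + ∑ m : Fin d, A n k m * y n m‖₊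
        ≤ ‖l k * y n k‖₊ + ‖∑ m : Fin d, A n k m * y n m‖₊ := nnnorm_add_le _ _
      _ ≤ lam k * u n k + a n * Finset.univ.sup (u n) := by
          rw [nnnorm_mul]
          exact add_le_add_right (hE n k) _
  have hu2 : ∀ n, 1 ≤ n → ∀ k, lam k * u n k ≤ u (n + 1) k + a n * Finset.univ.sup (u n) := by
    intro n hn k
    have h1 : l k * y n k = y (n + 1) k - ∑ m : Fin d, A n k m * y n m := by
      rw [hyk n hn k]
      ring
    have h2 : lam k * u n k = ‖l k * y n k‖₊ := by
      rw [hudef, hlamdef]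
      dsimp only
      rw [nnnorm_mul]
    rw [h2, h1]
    calc ‖y (n + 1) k - ∑ m : Fin d, A n k m * y n m‖₊
        ≤ ‖y (n + 1) k‖₊ + ‖∑ m : Fin d, A n k m * y n m‖₊ := nnnorm_sub_le _ _
      _ ≤ u (n + 1) k + a n * Finset.univ.sup (u n) := add_le_add_right (hE n k) _
  -- summability of a²
  have ha2R : Summable (fun n => ((a n : ℝ)) ^ 2) := by
    have hterm : ∀ n, ((a n : ℝ)) ^ 2 ≤ (d * d : ℝ) * ∑ i : Fin d, ∑ k : Fin d, ‖A n i k‖ ^ 2 := by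
      intro n
      have hcoe : (a n : ℝ) = ∑ i : Fin d, ∑ k : Fin d, ‖A n i k‖ := by
        rw [hadef]
        push_cast
        rfl
      rw [hcoe]
      have h1 : (∑ i : Fin d, ∑ k : Fin d, ‖A n i k‖) ^ 2
          ≤ ((Finset.univ : Finset (Fin d)).card : ℝ) * ∑ i : Fin d, (∑ k : Fin d, ‖A n i k‖) ^ 2 :=
        sq_sum_le_card_mul_sum_sq
      have h2 : ∑ i : Fin d, (∑ k : Fin d, ‖A n i k‖) ^ 2
          ≤ ∑ i : Fin d, ((Finset.univ : Finset (Fin d)).card : ℝ) * ∑ k : Fin d, ‖A n i k‖ ^ 2 :=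
        Finset.sum_le_sum fun i _ => sq_sum_le_card_mul_sum_sq
      have h3 : ((Finset.univ : Finset (Fin d)).card : ℝ) = d := by simp
      rw [h3] at h1 h2
      calc (∑ i : Fin d, ∑ k : Fin d, ‖A n i k‖) ^ 2
          ≤ (d : ℝ) * ∑ i : Fin d, (∑ k : Fin d, ‖A n i k‖) ^ 2 := h1
        _ ≤ (d : ℝ) * ∑ i : Fin d, (d : ℝ) * ∑ k : Fin d, ‖A n i k‖ ^ 2 := by
            apply mul_le_mul_of_nonneg_left h2 (by positivity)
        _ = (d * d : ℝ) * ∑ i : Fin d, ∑ k : Fin d, ‖A n i k‖ ^ 2 := by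
            rw [← Finset.mul_sum]
            ring
    exact Summable.of_nonneg_of_le (fun n => sq_nonneg _) hterm (hA2.mul_left _)
  have ha0' : Tendsto (fun n => (a n : ℝ)) atTop (𝓝 0) := by
    have h2 := ha2R.tendsto_atTop_zero
    have h3 := h2.sqrt
    rw [Real.sqrt_zero] at h3
    refine h3.congr fun n => ?_
    rw [Real.sqrt_sq (NNReal.coe_nonneg _)]
  obtain ⟨j, N, hN1, R, hupos, hRbd, hRt, hRsq⟩ :=
    coffman_nnreal lam hlam' hlampos u a hd hu1 hu2 hU ha0' ha2R
  -- the scalar endgame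
  have hlj : l j ≠ 0 := by
    intro h
    have := hpos j
    rw [h] at this
    simp at this
  have hyj : ∀ n, N ≤ n → y n j ≠ 0 := by
    intro n hn
    have h1 := hupos n hn
    rw [hudef] at h1
    exact nnnorm_pos.mp h1
  set e : ℕ → ℂ := fun n => ∑ k ∈ Finset.univ.erase j, A n j k * y n k with hedef
  set w : ℕ → ℂ := fun n => (A n j j + e n / y n j) / l j with hwdef
  have hyj_rec : ∀ n, N ≤ n → y (n + 1) j = l j * (1 + w n) * y n j := by
    intro n hn
    have h1 : 1 ≤ n := hN1.trans hn
    have h3 : ∑ m : Fin d, A n j m * y n m = A n j j * y n j + e n := by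
      rw [hedef]
      exact (Finset.add_sum_erase _ _ (Finset.mem_univ j)).symm
    rw [hyk n h1 j, h3, hwdef]
    field_simp [hyj n hn]
  have he_bd : ∀ n, N ≤ n → ‖e n‖₊ ≤ a n * R n * u n j := by
    intro n hn
    rw [hedef]
    calc ‖∑ k ∈ Finset.univ.erase j, A n j k * y n k‖₊
        ≤ ∑ k ∈ Finset.univ.erase j, ‖A n j k * y n k‖₊ := nnnorm_sum_le _ _
      _ = ∑ k ∈ Finset.univ.erase j, ‖A n j k‖₊ * ‖y n k‖₊ := by simp [nnnorm_mul]
      _ ≤ ∑ k ∈ Finset.univ.erase j, ‖A n j k‖₊ * (R n * u n j) := by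
          apply Finset.sum_le_sum
          intro k hk
          exact mul_le_mul_of_nonneg_left (hRbd n hn k (Finset.ne_of_mem_erase hk)) zero_le
      _ = (∑ k ∈ Finset.univ.erase j, ‖A n j k‖₊) * (R n * u n j) := by rw [Finset.sum_mul]
      _ ≤ a n * (R n * u n j) := by
          apply mul_le_mul_of_nonneg_right _ zero_le
          calc ∑ k ∈ Finset.univ.erase j, ‖A n j k‖₊
              ≤ ∑ k : Fin d, ‖A n j k‖₊ :=
                Finset.sum_le_sum_of_subset (Finset.erase_subset _ _)
            _ ≤ a n := hrow n j
      _ = a n * R n * u n j := (mul_assoc _ _ _).symm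
  have hey : ∀ n, N ≤ n → ‖e n / y n j‖ ≤ (a n : ℝ) * R n := by
    intro n hn
    have hy0 : 0 < ‖y n j‖ := norm_pos_iff.mpr (hyj n hn)
    have h1 : ‖e n‖ ≤ (a n : ℝ) * R n * ‖y n j‖ := by
      have := he_bd n hn
      have h2 : (‖e n‖₊ : ℝ) ≤ ((a n * R n * u n j : ℝ≥0) : ℝ) := NNReal.coe_le_coe.mpr this
      rw [coe_nnnorm] at h2
      push_cast at h2
      convert h2 using 2
      simp [hudef]
    rw [norm_div, div_le_iff₀ hy0]
    exact h1
  have hw_bd : ∀ n, N ≤ n → ‖w n‖ ≤ (‖A n j j‖ + (a n : ℝ) * R n) / ‖l j‖ := by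
    intro n hn
    rw [hwdef]
    dsimp only
    rw [norm_div]
    gcongr
    calc ‖A n j j + e n / y n j‖ ≤ ‖A n j j‖ + ‖e n / y n j‖ := norm_add_le _ _
      _ ≤ ‖A n j j‖ + (a n : ℝ) * R n := add_le_add_right (hey n hn) _
  -- summability facts
  have hAjj_sq : Summable (fun n => ‖A n j j‖ ^ 2) := by
    apply Summable.of_nonneg_of_le (fun n => sq_nonneg _) _ hA2
    intro n
    calc ‖A n j j‖ ^ 2 ≤ ∑ k : Fin d, ‖A n j k‖ ^ 2 :=
          Finset.single_le_sum (f := fun k => ‖A n j k‖ ^ 2) (fun k _ => sq_nonneg _)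
            (Finset.mem_univ j)
      _ ≤ ∑ i : Fin d, ∑ k : Fin d, ‖A n i k‖ ^ 2 :=
          Finset.single_le_sum (f := fun i => ∑ k : Fin d, ‖A n i k‖ ^ 2)
            (fun i _ => Finset.sum_nonneg fun k _ => sq_nonneg _) (Finset.mem_univ j)
  have hAjj_0 : Tendsto (fun n => ‖A n j j‖) atTop (𝓝 0) := by
    have h2 := hAjj_sq.tendsto_atTop_zero
    have h3 := h2.sqrt
    rw [Real.sqrt_zero] at h3
    refine h3.congr fun n => ?_
    rw [Real.sqrt_sq (norm_nonneg _)]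
  have haR : Summable (fun n => (a n : ℝ) * R n) := by
    apply Summable.of_nonneg_of_le (fun n => by positivity) _ ((ha2R.add hRsq).div_const 2)
    intro n
    have := sq_nonneg ((a n : ℝ) - R n)
    have h0 : (0:ℝ) ≤ (a n : ℝ) := NNReal.coe_nonneg _
    have h1 : (0:ℝ) ≤ (R n : ℝ) := NNReal.coe_nonneg _
    nlinarith
  have hw0 : Tendsto w atTop (𝓝 0) := by
    apply squeeze_zero_norm' (Filter.eventually_atTop.mpr ⟨N, hw_bd⟩)
    have := (hAjj_0.add haR.tendsto_atTop_zero).div_const ‖l j‖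
    simpa using this
  -- N₂ with ‖w‖ ≤ 1/2 beyond
  obtain ⟨N₂', hN₂'⟩ := Filter.eventually_atTop.mp
    ((show Tendsto (fun n => ‖w n‖) atTop (𝓝 0) by simpa using hw0.norm).eventually_lt_const
      (show (0:ℝ) < 1/2 by norm_num))
  set N₂ := max N₂' N with hN₂def
  have hN₂N : N ≤ N₂ := le_max_right _ _
  have hwhalf : ∀ n, N₂ ≤ n → ‖w n‖ ≤ 1 / 2 := by
    intro n hn
    have := hN₂' n (le_trans (le_max_left _ _) hn)
    simpa using this.le
  have hg_ne : ∀ n, N₂ ≤ n → 1 + w n ≠ 0 := by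
    intro n hn h0
    have h1 : w n = -1 := by
      have h2 := eq_neg_of_add_eq_zero_right h0
      simpa using h2
    have h2 := hwhalf n hn
    rw [h1, norm_neg, norm_one] at h2
    linarith
  have haR1 : Summable (fun n => ((a n : ℝ) * R n) ^ 2) := by
    apply Summable.of_norm_bounded_eventually haR
    rw [Nat.cofinite_eq_atTop]
    filter_upwards [haR.tendsto_atTop_zero.eventually_lt_const (show (0:ℝ) < 1 by norm_num)]
      with n hn
    have h0 : (0:ℝ) ≤ (a n : ℝ) * R n := by positivity
    rw [Real.norm_eq_abs, abs_of_nonneg (by positivity)]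
    nlinarith
  have hw_sq : Summable (fun n => ‖w n‖ ^ 2) := by
    apply Summable.of_norm_bounded_eventually
      (g := fun n => (2 * ‖A n j j‖ ^ 2 + 2 * ((a n : ℝ) * R n) ^ 2) / ‖l j‖ ^ 2)
      (((hAjj_sq.mul_left 2).add (haR1.mul_left 2)).div_const _)
    rw [Nat.cofinite_eq_atTop]
    filter_upwards [Filter.eventually_ge_atTop N] with n hn
    have h1 := hw_bd n hn
    have hc : (0:ℝ) < ‖l j‖ := hpos j
    have h2 : ‖w n‖ ^ 2 ≤ ((‖A n j j‖ + (a n : ℝ) * R n) / ‖l j‖) ^ 2 :=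
      pow_le_pow_left₀ (norm_nonneg _) h1 2
    rw [div_pow] at h2
    rw [Real.norm_eq_abs, abs_of_nonneg (sq_nonneg _)]
    refine h2.trans ?_
    gcongr
    nlinarith [sq_nonneg (‖A n j j‖ - (a n : ℝ) * (R n : ℝ))]
  set dd : ℕ → ℂ := fun n => e n / y n j / l j with hdddef
  have hdd_sum : Summable dd := by
    apply Summable.of_norm_bounded_eventually (g := fun n => ((a n : ℝ) * R n) / ‖l j‖)
      (haR.div_const _)
    rw [Nat.cofinite_eq_atTop]
    filter_upwards [Filter.eventually_ge_atTop N] with n hn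
    simp only [hdddef]
    rw [norm_div]
    gcongr
    exact hey n hn
  obtain ⟨L, hL⟩ := hdiag j
  have hdiagR : Tendsto (fun m => ∑ n ∈ Finset.range m, A n j j) atTop (𝓝 (A 0 j j + L)) := by
    have h2 : Tendsto (fun m => ∑ n ∈ Finset.range (m + 1), A n j j) atTop (𝓝 (A 0 j j + L)) := by
      have h3 : (fun m => ∑ n ∈ Finset.range (m + 1), A n j j)
          = fun m => A 0 j j + ∑ n ∈ Finset.Icc 1 m, A n j j :=
        funext fun m => sum_range_succ_eq_Icc _ m
      rw [h3]
      exact hL.const_add _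
    exact (tendsto_add_atTop_iff_nat 1).mp h2
  have hweq : ∀ n, w n = A n j j / l j + dd n := by
    intro n
    simp only [hwdef, hdddef]
    rw [add_div]
  set W := (A 0 j j + L) / l j + ∑' n, dd n with hWdef
  have hSw : Tendsto (fun m => ∑ n ∈ Finset.range m, w n) atTop (𝓝 W) := by
    have h1 : (fun m => ∑ n ∈ Finset.range m, w n)
        = fun m => (∑ n ∈ Finset.range m, A n j j) / l j + ∑ n ∈ Finset.range m, dd n := by
      funext m
      rw [Finset.sum_div, ← Finset.sum_add_distrib]
      exact Finset.sum_congr rfl fun n _ => hweq n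
    rw [h1, hWdef]
    exact (hdiagR.div_const _).add hdd_sum.hasSum.tendsto_sum_nat
  have hlogsub : ∀ n, N₂ ≤ n → ‖Complex.log (1 + w n) - w n‖ ≤ ‖w n‖ ^ 2 := by
    intro n hn
    have h1 : ‖w n‖ < 1 := lt_of_le_of_lt (hwhalf n hn) (by norm_num)
    have h2 := Complex.norm_log_one_add_sub_self_le h1
    have h3 : (1 - ‖w n‖)⁻¹ ≤ 2 := by
      have h4 : (1:ℝ) / 2 ≤ 1 - ‖w n‖ := by linarith [hwhalf n hn]
      calc (1 - ‖w n‖)⁻¹ ≤ ((1:ℝ) / 2)⁻¹ := by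
            apply inv_anti₀ (by norm_num) h4
        _ = 2 := by norm_num
    calc ‖Complex.log (1 + w n) - w n‖ ≤ ‖w n‖ ^ 2 * (1 - ‖w n‖)⁻¹ / 2 := h2
      _ ≤ ‖w n‖ ^ 2 := by nlinarith [sq_nonneg ‖w n‖]
  have hh_sum : Summable (fun n => Complex.log (1 + w n) - w n) := by
    apply Summable.of_norm_bounded_eventually hw_sq
    rw [Nat.cofinite_eq_atTop]
    filter_upwards [Filter.eventually_ge_atTop N₂] with n hn
    exact hlogsub n hn
  set Lam := (∑' n, (Complex.log (1 + w n) - w n)) + W with hLamdef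
  have hSlog : Tendsto (fun m => ∑ n ∈ Finset.range m, Complex.log (1 + w n)) atTop (𝓝 Lam) := by
    have h1 : (fun m => ∑ n ∈ Finset.range m, Complex.log (1 + w n))
        = fun m => (∑ n ∈ Finset.range m, (Complex.log (1 + w n) - w n))
            + ∑ n ∈ Finset.range m, w n := by
      funext m
      rw [← Finset.sum_add_distrib]
      exact Finset.sum_congr rfl fun n _ => by ring
    rw [h1, hLamdef]
    exact hh_sum.hasSum.tendsto_sum_nat.add hSw
  set C := ∑ n ∈ Finset.range N₂, Complex.log (1 + w n) with hCdef
  set z₀ := y N₂ j / l j ^ N₂ with hz₀def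
  have hz₀ : z₀ ≠ 0 := div_ne_zero (hyj N₂ hN₂N) (pow_ne_zero _ hlj)
  have hzc : ∀ m, N₂ ≤ m →
      y m j / l j ^ m
        = z₀ * Complex.exp ((∑ n ∈ Finset.range m, Complex.log (1 + w n)) - C) := by
    intro m hm
    induction m, hm using Nat.le_induction with
    | base =>
      rw [sub_self, Complex.exp_zero, mul_one]
    | succ m hm ih =>
      have h2 : y (m + 1) j / l j ^ (m + 1) = (y m j / l j ^ m) * (1 + w m) := by
        rw [hyj_rec m (hN₂N.trans hm), pow_succ]
        field_simp
      rw [h2, ih, Finset.sum_range_succ]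
      rw [show (∑ n ∈ Finset.range m, Complex.log (1 + w n)) + Complex.log (1 + w m) - C
          = ((∑ n ∈ Finset.range m, Complex.log (1 + w n)) - C) + Complex.log (1 + w m) by ring]
      rw [Complex.exp_add, Complex.exp_log (hg_ne m hm)]
      ring
  have hfirst : Tendsto (fun n => y n j / l j ^ n) atTop (𝓝 (z₀ * Complex.exp (Lam - C))) := by
    have h1 : Tendsto
        (fun m => z₀ * Complex.exp ((∑ n ∈ Finset.range m, Complex.log (1 + w n)) - C))
        atTop (𝓝 (z₀ * Complex.exp (Lam - C))) := by
      apply Tendsto.const_mul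
      exact (Complex.continuous_exp.tendsto _).comp (hSlog.sub_const C)
    apply h1.congr'
    filter_upwards [Filter.eventually_ge_atTop N₂] with m hm
    exact (hzc m hm).symm
  refine ⟨j, z₀ * Complex.exp (Lam - C), mul_ne_zero hz₀ (Complex.exp_ne_zero _), hfirst, ?_⟩
  intro k hk
  have hbound : Tendsto (fun n => (R n : ℝ) * ‖y n j / l j ^ n‖) atTop (𝓝 0) := by
    simpa using hRt.mul hfirst.norm
  apply squeeze_zero_norm' _ hbound
  · filter_upwards [Filter.eventually_ge_atTop N] with n hn
    have h2 : ‖y n k‖ ≤ (R n : ℝ) * ‖y n j‖ := by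
      have h3 := NNReal.coe_le_coe.mpr (hRbd n hn k hk)
      push_cast at h3
      simpa [hudef] using h3
    have hp : (0:ℝ) < ‖l j ^ n‖ := by
      rw [norm_pow]
      exact pow_pos (hpos j) n
    calc ‖y n k / l j ^ n‖ = ‖y n k‖ / ‖l j ^ n‖ := norm_div _ _
      _ ≤ ((R n : ℝ) * ‖y n j‖) / ‖l j ^ n‖ := by gcongr
      _ = (R n : ℝ) * ‖y n j / l j ^ n‖ := by rw [norm_div, mul_div_assoc]
end

section
/- Fix ℓ ≥ 1 and ω = (ω_1, …, ω_ℓ) ∈ ℝ^ℓ. Let (δa_n)_{n≥1} be a real sequence such that: (i) for every k ∈ ℤ^ℓ, the partial sums S_N(k) = Σ_{n=1}^N e^{2πi(k·ω)n} δa_n converge to a finite limit as N → ∞; and (ii) for every ε > 0 there is C_ε > 0 with sup_N |S_N(k)| ≤ C_ε e^{ε|k|} for all k ∈ ℤ^ℓ. Let c : ℤ^ℓ → ℂ satisfy |c_k| ≤ C e^{−D|k|} for some constants C, D > 0, and define f_n = Σ_{k∈ℤ^ℓ} c_k e^{2πi(k·ω)n} (the series converging absolutely). Then the partial sums Σ_{n=1}^N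 f_n δa_n converge to a finite limit as N → ∞. -/
open Filter Topology

lemma summable_exp_neg_int {ε : ℝ} (hε : 0 < ε) :
    Summable fun n : ℤ => Real.exp (-ε * |(n : ℝ)|) := by
  apply Summable.of_nat_of_neg <;>
  · simp only [Int.cast_natCast, Int.cast_neg, abs_neg, Nat.abs_cast]
    simpa only [mul_comm, neg_mul, mul_neg] using
      Real.summable_exp_nat_mul_iff.mpr (neg_neg_of_pos hε)

lemma summable_exp_neg_pi (m : ℕ) {ε : ℝ} (hε : 0 < ε) :
    Summable fun k : Fin m → ℤ => Real.exp (-ε * ∑ j, |(k j : ℝ)|) := by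
  induction m with
  | zero => exact .of_finite
  | succ m ih =>
    have h := ((summable_exp_neg_int hε).mul_of_nonneg ih
      (fun _ => Real.exp_nonneg _) (fun _ => Real.exp_nonneg _))
    refine (Equiv.summable_iff (Fin.consEquiv fun _ => ℤ)).mp (h.congr fun p => ?_)
    simp [Fin.consEquiv, Fin.sum_univ_succ, ← Real.exp_add, mul_add]

/-- **Lemma 2.3 (concrete form).** Fix `ℓ ≥ 1` and `ω ∈ ℝ^ℓ`. Suppose the real sequence
`δa` satisfies: (i) for every `k ∈ ℤ^ℓ` the twisted partial sums
`Σ_{n=1}^N e^{2πi(k·ω)n} δa_n` converge; (ii) for every `ε > 0` there is `C_ε > 0`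
bounding all these partial sums by `C_ε e^{ε|k|}`. If `|c_k| ≤ C e^{-D|k|}` and
`f_n = Σ_k c_k e^{2πi(k·ω)n}`, then `Σ_{n=1}^N f_n δa_n` converges as `N → ∞`. -/
theorem twisted_sums_converge (ℓ : ℕ) (hℓ : 1 ≤ ℓ) (ω : Fin ℓ → ℝ) (δa : ℕ → ℝ)
    (h1 : ∀ k : Fin ℓ → ℤ, ∃ L : ℂ,
      Tendsto (fun N => ∑ n ∈ Finset.Icc 1 N,
        Complex.exp (2 * Real.pi * Complex.I * ((∑ j, (k j : ℝ) * ω j) : ℝ) * (n : ℕ))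
          * (δa n : ℂ)) atTop (𝓝 L))
    (h2 : ∀ ε : ℝ, 0 < ε → ∃ C : ℝ, 0 < C ∧ ∀ (k : Fin ℓ → ℤ) (N : ℕ),
      ‖∑ n ∈ Finset.Icc 1 N,
        Complex.exp (2 * Real.pi * Complex.I * ((∑ j, (k j : ℝ) * ω j) : ℝ) * (n : ℕ))
          * (δa n : ℂ)‖ ≤ C * Real.exp (ε * ∑ j, |(k j : ℝ)|))
    (c : (Fin ℓ → ℤ) → ℂ) (C D : ℝ) (hC : 0 < C) (hD : 0 < D)
    (hc : ∀ k : Fin ℓ → ℤ, ‖c k‖ ≤ C * Real.exp (-D * ∑ j, |(k j : ℝ)|))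
    (f : ℕ → ℂ)
    (hf : ∀ n : ℕ, f n = ∑' k : Fin ℓ → ℤ,
      c k * Complex.exp (2 * Real.pi * Complex.I * ((∑ j, (k j : ℝ) * ω j) : ℝ) * (n : ℕ))) :
    ∃ L : ℂ, Tendsto (fun N => ∑ n ∈ Finset.Icc 1 N, f n * (δa n : ℂ)) atTop (𝓝 L) := by
  set e : (Fin ℓ → ℤ) → ℕ → ℂ := fun k n =>
    Complex.exp (2 * Real.pi * Complex.I * ((∑ j, (k j : ℝ) * ω j) : ℝ) * (n : ℕ)) with he
  have hnorm : ∀ k n, ‖e k n‖ = 1 := by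
    intro k n
    rw [he]
    simp only [Complex.norm_exp]
    norm_num [Complex.mul_re, Complex.mul_im]
  set T : ℕ → (Fin ℓ → ℤ) → ℂ := fun N k => ∑ n ∈ Finset.Icc 1 N, e k n * (δa n : ℂ) with hT
  -- summability in k for each fixed n
  have hsumk : ∀ n : ℕ, Summable (fun k => c k * e k n) := by
    intro n
    apply Summable.of_norm_bounded ((summable_exp_neg_pi ℓ hD).mul_left C)
    intro k
    rw [norm_mul, hnorm, mul_one]
    exact hc k
  -- swap sums
  have key : ∀ N : ℕ, (∑ n ∈ Finset.Icc 1 N, f n * (δa n : ℂ)) = ∑' k, c k * T N k := by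
    intro N
    have : ∀ n ∈ Finset.Icc 1 N, f n * (δa n : ℂ) = ∑' k, c k * e k n * (δa n : ℂ) := by
      intro n _
      rw [hf n, ← tsum_mul_right]
    rw [Finset.sum_congr rfl this,
      ← Summable.tsum_finsetSum (fun n _ => ((hsumk n).mul_right ((δa n : ℂ))))]
    refine tsum_congr fun k => ?_
    rw [hT, Finset.mul_sum]
    exact Finset.sum_congr rfl fun n _ => by ring
  -- limits and bounds
  choose L hL using h1
  obtain ⟨C', hC', hTb⟩ := h2 (D / 2) (half_pos hD)
  have hbound : ∀ (N : ℕ) (k : Fin ℓ → ℤ),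
      ‖c k * T N k‖ ≤ C * C' * Real.exp (-(D / 2) * ∑ j, |(k j : ℝ)|) := by
    intro N k
    calc ‖c k * T N k‖ = ‖c k‖ * ‖T N k‖ := norm_mul _ _
      _ ≤ (C * Real.exp (-D * ∑ j, |(k j : ℝ)|)) * (C' * Real.exp (D / 2 * ∑ j, |(k j : ℝ)|)) := by
          apply mul_le_mul (hc k) (hTb k N) (norm_nonneg _)
          positivity
      _ = C * C' * Real.exp (-(D / 2) * ∑ j, |(k j : ℝ)|) := by
          rw [mul_mul_mul_comm, ← Real.exp_add]
          ring_nf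
  have hlim : Tendsto (fun N => ∑' k, c k * T N k) atTop (𝓝 (∑' k, c k * L k)) := by
    apply tendsto_tsum_of_dominated_convergence
      ((summable_exp_neg_pi ℓ (half_pos hD)).mul_left (C * C'))
      (fun k => (hL k).const_mul (c k))
    exact Eventually.of_forall fun N k => hbound N k
  exact ⟨∑' k, c k * L k, by simpa only [← key] using hlim⟩
end

section
/- Let B ∈ ℂ with 0 < |B| < 1 and let Λ = diag(B^{−1}, B). Let {A_n}_{n≥1} be 2×2 complex matrices such that Σ_{n=1}^∞ ‖A_n‖² < ∞, Λ + A_n is invertible for every n, and the partial sums Σ_{n=1}^N (A_n)_{1,1} and Σ_{n=1}^N (A_n)_{2,2} converge to finite limits as N → ∞. Then for any nonzero initial vector (φ_1, ψ_1) ∈ ℂ², the solution of (φ_{n+1}, ψ_{n+1})ᵀ = (Λ + A_n)(φ_n, ψ_n)ᵀ satisfies exactly one of the following: either there is c_1 ≠ 0 with B^n (φ_n, ψ_n) → (c_1, 0) as n → ∞, or there is c_2 ≠ 0 with B^{−n} (φ_n, ψ_n) → (0, c_2) as n → ∞. -/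
open Filter Topology



lemma aux_sq_ineq {θ a c x : ℝ} (hθ0 : 0 ≤ θ) (hθ1 : θ < 1) (ha : 0 ≤ a) (hc : 0 ≤ c)
    (hx0 : 0 ≤ x) (hx : x ≤ θ * a + c) : x ^ 2 ≤ θ * a ^ 2 + c ^ 2 / (1 - θ) := by
  have h1 : 0 < 1 - θ := by linarith
  have h2 : x ^ 2 ≤ (θ * a + c) ^ 2 := by nlinarith
  have key : θ * a ^ 2 + c ^ 2 / (1 - θ) - (θ * a + c) ^ 2 = (θ * ((1 - θ) * a - c) ^ 2) / (1 - θ) := by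
    field_simp; ring
  have h3 : 0 ≤ (θ * ((1 - θ) * a - c) ^ 2) / (1 - θ) :=
    div_nonneg (mul_nonneg hθ0 (sq_nonneg _)) h1.le
  linarith

lemma tendsto_zero_of_sq (s : ℕ → ℝ) (h : Summable fun n => s n ^ 2) (h0 : ∀ n, 0 ≤ s n) :
    Tendsto s atTop (𝓝 0) := by
  have h2 := h.tendsto_atTop_zero
  have hc : Tendsto (fun n => Real.sqrt (s n ^ 2)) atTop (𝓝 (Real.sqrt 0)) :=
    (Real.continuous_sqrt.tendsto 0).comp h2
  have := hc.congr fun n => Real.sqrt_sq (h0 n)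
  simpa using this

lemma summable_fwd (s u : ℕ → ℝ) (θ : ℝ) (hθ0 : 0 ≤ θ) (hθ1 : θ < 1) (m : ℕ)
    (hs0 : ∀ n, 0 ≤ s n) (hu : Summable u) (hu0 : ∀ n, 0 ≤ u n)
    (hrec : ∀ n, m ≤ n → s (n + 1) ≤ θ * s n + u n) : Summable s := by
  set U := ∑' n, u n with hU
  have hU0 : 0 ≤ U := tsum_nonneg hu0
  set C := (∑ n ∈ Finset.range (m + 1), s n + U) / (1 - θ) with hC
  have h1 : (0:ℝ) < 1 - θ := by linarith
  apply summable_of_sum_range_le (c := C) hs0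
  intro N
  have key : ∑ n ∈ Finset.range N, s n ≤ ∑ n ∈ Finset.range (m+1), s n
      + θ * ∑ n ∈ Finset.range N, s n + U := by
    rcases le_or_gt N (m+1) with hN | hN
    · have h2 : ∑ n ∈ Finset.range N, s n ≤ ∑ n ∈ Finset.range (m+1), s n :=
        Finset.sum_le_sum_of_subset_of_nonneg (Finset.range_subset_range.2 hN) (fun i _ _ => hs0 i)
      have h3 : 0 ≤ θ * ∑ n ∈ Finset.range N, s n :=
        mul_nonneg hθ0 (Finset.sum_nonneg fun i _ => hs0 i)
      linarith
    · have hsplit : ∑ n ∈ Finset.range N, s n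
          = ∑ n ∈ Finset.range (m+1), s n + ∑ n ∈ Finset.Ico (m+1) N, s n := by
        rw [Finset.range_eq_Ico, ← Finset.sum_Ico_consecutive s (Nat.zero_le (m+1)) hN.le, Finset.range_eq_Ico]
      have hIco : ∑ n ∈ Finset.Ico (m+1) N, s n
          ≤ θ * ∑ n ∈ Finset.range N, s n + U := by
        have e1 : ∑ n ∈ Finset.Ico (m+1) N, s n = ∑ i ∈ Finset.range (N - (m+1)), s (m + 1 + i) := by
          rw [Finset.sum_Ico_eq_sum_range]
        have e2 : ∀ i ∈ Finset.range (N - (m+1)), s (m + 1 + i) ≤ θ * s (m + i) + u (m + i) := by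
          intro i _
          have : m + 1 + i = (m + i) + 1 := by omega
          rw [this]
          exact hrec (m + i) (by omega)
        have e3 : ∑ i ∈ Finset.range (N - (m+1)), s (m + 1 + i)
            ≤ θ * ∑ i ∈ Finset.range (N - (m+1)), s (m + i)
              + ∑ i ∈ Finset.range (N - (m+1)), u (m + i) := by
          rw [Finset.mul_sum, ← Finset.sum_add_distrib]
          exact Finset.sum_le_sum e2
        have e4' : ∑ i ∈ Finset.range (N - (m+1)), s (m + i)
            = ∑ n ∈ Finset.Ico m (m + (N - (m+1))), s n := by
          rw [Finset.sum_Ico_eq_sum_range, Nat.add_sub_cancel_left]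
        have e4 : ∑ i ∈ Finset.range (N - (m+1)), s (m + i) ≤ ∑ n ∈ Finset.range N, s n := by
          rw [e4']
          exact Finset.sum_le_sum_of_subset_of_nonneg
            (by rw [Finset.range_eq_Ico]; exact Finset.Ico_subset_Ico (Nat.zero_le _) (by omega))
            (fun i _ _ => hs0 i)
        have e5' : ∑ i ∈ Finset.range (N - (m+1)), u (m + i)
            = ∑ n ∈ Finset.Ico m (m + (N - (m+1))), u n := by
          rw [Finset.sum_Ico_eq_sum_range, Nat.add_sub_cancel_left]
        have e5 : ∑ i ∈ Finset.range (N - (m+1)), u (m + i) ≤ U := by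
          rw [e5']
          exact Summable.sum_le_tsum _ (fun i _ => hu0 i) hu
        calc ∑ n ∈ Finset.Ico (m+1) N, s n = _ := e1
          _ ≤ _ := e3
          _ ≤ θ * ∑ n ∈ Finset.range N, s n + U := by
              have := mul_le_mul_of_nonneg_left e4 hθ0
              linarith
      linarith
  have hSnn : 0 ≤ ∑ n ∈ Finset.range N, s n := Finset.sum_nonneg fun i _ => hs0 i
  rw [hC, le_div_iff₀ h1]
  nlinarith

lemma summable_bwd (s u : ℕ → ℝ) (θ : ℝ) (hθ0 : 0 ≤ θ) (hθ1 : θ < 1) (m : ℕ)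
    (hs0 : ∀ n, 0 ≤ s n) (hs1 : ∀ n, m ≤ n → s n ≤ 1) (hu : Summable u) (hu0 : ∀ n, 0 ≤ u n)
    (hrec : ∀ n, m ≤ n → s n ≤ θ * s (n + 1) + u n) : Summable s := by
  set U := ∑' n, u n with hU
  have hU0 : 0 ≤ U := tsum_nonneg hu0
  have h1 : (0:ℝ) < 1 - θ := by linarith
  set C := ∑ n ∈ Finset.range m, s n + (θ + U) / (1 - θ) with hC
  apply summable_of_sum_range_le (c := C) hs0
  intro N
  rcases le_or_gt N m with hN | hN
  · have h2 : ∑ n ∈ Finset.range N, s n ≤ ∑ n ∈ Finset.range m, s n :=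
      Finset.sum_le_sum_of_subset_of_nonneg (Finset.range_subset_range.2 hN) (fun i _ _ => hs0 i)
    have h3 : 0 ≤ (θ + U) / (1 - θ) := div_nonneg (by linarith) h1.le
    rw [hC]; linarith
  · -- T := ∑_{i < N-m} s (m+i)
    set K := N - m with hK
    have hsplit : ∑ n ∈ Finset.range N, s n
        = ∑ n ∈ Finset.range m, s n + ∑ i ∈ Finset.range K, s (m + i) := by
      rw [Finset.range_eq_Ico, ← Finset.sum_Ico_consecutive s (Nat.zero_le m) hN.le,
        ← Finset.range_eq_Ico, Finset.sum_Ico_eq_sum_range]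
    set T := ∑ i ∈ Finset.range K, s (m + i) with hT
    have hTle : T ≤ θ * (T + 1) + U := by
      have e2 : ∀ i ∈ Finset.range K, s (m + i) ≤ θ * s (m + i + 1) + u (m + i) :=
        fun i _ => hrec (m + i) (by omega)
      have e3 : T ≤ θ * ∑ i ∈ Finset.range K, s (m + i + 1) + ∑ i ∈ Finset.range K, u (m + i) := by
        rw [hT, Finset.mul_sum, ← Finset.sum_add_distrib]
        exact Finset.sum_le_sum e2
      have e4 : ∑ i ∈ Finset.range K, s (m + i + 1) ≤ T + 1 := by
        have shift : ∑ i ∈ Finset.range K, s (m + i + 1)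
            = ∑ i ∈ Finset.range (K + 1), s (m + i) - s m := by
          have := Finset.sum_range_succ' (fun i => s (m + i)) K
          have h' : ∀ i : ℕ, m + (i + 1) = m + i + 1 := fun i => by omega
          simp only [h'] at this
          rw [this]; simp
        rw [shift, Finset.sum_range_succ]
        have := hs1 (m + K) (by omega)
        have := hs0 m
        linarith
      have e5 : ∑ i ∈ Finset.range K, u (m + i) ≤ U := by
        have : ∑ i ∈ Finset.range K, u (m + i) = ∑ n ∈ Finset.Ico m (m + K), u n := by
          rw [Finset.sum_Ico_eq_sum_range, Nat.add_sub_cancel_left]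
        rw [this]
        exact Summable.sum_le_tsum _ (fun i _ => hu0 i) hu
      have := mul_le_mul_of_nonneg_left e4 hθ0
      linarith
    have hTbound : T ≤ (θ + U) / (1 - θ) := by
      rw [le_div_iff₀ h1]; nlinarith
    rw [hsplit, hC]; linarith

lemma branch (w t : ℕ → ℂ) (m : ℕ)
    (h0 : ∀ n, m ≤ n → w n ≠ 0)
    (hfact : ∀ n, m ≤ n → w (n + 1) = w n * (1 + t n))
    (hsum : ∃ L : ℂ, Tendsto (fun N => ∑ n ∈ Finset.Ico m N, t n) atTop (𝓝 L))
    (hsq : Summable fun n => ‖t n‖ ^ 2) :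
    ∃ c : ℂ, c ≠ 0 ∧ Tendsto w atTop (𝓝 c) := by
  obtain ⟨L, hL⟩ := hsum
  -- t → 0
  have h2 : Tendsto (fun n => ‖t n‖ ^ 2) atTop (𝓝 0) := hsq.tendsto_atTop_zero
  have h3 : Tendsto (fun n => ‖t n‖) atTop (𝓝 0) := by
    have hc : Tendsto (fun n => Real.sqrt (‖t n‖ ^ 2)) atTop (𝓝 (Real.sqrt 0)) :=
      (Real.continuous_sqrt.tendsto 0).comp h2
    simpa [Real.sqrt_sq (norm_nonneg _)] using hc
  have hsmall : ∀ᶠ n in atTop, ‖t n‖ ≤ 1 / 2 := by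
    filter_upwards [h3.eventually (eventually_le_nhds (by norm_num : (0:ℝ) < 1/2))] with n hn
    exact hn
  obtain ⟨N', hN'⟩ := eventually_atTop.mp hsmall
  set N₁ := max m N' with hN₁def
  have hmN₁ : m ≤ N₁ := le_max_left _ _
  have hN₁small : ∀ n, N₁ ≤ n → ‖t n‖ ≤ 1 / 2 := fun n hn => hN' n (le_trans (le_max_right _ _) hn)
  -- 1 + t n ≠ 0
  have hne : ∀ n, m ≤ n → 1 + t n ≠ 0 := by
    intro n hn h
    have hf := hfact n hn
    rw [h, mul_zero] at hf
    exact h0 (n + 1) (by omega) hf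
  set g : ℕ → ℂ := fun n => Complex.log (1 + t n) with hg
  set d : ℕ → ℂ := fun n => g n - t n with hd
  have hdbound : ∀ n, N₁ ≤ n → ‖d n‖ ≤ ‖t n‖ ^ 2 := by
    intro n hn
    have h1 : ‖t n‖ < 1 := lt_of_le_of_lt (hN₁small n hn) (by norm_num)
    have h4 := Complex.norm_log_one_add_sub_self_le h1
    have h5 : (1 - ‖t n‖)⁻¹ ≤ 2 := by
      rw [inv_le_comm₀ (by linarith [hN₁small n hn]) (by norm_num)]
      have := hN₁small n hn; linarith
    calc ‖d n‖ ≤ ‖t n‖ ^ 2 * (1 - ‖t n‖)⁻¹ / 2 := h4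
      _ ≤ ‖t n‖ ^ 2 * 2 / 2 := by
          apply div_le_div_of_nonneg_right ?_ (by norm_num)
          exact mul_le_mul_of_nonneg_left h5 (sq_nonneg _)
      _ = ‖t n‖ ^ 2 := by ring
  have hdsum : Summable d := by
    apply Summable.of_norm_bounded_eventually (g := fun n => ‖t n‖ ^ 2) hsq
    rw [Nat.cofinite_eq_atTop]
    exact eventually_atTop.mpr ⟨N₁, hdbound⟩
  -- partial sums of d over Ico m N
  have hdtend : Tendsto (fun N => ∑ n ∈ Finset.Ico m N, d n) atTop
      (𝓝 (∑' n, d n - ∑ n ∈ Finset.range m, d n)) := by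
    have h6 : Tendsto (fun N => ∑ n ∈ Finset.range N, d n - ∑ n ∈ Finset.range m, d n) atTop
        (𝓝 (∑' n, d n - ∑ n ∈ Finset.range m, d n)) :=
      hdsum.hasSum.tendsto_sum_nat.sub_const _
    apply h6.congr'
    filter_upwards [eventually_ge_atTop m] with N hN
    exact (Finset.sum_Ico_eq_sub d hN).symm
  -- partial sums of g
  have hgtend : Tendsto (fun N => ∑ n ∈ Finset.Ico m N, g n) atTop
      (𝓝 (L + (∑' n, d n - ∑ n ∈ Finset.range m, d n))) := by
    have : ∀ N, ∑ n ∈ Finset.Ico m N, g n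
        = ∑ n ∈ Finset.Ico m N, t n + ∑ n ∈ Finset.Ico m N, d n := by
      intro N
      rw [← Finset.sum_add_distrib]
      exact Finset.sum_congr rfl fun n _ => by simp [hd]
    simpa only [this] using hL.add hdtend
  -- partial sums of g from N₁
  set Lg := L + (∑' n, d n - ∑ n ∈ Finset.range m, d n) with hLg
  have hgtend₁ : Tendsto (fun N => ∑ n ∈ Finset.Ico N₁ N, g n) atTop
      (𝓝 (Lg - ∑ n ∈ Finset.Ico m N₁, g n)) := by
    apply (hgtend.sub_const _).congr'
    filter_upwards [eventually_ge_atTop N₁] with N hN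
    rw [← Finset.sum_Ico_consecutive g hmN₁ hN]; ring
  -- product over Ico N₁ N
  have hprod : ∀ N, ∏ n ∈ Finset.Ico N₁ N, (1 + t n)
      = Complex.exp (∑ n ∈ Finset.Ico N₁ N, g n) := by
    intro N
    rw [Complex.exp_sum]
    exact Finset.prod_congr rfl fun n hn => by
      rw [hg]
      exact (Complex.exp_log (hne n (le_trans hmN₁ (Finset.mem_Ico.mp hn).1))).symm
  have hprodtend : Tendsto (fun N => ∏ n ∈ Finset.Ico N₁ N, (1 + t n)) atTop
      (𝓝 (Complex.exp (Lg - ∑ n ∈ Finset.Ico m N₁, g n))) := by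
    simp only [hprod]
    exact (Complex.continuous_exp.tendsto _).comp hgtend₁
  -- w N = w N₁ * prod
  have hw : ∀ N, N₁ ≤ N → w N = w N₁ * ∏ n ∈ Finset.Ico N₁ N, (1 + t n) := by
    intro N hN
    induction N, hN using Nat.le_induction with
    | base => simp
    | succ N hN ih =>
      rw [hfact N (le_trans hmN₁ hN), ih, Finset.prod_Ico_succ_top hN, mul_assoc]
  refine ⟨w N₁ * Complex.exp (Lg - ∑ n ∈ Finset.Ico m N₁, g n),
    mul_ne_zero (h0 N₁ hmN₁) (Complex.exp_ne_zero _), ?_⟩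
  apply (hprodtend.const_mul (w N₁)).congr'
  filter_upwards [eventually_ge_atTop N₁] with N hN
  exact (hw N hN).symm

lemma tendsto_Ico_of_Icc (f : ℕ → ℂ) (L : ℂ)
    (h : Tendsto (fun N => ∑ n ∈ Finset.Icc 1 N, f n) atTop (𝓝 L)) (m : ℕ) (hm : 1 ≤ m) :
    ∃ L' : ℂ, Tendsto (fun N => ∑ n ∈ Finset.Ico m N, f n) atTop (𝓝 L') := by
  have h1 : Tendsto (fun N => ∑ n ∈ Finset.Ico 1 N, f n) atTop (𝓝 L) := by
    rw [← tendsto_add_atTop_iff_nat 1]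
    apply h.congr
    intro N
    rw [Finset.Ico_add_one_right_eq_Icc]
  refine ⟨L - ∑ n ∈ Finset.Ico 1 m, f n, ?_⟩
  apply (h1.sub_const _).congr'
  filter_upwards [eventually_ge_atTop m] with N hN
  rw [← Finset.sum_Ico_consecutive f hm hN]; ring

lemma tendsto_Ico_of_summable (f : ℕ → ℂ) (hf : Summable f) (m : ℕ) :
    ∃ L' : ℂ, Tendsto (fun N => ∑ n ∈ Finset.Ico m N, f n) atTop (𝓝 L') := by
  refine ⟨∑' n, f n - ∑ n ∈ Finset.range m, f n, ?_⟩
  apply ((hf.hasSum.tendsto_sum_nat).sub_const _).congr'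
  filter_upwards [eventually_ge_atTop m] with N hN
  exact (Finset.sum_Ico_eq_sub f hN).symm

lemma excl (B : ℂ) (hB : B ≠ 0) (hB1 : ‖B‖ < 1) (y : ℕ → Fin 2 → ℂ) (c₁ c₂ : ℂ) (hc : c₁ ≠ 0)
    (h1 : Tendsto (fun n : ℕ => B ^ n • y n) atTop (𝓝 ![c₁, 0]))
    (h2 : Tendsto (fun n : ℕ => B⁻¹ ^ n • y n) atTop (𝓝 ![0, c₂])) : False := by
  have hpow : Tendsto (fun n : ℕ => (B ^ 2) ^ n) atTop (𝓝 0) := by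
    apply tendsto_pow_atTop_nhds_zero_of_norm_lt_one
    rw [norm_pow]
    nlinarith [norm_nonneg B]
  have h3 : Tendsto (fun n : ℕ => (B ^ 2) ^ n • (B⁻¹ ^ n • y n)) atTop
      (𝓝 ((0 : ℂ) • ![0, c₂])) := hpow.smul h2
  have h4 : (fun n : ℕ => (B ^ 2) ^ n • (B⁻¹ ^ n • y n)) = fun n : ℕ => B ^ n • y n := by
    funext n
    rw [smul_smul, ← mul_pow]
    congr 2
    field_simp
  rw [h4, zero_smul] at h3
  have h5 : ![c₁, 0] = (0 : Fin 2 → ℂ) := tendsto_nhds_unique h1 h3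
  exact hc (by simpa using congrFun h5 0)

set_option maxHeartbeats 2000000 in
/-- **Transfer-matrix dichotomy.** Let `0 < |B| < 1`, `Λ = diag(B⁻¹, B)`, and let `{A_n}`
be 2×2 matrices with `Σ ‖A_n‖² < ∞` (stated via the entrywise square sum, equivalent to
any fixed matrix norm), `Λ + A_n` invertible, and both diagonal partial sums
`Σ_{n=1}^N (A_n)_{1,1}`, `Σ_{n=1}^N (A_n)_{2,2}` convergent. Then every nonzero solution
`(φ_n, ψ_n)` of the recursion satisfies exactly one of: `B^n (φ_n, ψ_n) → (c_1, 0)` with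
`c_1 ≠ 0`, or `B^{-n} (φ_n, ψ_n) → (0, c_2)` with `c_2 ≠ 0`. -/
theorem transfer_matrix_dichotomy
    (B : ℂ) (hB0 : 0 < ‖B‖) (hB1 : ‖B‖ < 1)
    (A : ℕ → Matrix (Fin 2) (Fin 2) ℂ)
    (hA2 : Summable fun n : ℕ => ∑ i : Fin 2, ∑ j : Fin 2, ‖A n i j‖ ^ 2)
    (hinv : ∀ n, 1 ≤ n → IsUnit (Matrix.diagonal ![B⁻¹, B] + A n))
    (h11 : ∃ L : ℂ, Tendsto (fun N => ∑ n ∈ Finset.Icc 1 N, A n 0 0) atTop (𝓝 L))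
    (h22 : ∃ L : ℂ, Tendsto (fun N => ∑ n ∈ Finset.Icc 1 N, A n 1 1) atTop (𝓝 L))
    (y : ℕ → Fin 2 → ℂ) (hy1 : y 1 ≠ 0)
    (hrec : ∀ n, 1 ≤ n → y (n + 1) = (Matrix.diagonal ![B⁻¹, B] + A n).mulVec (y n)) :
    Xor'
      (∃ c : ℂ, c ≠ 0 ∧ Tendsto (fun n : ℕ => B ^ n • y n) atTop (𝓝 ![c, 0]))
      (∃ c : ℂ, c ≠ 0 ∧ Tendsto (fun n : ℕ => B⁻¹ ^ n • y n) atTop (𝓝 ![0, c])) := by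
  have hBne : B ≠ 0 := by
    intro h; rw [h, norm_zero] at hB0; exact lt_irrefl _ hB0
  set r := ‖B‖ with hrdef
  have hrpos : 0 < r := hB0
  have hrinv : 1 < r⁻¹ := (one_lt_inv₀ hrpos).mpr hB1
  -- single entry square bound
  have hsingle : ∀ n (i j : Fin 2), ‖A n i j‖ ^ 2 ≤ ∑ i' : Fin 2, ∑ j' : Fin 2, ‖A n i' j'‖ ^ 2 := by
    intro n i j
    calc ‖A n i j‖ ^ 2 ≤ ∑ j' : Fin 2, ‖A n i j'‖ ^ 2 :=
          Finset.single_le_sum (f := fun j' => ‖A n i j'‖ ^ 2) (fun _ _ => sq_nonneg _) (Finset.mem_univ j)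
      _ ≤ ∑ i' : Fin 2, ∑ j' : Fin 2, ‖A n i' j'‖ ^ 2 :=
          Finset.single_le_sum (f := fun i' => ∑ j' : Fin 2, ‖A n i' j'‖ ^ 2)
            (fun i' _ => Finset.sum_nonneg fun _ _ => sq_nonneg _) (Finset.mem_univ i)
  have hent : ∀ i j : Fin 2, Summable fun n => ‖A n i j‖ ^ 2 := by
    intro i j
    exact Summable.of_nonneg_of_le (fun n => sq_nonneg _) (fun n => hsingle n i j) hA2
  -- nonzero propagation
  have hynz : ∀ n, 1 ≤ n → y n ≠ 0 := by
    intro n hn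
    induction n, hn using Nat.le_induction with
    | base => exact hy1
    | succ n hn ih =>
      intro h0
      apply ih
      set M := Matrix.diagonal ![B⁻¹, B] + A n with hM
      have hdet : IsUnit M.det := (Matrix.isUnit_iff_isUnit_det M).mp (hinv n hn)
      have : M⁻¹.mulVec (y (n+1)) = y n := by
        rw [hrec n hn, Matrix.mulVec_mulVec, Matrix.nonsing_inv_mul M hdet, Matrix.one_mulVec]
      rw [← this, h0, Matrix.mulVec_zero]
  -- scalar recursions
  have hφrec : ∀ n, 1 ≤ n → y (n+1) 0 = (B⁻¹ + A n 0 0) * y n 0 + A n 0 1 * y n 1 := by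
    intro n hn
    have h0 := congrFun (hrec n hn) 0
    simp [Matrix.mulVec, dotProduct, Fin.sum_univ_two, Matrix.diagonal,
      Matrix.add_apply] at h0
    rw [h0]
  have hψrec : ∀ n, 1 ≤ n → y (n+1) 1 = A n 1 0 * y n 0 + (B + A n 1 1) * y n 1 := by
    intro n hn
    have h1 := congrFun (hrec n hn) 1
    simp [Matrix.mulVec, dotProduct, Fin.sum_univ_two, Matrix.diagonal,
      Matrix.add_apply] at h1
    rw [h1]
  -- smallness threshold
  set ε₀ : ℝ := min ((1 - r)/3) ((r⁻¹ - 1)/2) with hε₀def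
  have hε₀pos : 0 < ε₀ := lt_min (by linarith) (by linarith)
  have hεa : ε₀ ≤ (1 - r)/3 := min_le_left _ _
  have hεb : ε₀ ≤ (r⁻¹ - 1)/2 := min_le_right _ _
  have fact1 : r + 2*ε₀ < 1 := by linarith
  have fact2 : 1 ≤ r⁻¹ - 2*ε₀ := by linarith
  have hev : ∀ᶠ n in atTop, ∀ i j : Fin 2, ‖A n i j‖ ≤ ε₀ := by
    have hvt := hA2.tendsto_atTop_zero
    filter_upwards [hvt.eventually (eventually_le_nhds (by positivity : (0:ℝ) < ε₀^2))] with n hn i j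
    have h1 : ‖A n i j‖ ^ 2 ≤ ε₀ ^ 2 := le_trans (hsingle n i j) hn
    nlinarith [norm_nonneg (A n i j)]
  obtain ⟨N₀', hN₀'⟩ := eventually_atTop.mp hev
  set N₀ := max 1 N₀' with hN₀def
  have hN₀1 : 1 ≤ N₀ := le_max_left _ _
  have hsmall : ∀ n, N₀ ≤ n → ∀ i j : Fin 2, ‖A n i j‖ ≤ ε₀ :=
    fun n hn => hN₀' n (le_trans (le_max_right _ _) hn)
  by_cases H : ∃ n, N₀ ≤ n ∧ ‖y n 1‖ ≤ ‖y n 0‖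
  · -- growing case
    obtain ⟨n₁, hn₁, hcone₁⟩ := H
    have hn₁1 : 1 ≤ n₁ := le_trans hN₀1 hn₁
    -- one-step invariance / contraction
    have step : ∀ n, N₀ ≤ n → y n 0 ≠ 0 → ‖y n 1‖ ≤ ‖y n 0‖ →
        y (n+1) 0 ≠ 0 ∧ ‖y (n+1) 1‖ ≤ ‖y (n+1) 0‖ ∧
        ‖y (n+1) 1‖ / ‖y (n+1) 0‖ ≤ (r + ε₀) * (‖y n 1‖ / ‖y n 0‖) + ‖A n 1 0‖ := by
      intro n hn hφn hcone
      have hn1 : 1 ≤ n := le_trans hN₀1 hn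
      have hφpos : 0 < ‖y n 0‖ := norm_pos_iff.mpr hφn
      have ha := hsmall n hn 0 0
      have hb := hsmall n hn 0 1
      have hc' := hsmall n hn 1 0
      have hd := hsmall n hn 1 1
      have key1 : (r⁻¹ - 2*ε₀) * ‖y n 0‖ ≤ ‖y (n+1) 0‖ := by
        have e : B⁻¹ * y n 0 = y (n+1) 0 - (A n 0 0 * y n 0 + A n 0 1 * y n 1) := by
          rw [hφrec n hn1]; ring
        have e2 : ‖B⁻¹ * y n 0‖ ≤ ‖y (n+1) 0‖ + ‖A n 0 0 * y n 0 + A n 0 1 * y n 1‖ := by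
          rw [e]; exact norm_sub_le _ _
        have e3 : ‖A n 0 0 * y n 0 + A n 0 1 * y n 1‖ ≤ 2*ε₀*‖y n 0‖ := by
          calc ‖A n 0 0 * y n 0 + A n 0 1 * y n 1‖
              ≤ ‖A n 0 0 * y n 0‖ + ‖A n 0 1 * y n 1‖ := norm_add_le _ _
            _ = ‖A n 0 0‖ * ‖y n 0‖ + ‖A n 0 1‖ * ‖y n 1‖ := by rw [norm_mul, norm_mul]
            _ ≤ 2*ε₀*‖y n 0‖ := by nlinarith [norm_nonneg (y n 1), norm_nonneg (y n 0)]
        have e4 : ‖B⁻¹ * y n 0‖ = r⁻¹ * ‖y n 0‖ := by rw [norm_mul, norm_inv]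
        linarith
      have key1' : ‖y n 0‖ ≤ ‖y (n+1) 0‖ := by nlinarith
      have hφn1pos : 0 < ‖y (n+1) 0‖ := lt_of_lt_of_le hφpos key1'
      have hφn1 : y (n+1) 0 ≠ 0 := norm_pos_iff.mp hφn1pos
      have key2 : ‖y (n+1) 1‖ ≤ (r + ε₀) * ‖y n 1‖ + ‖A n 1 0‖ * ‖y n 0‖ := by
        rw [hψrec n hn1]
        have hBd : ‖B + A n 1 1‖ ≤ r + ε₀ := le_trans (norm_add_le _ _) (by rw [hrdef]; linarith)
        calc ‖A n 1 0 * y n 0 + (B + A n 1 1) * y n 1‖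
            ≤ ‖A n 1 0 * y n 0‖ + ‖(B + A n 1 1) * y n 1‖ := norm_add_le _ _
          _ = ‖A n 1 0‖ * ‖y n 0‖ + ‖B + A n 1 1‖ * ‖y n 1‖ := by rw [norm_mul, norm_mul]
          _ ≤ (r + ε₀) * ‖y n 1‖ + ‖A n 1 0‖ * ‖y n 0‖ := by
              nlinarith [norm_nonneg (y n 1)]
      refine ⟨hφn1, ?_, ?_⟩
      · calc ‖y (n+1) 1‖ ≤ (r + ε₀) * ‖y n 1‖ + ‖A n 1 0‖ * ‖y n 0‖ := key2
          _ ≤ (r + 2*ε₀) * ‖y n 0‖ := by nlinarith [norm_nonneg (y n 1)]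
          _ ≤ ‖y n 0‖ := by nlinarith [norm_nonneg (y n 0), fact1]
          _ ≤ ‖y (n+1) 0‖ := key1'
      · rw [div_le_iff₀ hφn1pos]
        have hcoef : 0 ≤ (r + ε₀) * (‖y n 1‖ / ‖y n 0‖) + ‖A n 1 0‖ :=
          add_nonneg (mul_nonneg (by linarith) (div_nonneg (norm_nonneg _) (norm_nonneg _)))
            (norm_nonneg _)
        have expand : ((r + ε₀) * (‖y n 1‖ / ‖y n 0‖) + ‖A n 1 0‖) * ‖y n 0‖
            = (r + ε₀) * ‖y n 1‖ + ‖A n 1 0‖ * ‖y n 0‖ := by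
          rw [add_mul, mul_assoc, div_mul_cancel₀ _ (ne_of_gt hφpos)]
        calc ‖y (n+1) 1‖ ≤ (r + ε₀) * ‖y n 1‖ + ‖A n 1 0‖ * ‖y n 0‖ := key2
          _ = ((r + ε₀) * (‖y n 1‖ / ‖y n 0‖) + ‖A n 1 0‖) * ‖y n 0‖ := expand.symm
          _ ≤ ((r + ε₀) * (‖y n 1‖ / ‖y n 0‖) + ‖A n 1 0‖) * ‖y (n+1) 0‖ :=
              mul_le_mul_of_nonneg_left key1' hcoef
    -- base point nonzero
    have hφn₁ : y n₁ 0 ≠ 0 := by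
      intro h0
      apply hynz n₁ hn₁1
      have hψ0 : y n₁ 1 = 0 := by
        have h' := hcone₁
        rw [h0, norm_zero] at h'
        exact norm_le_zero_iff.mp h'
      funext i
      fin_cases i
      · simpa using h0
      · simpa using hψ0
    -- invariance
    have inv : ∀ n, n₁ ≤ n → y n 0 ≠ 0 ∧ ‖y n 1‖ ≤ ‖y n 0‖ := by
      intro n hn
      induction n, hn using Nat.le_induction with
      | base => exact ⟨hφn₁, hcone₁⟩
      | succ n hn ih =>
        obtain ⟨g1, g2, _⟩ := step n (le_trans hn₁ hn) ih.1 ih.2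
        exact ⟨g1, g2⟩
    set ρ : ℕ → ℝ := fun n => ‖y n 1‖ / ‖y n 0‖ with hρdef
    have hρ0 : ∀ n, 0 ≤ ρ n := fun n => div_nonneg (norm_nonneg _) (norm_nonneg _)
    have hρ1 : ∀ n, n₁ ≤ n → ρ n ≤ 1 := by
      intro n hn
      rw [hρdef]
      exact div_le_one_of_le₀ (inv n hn).2 (norm_nonneg _)
    have hρrec : ∀ n, n₁ ≤ n → ρ (n+1) ≤ (r + ε₀) * ρ n + ‖A n 1 0‖ :=
      fun n hn => (step n (le_trans hn₁ hn) (inv n hn).1 (inv n hn).2).2.2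
    have hθ0 : (0:ℝ) ≤ r + ε₀ := by linarith
    have hθ1 : r + ε₀ < 1 := by linarith
    have hρsq : Summable (fun n => ρ n ^ 2) := by
      apply summable_fwd _ (fun n => ‖A n 1 0‖^2 / (1 - (r+ε₀))) (r+ε₀) hθ0 hθ1 n₁
        (fun n => sq_nonneg _) ((hent 1 0).div_const _)
        (fun n => div_nonneg (sq_nonneg _) (by linarith))
      intro n hn
      exact aux_sq_ineq hθ0 hθ1 (hρ0 n) (norm_nonneg _) (hρ0 _) (hρrec n hn)
    have hρ00 : Tendsto ρ atTop (𝓝 0) := tendsto_zero_of_sq ρ hρsq hρ0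
    set q : ℕ → ℂ := fun n => y n 1 / y n 0 with hqdef
    have hqnorm : ∀ n, ‖q n‖ = ρ n := fun n => norm_div _ _
    have hq0 : Tendsto q atTop (𝓝 0) := by
      rw [tendsto_zero_iff_norm_tendsto_zero]
      exact hρ00.congr (fun n => (hqnorm n).symm)
    set t : ℕ → ℂ := fun n => B * A n 0 0 + B * (A n 0 1 * q n) with htdef
    set w : ℕ → ℂ := fun n => B ^ n * y n 0 with hwdef
    have hwne : ∀ n, n₁ ≤ n → w n ≠ 0 := fun n hn => mul_ne_zero (pow_ne_zero _ hBne) (inv n hn).1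
    have hψq : ∀ n, n₁ ≤ n → y n 1 = q n * y n 0 := by
      intro n hn
      rw [hqdef]
      field_simp [(inv n hn).1]
    have hfact : ∀ n, n₁ ≤ n → w (n+1) = w n * (1 + t n) := by
      intro n hn
      show B ^ (n+1) * y (n+1) 0 = (B ^ n * y n 0) * (1 + (B * A n 0 0 + B * (A n 0 1 * q n)))
      rw [hφrec n (le_trans hn₁1 hn), hψq n hn, pow_succ]
      field_simp
      ring
    have hbq : Summable (fun n => A n 0 1 * q n) := by
      apply Summable.of_norm_bounded (g := fun n => (‖A n 0 1‖^2 + ρ n ^2)/2)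
        (((hent 0 1).add hρsq).div_const 2)
      intro n
      rw [norm_mul, hqnorm]
      nlinarith [sq_nonneg (‖A n 0 1‖ - ρ n)]
    obtain ⟨La, hLa⟩ := h11
    obtain ⟨L₁, hL₁⟩ := tendsto_Ico_of_Icc (fun n => A n 0 0) La hLa n₁ hn₁1
    obtain ⟨L₂, hL₂⟩ := tendsto_Ico_of_summable _ hbq n₁
    have hsum : ∃ L : ℂ, Tendsto (fun N => ∑ n ∈ Finset.Ico n₁ N, t n) atTop (𝓝 L) := by
      refine ⟨B * L₁ + B * L₂, ?_⟩
      apply ((hL₁.const_mul B).add (hL₂.const_mul B)).congr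
      intro N
      rw [Finset.mul_sum, Finset.mul_sum, ← Finset.sum_add_distrib]
    have hsq : Summable (fun n => ‖t n‖^2) := by
      apply Summable.of_norm_bounded_eventually (g := fun n => 2*‖A n 0 0‖^2 + 2*‖A n 0 1‖^2)
        (((hent 0 0).mul_left 2).add ((hent 0 1).mul_left 2))
      rw [Nat.cofinite_eq_atTop]
      filter_upwards [eventually_ge_atTop n₁] with n hn
      have h1 : ‖t n‖ ≤ ‖A n 0 0‖ + ‖A n 0 1‖ := by
        calc ‖t n‖ ≤ ‖B * A n 0 0‖ + ‖B * (A n 0 1 * q n)‖ := norm_add_le _ _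
          _ = r * ‖A n 0 0‖ + r * (‖A n 0 1‖ * ρ n) := by
              rw [norm_mul, norm_mul, norm_mul, hqnorm, hrdef]
          _ ≤ ‖A n 0 0‖ + ‖A n 0 1‖ := by
              nlinarith [hρ1 n hn, hρ0 n, norm_nonneg (A n 0 0), norm_nonneg (A n 0 1),
                mul_nonneg (norm_nonneg (A n 0 1)) (hρ0 n)]
      have h2 : ‖‖t n‖^2‖ = ‖t n‖^2 := Real.norm_of_nonneg (sq_nonneg _)
      rw [h2]
      nlinarith [norm_nonneg (t n), norm_nonneg (A n 0 0), norm_nonneg (A n 0 1),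
        sq_nonneg (‖A n 0 0‖ - ‖A n 0 1‖)]
    obtain ⟨cw, hcwne, hcw⟩ := branch w t n₁ hwne hfact hsum hsq
    have hψtend : Tendsto (fun n => B ^ n * y n 1) atTop (𝓝 0) := by
      have h3 := hq0.mul hcw
      rw [zero_mul] at h3
      apply h3.congr'
      filter_upwards [eventually_ge_atTop n₁] with n hn
      show q n * w n = B ^ n * y n 1
      rw [hwdef, hψq n hn]
      ring
    have hleft : Tendsto (fun n : ℕ => B ^ n • y n) atTop (𝓝 ![cw, 0]) := by
      rw [tendsto_pi_nhds]
      intro i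
      fin_cases i
      · simpa [Pi.smul_apply, smul_eq_mul] using hcw
      · simpa [Pi.smul_apply, smul_eq_mul] using hψtend
    exact Or.inl ⟨⟨cw, hcwne, hleft⟩, fun ⟨c₂, hc₂, h2⟩ => excl B hBne hB1 y cw c₂ hcwne hleft h2⟩
  · -- decaying case
    push_neg at H
    have hψnz : ∀ n, N₀ ≤ n → y n 1 ≠ 0 := by
      intro n hn h0
      have h' := H n hn
      rw [h0, norm_zero] at h'
      exact absurd h' (not_lt.mpr (norm_nonneg _))
    set s : ℕ → ℝ := fun n => ‖y n 0‖ / ‖y n 1‖ with hsdef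
    have hs0 : ∀ n, 0 ≤ s n := fun n => div_nonneg (norm_nonneg _) (norm_nonneg _)
    have hs1 : ∀ n, N₀ ≤ n → s n ≤ 1 := by
      intro n hn
      rw [hsdef]
      exact le_of_lt ((div_lt_one (norm_pos_iff.mpr (hψnz n hn))).mpr (H n hn))
    have hsrec : ∀ n, N₀ ≤ n → s n ≤ (r + 2*ε₀) * s (n+1) + ‖A n 0 1‖ := by
      intro n hn
      have hn1 : 1 ≤ n := le_trans hN₀1 hn
      have hψpos : 0 < ‖y n 1‖ := norm_pos_iff.mpr (hψnz n hn)
      have hψpos1 : 0 < ‖y (n+1) 1‖ := norm_pos_iff.mpr (hψnz (n+1) (by omega))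
      have ha := hsmall n hn 0 0
      have hb := hsmall n hn 0 1
      have hc' := hsmall n hn 1 0
      have hd := hsmall n hn 1 1
      have hφψ : ‖y n 0‖ ≤ ‖y n 1‖ := le_of_lt (H n hn)
      have e1 : ‖y (n+1) 1‖ ≤ (r + 2*ε₀) * ‖y n 1‖ := by
        rw [hψrec n hn1]
        have hBd : ‖B + A n 1 1‖ ≤ r + ε₀ := le_trans (norm_add_le _ _) (by rw [hrdef]; linarith)
        calc ‖A n 1 0 * y n 0 + (B + A n 1 1) * y n 1‖
            ≤ ‖A n 1 0 * y n 0‖ + ‖(B + A n 1 1) * y n 1‖ := norm_add_le _ _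
          _ = ‖A n 1 0‖ * ‖y n 0‖ + ‖B + A n 1 1‖ * ‖y n 1‖ := by rw [norm_mul, norm_mul]
          _ ≤ (r + 2*ε₀) * ‖y n 1‖ := by
              nlinarith [norm_nonneg (y n 0), norm_nonneg (y n 1)]
      have e2 : (r⁻¹ - ε₀) * ‖y n 0‖ ≤ ‖y (n+1) 0‖ + ‖A n 0 1‖ * ‖y n 1‖ := by
        have e : B⁻¹ * y n 0 + A n 0 0 * y n 0 = y (n+1) 0 - A n 0 1 * y n 1 := by
          rw [hφrec n hn1]; ring
        have e3 : ‖B⁻¹ * y n 0 + A n 0 0 * y n 0‖ ≤ ‖y (n+1) 0‖ + ‖A n 0 1 * y n 1‖ := by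
          rw [e]; exact norm_sub_le _ _
        have e4 : (r⁻¹ - ε₀) * ‖y n 0‖ ≤ ‖B⁻¹ * y n 0 + A n 0 0 * y n 0‖ := by
          have e5 : ‖B⁻¹ * y n 0‖ ≤ ‖B⁻¹ * y n 0 + A n 0 0 * y n 0‖ + ‖A n 0 0 * y n 0‖ := by
            calc ‖B⁻¹ * y n 0‖ = ‖(B⁻¹ * y n 0 + A n 0 0 * y n 0) - A n 0 0 * y n 0‖ := by
                  ring_nf
              _ ≤ _ := norm_sub_le _ _
          have e6 : ‖B⁻¹ * y n 0‖ = r⁻¹ * ‖y n 0‖ := by rw [norm_mul, norm_inv]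
          have e7 : ‖A n 0 0 * y n 0‖ ≤ ε₀ * ‖y n 0‖ := by
            rw [norm_mul]
            exact mul_le_mul_of_nonneg_right ha (norm_nonneg _)
          nlinarith
        rw [norm_mul] at e3
        linarith
      have hφ1s : ‖y (n+1) 0‖ = s (n+1) * ‖y (n+1) 1‖ := by
        rw [hsdef]
        exact (div_mul_cancel₀ _ (ne_of_gt hψpos1)).symm
      rw [div_le_iff₀ hψpos]
      have c1 : ‖y n 0‖ ≤ (r⁻¹ - ε₀) * ‖y n 0‖ := by nlinarith [norm_nonneg (y n 0)]
      have c2 : s (n+1) * ‖y (n+1) 1‖ ≤ s (n+1) * ((r + 2*ε₀) * ‖y n 1‖) :=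
        mul_le_mul_of_nonneg_left e1 (hs0 _)
      calc ‖y n 0‖ ≤ (r⁻¹ - ε₀) * ‖y n 0‖ := c1
        _ ≤ ‖y (n+1) 0‖ + ‖A n 0 1‖ * ‖y n 1‖ := e2
        _ = s (n+1) * ‖y (n+1) 1‖ + ‖A n 0 1‖ * ‖y n 1‖ := by rw [hφ1s]
        _ ≤ s (n+1) * ((r + 2*ε₀) * ‖y n 1‖) + ‖A n 0 1‖ * ‖y n 1‖ := by linarith
        _ = ((r + 2*ε₀) * s (n+1) + ‖A n 0 1‖) * ‖y n 1‖ := by ring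
    have hθ0 : (0:ℝ) ≤ r + 2*ε₀ := by linarith
    have hθ1 : r + 2*ε₀ < 1 := fact1
    have hssq : Summable (fun n => s n ^ 2) := by
      apply summable_bwd _ (fun n => ‖A n 0 1‖^2 / (1 - (r+2*ε₀))) (r+2*ε₀) hθ0 hθ1 N₀
        (fun n => sq_nonneg _) ?_ ((hent 0 1).div_const _)
        (fun n => div_nonneg (sq_nonneg _) (by linarith))
      · intro n hn
        exact aux_sq_ineq hθ0 hθ1 (hs0 _) (norm_nonneg _) (hs0 _) (hsrec n hn)
      · intro n hn
        have := hs1 n hn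
        have := hs0 n
        nlinarith
    have hs00 : Tendsto s atTop (𝓝 0) := tendsto_zero_of_sq s hssq hs0
    set σ : ℕ → ℂ := fun n => y n 0 / y n 1 with hσdef
    have hσnorm : ∀ n, ‖σ n‖ = s n := fun n => norm_div _ _
    have hσ0 : Tendsto σ atTop (𝓝 0) := by
      rw [tendsto_zero_iff_norm_tendsto_zero]
      exact hs00.congr (fun n => (hσnorm n).symm)
    set t : ℕ → ℂ := fun n => B⁻¹ * A n 1 1 + B⁻¹ * (A n 1 0 * σ n) with htdef
    set w : ℕ → ℂ := fun n => B⁻¹ ^ n * y n 1 with hwdef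
    have hwne : ∀ n, N₀ ≤ n → w n ≠ 0 :=
      fun n hn => mul_ne_zero (pow_ne_zero _ (inv_ne_zero hBne)) (hψnz n hn)
    have hφσ : ∀ n, N₀ ≤ n → y n 0 = σ n * y n 1 := by
      intro n hn
      rw [hσdef]
      field_simp [hψnz n hn]
    have hfact : ∀ n, N₀ ≤ n → w (n+1) = w n * (1 + t n) := by
      intro n hn
      show B⁻¹ ^ (n+1) * y (n+1) 1
        = (B⁻¹ ^ n * y n 1) * (1 + (B⁻¹ * A n 1 1 + B⁻¹ * (A n 1 0 * σ n)))
      rw [hψrec n (le_trans hN₀1 hn), hφσ n hn, pow_succ]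
      field_simp
      ring
    have hcσ : Summable (fun n => A n 1 0 * σ n) := by
      apply Summable.of_norm_bounded (g := fun n => (‖A n 1 0‖^2 + s n ^2)/2)
        (((hent 1 0).add hssq).div_const 2)
      intro n
      rw [norm_mul, hσnorm]
      nlinarith [sq_nonneg (‖A n 1 0‖ - s n)]
    obtain ⟨Ld, hLd⟩ := h22
    obtain ⟨L₁, hL₁⟩ := tendsto_Ico_of_Icc (fun n => A n 1 1) Ld hLd N₀ hN₀1
    obtain ⟨L₂, hL₂⟩ := tendsto_Ico_of_summable _ hcσ N₀
    have hsum : ∃ L : ℂ, Tendsto (fun N => ∑ n ∈ Finset.Ico N₀ N, t n) atTop (𝓝 L) := by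
      refine ⟨B⁻¹ * L₁ + B⁻¹ * L₂, ?_⟩
      apply ((hL₁.const_mul B⁻¹).add (hL₂.const_mul B⁻¹)).congr
      intro N
      rw [Finset.mul_sum, Finset.mul_sum, ← Finset.sum_add_distrib]
    have hsq : Summable (fun n => ‖t n‖^2) := by
      apply Summable.of_norm_bounded_eventually
        (g := fun n => 2*(r⁻¹)^2*‖A n 1 1‖^2 + 2*(r⁻¹)^2*‖A n 1 0‖^2)
        (((hent 1 1).mul_left _).add ((hent 1 0).mul_left _))
      rw [Nat.cofinite_eq_atTop]
      filter_upwards [eventually_ge_atTop N₀] with n hn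
      have h1 : ‖t n‖ ≤ r⁻¹ * ‖A n 1 1‖ + r⁻¹ * ‖A n 1 0‖ := by
        calc ‖t n‖ ≤ ‖B⁻¹ * A n 1 1‖ + ‖B⁻¹ * (A n 1 0 * σ n)‖ := norm_add_le _ _
          _ = r⁻¹ * ‖A n 1 1‖ + r⁻¹ * (‖A n 1 0‖ * s n) := by
              rw [norm_mul, norm_mul, norm_mul, hσnorm, norm_inv, hrdef]
          _ ≤ r⁻¹ * ‖A n 1 1‖ + r⁻¹ * ‖A n 1 0‖ := by
              have h2 : ‖A n 1 0‖ * s n ≤ ‖A n 1 0‖ * 1 :=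
                mul_le_mul_of_nonneg_left (hs1 n hn) (norm_nonneg _)
              have h3 : (0:ℝ) ≤ r⁻¹ := by positivity
              nlinarith
      have h2 : ‖‖t n‖^2‖ = ‖t n‖^2 := Real.norm_of_nonneg (sq_nonneg _)
      rw [h2]
      nlinarith [norm_nonneg (t n), norm_nonneg (A n 1 1), norm_nonneg (A n 1 0),
        sq_nonneg (r⁻¹*‖A n 1 1‖ - r⁻¹*‖A n 1 0‖), inv_nonneg.mpr hrpos.le,
        mul_nonneg (inv_nonneg.mpr hrpos.le) (norm_nonneg (A n 1 1)),
        mul_nonneg (inv_nonneg.mpr hrpos.le) (norm_nonneg (A n 1 0))]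
    obtain ⟨cw, hcwne, hcw⟩ := branch w t N₀ hwne hfact hsum hsq
    have hφtend : Tendsto (fun n => B⁻¹ ^ n * y n 0) atTop (𝓝 0) := by
      have h3 := hσ0.mul hcw
      rw [zero_mul] at h3
      apply h3.congr'
      filter_upwards [eventually_ge_atTop N₀] with n hn
      show σ n * w n = B⁻¹ ^ n * y n 0
      rw [hwdef, hφσ n hn]
      ring
    have hright : Tendsto (fun n : ℕ => B⁻¹ ^ n • y n) atTop (𝓝 ![0, cw]) := by
      rw [tendsto_pi_nhds]
      intro i
      fin_cases i
      · simpa [Pi.smul_apply, smul_eq_mul, ← inv_pow] using hφtend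
      · simpa [Pi.smul_apply, smul_eq_mul, ← inv_pow] using hcw
    exact Or.inr ⟨⟨cw, hcwne, hright⟩, fun ⟨c₁, hc₁, h1⟩ => excl B hBne hB1 y c₁ cw hc₁ h1 hright⟩
end
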